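/- arXiv:1404.0223 — 9 statements merged into one kernel-verified Lean document; each statement's English description precedes it below -/
import Mathlib

section
/- Let f : (t₁, t₂) → ℝ be a C² positive solution of the ODE f·f'' + d·(1 - (f')²) = (d+1)·f·(1 - (f')²)^{3/2} on a bounded interval (t₁, t₂), with d a positive integer. If sup |log f| < ∞ on (t₁, t₂) and |f'(t₀)| < 1 for some t₀ ∈ (t₁, t₂), then sup_{(t₁,t₂)} |f'| < 1. -/
open Topology Filter Metric

lemma aux_deriv (k : ℕ) (f : ℝ → ℝ) (t : ℝ)
    (hfd : HasDerivAt f (deriv f t) t)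
    (hud : HasDerivAt (deriv f) (deriv (deriv f) t) t)
    (h1 : 0 < 1 - deriv f t ^ 2)
    (hode : f t * deriv (deriv f) t + ((k:ℝ)+1) * (1 - deriv f t ^ 2)
        = (((k:ℝ)+1) + 1) * f t * (1 - deriv f t ^ 2) ^ ((3 : ℝ) / 2)) :
    HasDerivAt (fun s => f s ^ (k+1) * (Real.sqrt (1 - deriv f s ^ 2))⁻¹ - f s ^ (k+2)) 0 t := by
  have hs : 0 < Real.sqrt (1 - deriv f t ^ 2) := Real.sqrt_pos.2 h1
  have hs2 : Real.sqrt (1 - deriv f t ^ 2) ^ 2 = 1 - deriv f t ^ 2 := Real.sq_sqrt h1.le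
  have h32 : (1 - deriv f t ^ 2) ^ ((3:ℝ)/2) = Real.sqrt (1 - deriv f t ^ 2) ^ 3 := by
    rw [show (3:ℝ)/2 = (1/2:ℝ)*3 by norm_num, Real.rpow_mul h1.le, ← Real.sqrt_eq_rpow,
      show ((3:ℝ)) = ((3:ℕ):ℝ) by norm_num, Real.rpow_natCast]
  rw [h32] at hode
  have hq : HasDerivAt (fun y => 1 - deriv f y ^ 2)
      (-((2:ℕ) * deriv f t ^ (2-1) * deriv (deriv f) t)) t := (hud.pow 2).const_sub 1
  have hsqrt := hq.sqrt h1.ne'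
  have hinv := hsqrt.fun_inv hs.ne'
  have hmain := ((hfd.fun_pow (k+1)).fun_mul hinv).fun_sub (hfd.fun_pow (k+2))
  refine HasDerivAt.congr_deriv hmain (Eq.symm ?_)
  simp only [Nat.add_sub_cancel, pow_one]
  push_cast
  field_simp
  linear_combination (-(deriv f t)*f t^k)*hode - (((k:ℝ)+1)*deriv f t*f t^k)*hs2

/-- Blow-up criterion for the spherically symmetric CMC ODE: if `log f` is bounded on a
bounded interval and `|f'| < 1` at one point, then `sup |f'| < 1` on the whole interval. -/
theorem stmt1 (d : ℕ) (hd : 1 ≤ d) (t₁ t₂ t₀ : ℝ) (ht₀ : t₀ ∈ Set.Ioo t₁ t₂)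
    (f : ℝ → ℝ)
    (hf : ContDiffOn ℝ 2 f (Set.Ioo t₁ t₂))
    (hpos : ∀ t ∈ Set.Ioo t₁ t₂, 0 < f t)
    (hode : ∀ t ∈ Set.Ioo t₁ t₂,
      f t * deriv (deriv f) t + (d : ℝ) * (1 - (deriv f t) ^ 2)
        = ((d : ℝ) + 1) * f t * (1 - (deriv f t) ^ 2) ^ ((3 : ℝ) / 2))
    (hlog : ∃ C : ℝ, ∀ t ∈ Set.Ioo t₁ t₂, |Real.log (f t)| ≤ C)
    (hd0 : |deriv f t₀| < 1) :
    ∃ c < (1 : ℝ), ∀ t ∈ Set.Ioo t₁ t₂, |deriv f t| ≤ c := by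
  obtain ⟨C, hC⟩ := hlog
  obtain ⟨k, rfl⟩ : ∃ k, d = k + 1 := ⟨d - 1, (Nat.succ_pred_eq_of_pos hd).symm⟩
  have hIopen : IsOpen (Set.Ioo t₁ t₂) := isOpen_Ioo
  have hfdiff : ∀ t ∈ Set.Ioo t₁ t₂, HasDerivAt f (deriv f t) t := fun t ht =>
    ((hf.differentiableOn (by norm_num)).differentiableAt (hIopen.mem_nhds ht)).hasDerivAt
  have hu1 : ContDiffOn ℝ 1 (deriv f) (Set.Ioo t₁ t₂) :=
    hf.deriv_of_isOpen (m := 1) hIopen (by norm_num)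
  have hudiff : ∀ t ∈ Set.Ioo t₁ t₂, HasDerivAt (deriv f) (deriv (deriv f) t) t := fun t ht =>
    ((hu1.differentiableOn (by norm_num)).differentiableAt (hIopen.mem_nhds ht)).hasDerivAt
  have hucont : ContinuousOn (deriv f) (Set.Ioo t₁ t₂) := hu1.continuousOn
  have hbounds : ∀ t ∈ Set.Ioo t₁ t₂, Real.exp (-C) ≤ f t ∧ f t ≤ Real.exp C := by
    intro t ht
    have h := hC t ht
    have h1 := hpos t ht
    rw [abs_le] at h
    constructor
    · calc Real.exp (-C) ≤ Real.exp (Real.log (f t)) := Real.exp_le_exp.2 h.1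
        _ = f t := Real.exp_log h1
    · calc f t = Real.exp (Real.log (f t)) := (Real.exp_log h1).symm
        _ ≤ Real.exp C := Real.exp_le_exp.2 h.2
  set E : ℝ → ℝ := fun s => f s ^ (k+1) * (Real.sqrt (1 - deriv f s ^ 2))⁻¹ - f s ^ (k+2)
    with hEdef
  have hODE' : ∀ t ∈ Set.Ioo t₁ t₂, f t * deriv (deriv f) t + ((k:ℝ)+1) * (1 - deriv f t ^ 2)
      = (((k:ℝ)+1)+1) * f t * (1 - deriv f t ^ 2) ^ ((3:ℝ)/2) := by
    intro t ht
    have h := hode t ht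
    push_cast at h
    linear_combination h
  have hEd : ∀ t ∈ Set.Ioo t₁ t₂, deriv f t ^ 2 < 1 → HasDerivAt E 0 t := by
    intro t ht hlt
    rw [hEdef]
    exact aux_deriv k f t (hfdiff t ht) (hudiff t ht) (by linarith) (hODE' t ht)
  set m : ℝ := Real.exp (-C) ^ (k+1) with hm
  set M : ℝ := Real.exp C ^ (k+2) with hM
  set K : ℝ := |E t₀| + M with hK
  have hmpos : 0 < m := pow_pos (Real.exp_pos _) _
  have hMpos : 0 < M := pow_pos (Real.exp_pos _) _
  have hKpos : 0 < K := add_pos_of_nonneg_of_pos (abs_nonneg _) hMpos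
  set δ : ℝ := m / K with hδ
  have hδpos : 0 < δ := div_pos hmpos hKpos
  have hkey : ∀ t ∈ Set.Ioo t₁ t₂, deriv f t ^ 2 < 1 → E t = E t₀ →
      deriv f t ^ 2 ≤ 1 - δ ^ 2 := by
    intro t ht hlt hEt
    have ha := hpos t ht
    obtain ⟨hfl, hfu⟩ := hbounds t ht
    have hs : 0 < Real.sqrt (1 - deriv f t ^ 2) := Real.sqrt_pos.2 (by linarith)
    have hs2 : Real.sqrt (1 - deriv f t ^ 2) ^ 2 = 1 - deriv f t ^ 2 :=
      Real.sq_sqrt (by linarith)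
    have hEt' : f t ^ (k+1) * (Real.sqrt (1 - deriv f t ^ 2))⁻¹ - f t ^ (k+2) = E t₀ := hEt
    have heq : f t ^ (k+1) = (E t₀ + f t ^ (k+2)) * Real.sqrt (1 - deriv f t ^ 2) := by
      field_simp [hs.ne'] at hEt'
      linear_combination hEt'
    have h1 : m ≤ f t ^ (k+1) := pow_le_pow_left₀ (Real.exp_pos _).le hfl (k+1)
    have h2 : f t ^ (k+2) ≤ M := pow_le_pow_left₀ ha.le hfu (k+2)
    have h3 : E t₀ + f t ^ (k+2) ≤ K := by
      rw [hK]; linarith [le_abs_self (E t₀)]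
    have hδs : δ ≤ Real.sqrt (1 - deriv f t ^ 2) := by
      rw [hδ, div_le_iff₀ hKpos]
      nlinarith [mul_le_mul_of_nonneg_right h3 hs.le]
    nlinarith
  set A : Set ℝ := {t | t ∈ Set.Ioo t₁ t₂ ∧ deriv f t ^ 2 < 1 ∧ E t = E t₀} with hA
  have ht₀A : t₀ ∈ A := by
    refine ⟨ht₀, ?_, rfl⟩
    nlinarith [sq_abs (deriv f t₀), abs_nonneg (deriv f t₀)]
  have hAopen : IsOpen A := by
    rw [isOpen_iff_mem_nhds]
    intro t ht
    have htI := ht.1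
    have hcont : ContinuousAt (deriv f) t := hucont.continuousAt (hIopen.mem_nhds htI)
    have hV : {s | s ∈ Set.Ioo t₁ t₂ ∧ deriv f s ^ 2 < 1} ∈ 𝓝 t := by
      have h1 : Set.Ioo t₁ t₂ ∈ 𝓝 t := hIopen.mem_nhds htI
      have h2 : {s | deriv f s ^ 2 < 1} ∈ 𝓝 t := (hcont.pow 2) (Iio_mem_nhds ht.2.1)
      filter_upwards [h1, h2] with s hs1 hs2
      exact ⟨hs1, hs2⟩
    obtain ⟨ε, hε, hball⟩ := Metric.mem_nhds_iff.1 hV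
    have hconst : ∀ y ∈ Metric.ball t ε, E y = E t := by
      intro y hy
      refine (convex_ball t ε).is_const_of_fderivWithin_eq_zero (𝕜 := ℝ) ?_ ?_ hy
        (Metric.mem_ball_self hε)
      · intro x hx
        exact (hEd x (hball hx).1 (hball hx).2).differentiableAt.differentiableWithinAt
      · intro x hx
        have h' : HasFDerivWithinAt E (0 : ℝ →L[ℝ] ℝ) (Metric.ball t ε) x := by
          have h0 : (ContinuousLinearMap.smulRight (1 : ℝ →L[ℝ] ℝ) (0:ℝ)) = 0 := by
            ext; simp
          rw [← h0]
          exact (hEd x (hball hx).1 (hball hx).2).hasFDerivAt.hasFDerivWithinAt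
        exact h'.fderivWithin (Metric.isOpen_ball.uniqueDiffWithinAt hx)
    refine Filter.mem_of_superset (Metric.ball_mem_nhds t hε) ?_
    intro y hy
    exact ⟨(hball hy).1, (hball hy).2, (hconst y hy).trans ht.2.2⟩
  have hclosure : closure A ∩ Set.Ioo t₁ t₂ ⊆ A := by
    rintro t ⟨htc, htI⟩
    haveI hne : (𝓝[A] t).NeBot := mem_closure_iff_nhdsWithin_neBot.1 htc
    have hcont : ContinuousAt (deriv f) t := hucont.continuousAt (hIopen.mem_nhds htI)
    have hlim : Filter.Tendsto (fun s => deriv f s ^ 2) (𝓝[A] t) (𝓝 (deriv f t ^ 2)) :=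
      Filter.Tendsto.mono_left (hcont.pow 2) nhdsWithin_le_nhds
    have hb : deriv f t ^ 2 ≤ 1 - δ ^ 2 := by
      refine le_of_tendsto hlim ?_
      filter_upwards [self_mem_nhdsWithin] with s hs
      exact hkey s hs.1 hs.2.1 hs.2.2
    have hlt : deriv f t ^ 2 < 1 := by nlinarith
    have hgcont : ContinuousAt (fun s => Real.sqrt (1 - deriv f s ^ 2)) t :=
      Real.continuous_sqrt.continuousAt.comp (continuousAt_const.sub (hcont.pow 2))
    have hgne : Real.sqrt (1 - deriv f t ^ 2) ≠ 0 := (Real.sqrt_pos.2 (by linarith)).ne'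
    have hfcont : ContinuousAt f t := (hfdiff t htI).continuousAt
    have hEcont : ContinuousAt E t := by
      rw [hEdef]
      exact ((hfcont.pow (k+1)).mul (hgcont.inv₀ hgne)).sub (hfcont.pow (k+2))
    have hE0 : E t = E t₀ := by
      have h1 : Filter.Tendsto E (𝓝[A] t) (𝓝 (E t)) :=
        Filter.Tendsto.mono_left hEcont nhdsWithin_le_nhds
      have h2 : Filter.Tendsto E (𝓝[A] t) (𝓝 (E t₀)) := by
        refine Filter.Tendsto.congr' ?_ tendsto_const_nhds
        filter_upwards [self_mem_nhdsWithin] with s hs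
        exact hs.2.2.symm
      exact tendsto_nhds_unique h1 h2
    exact ⟨htI, hlt, hE0⟩
  have hsub : Set.Ioo t₁ t₂ ⊆ A :=
    (isPreconnected_Ioo).subset_of_closure_inter_subset hAopen ⟨t₀, ht₀, ht₀A⟩ hclosure
  refine ⟨Real.sqrt (1 - δ ^ 2), ?_, ?_⟩
  · rw [Real.sqrt_lt' one_pos]
    nlinarith
  · intro t ht
    exact Real.abs_le_sqrt (hkey t ht (hsub ht).2.1 (hsub ht).2.2)
end

section
/- Let f be a C² solution of f·f'' + d·(1 - (f')²) = (d+1)·f·(1 - (f')²)^{3/2} with f(t₀) > d/(d+1), |f'(t₀)| < 1 and f'(t₀) ≥ 0. Then f extends to a solution on [t₀, ∞) with 0 ≤ f' < 1 throughout, and f(t) → ∞ as t → ∞. -/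
set_option maxHeartbeats 1000000
open Set Filter

lemma aux_rpow32 (x : ℝ) (hx : 0 ≤ x) : x ^ ((3:ℝ)/2) = Real.sqrt x ^ 3 := by
  rw [Real.sqrt_eq_rpow, ← Real.rpow_natCast (x ^ ((1:ℝ)/2)) 3, ← Real.rpow_mul hx]
  norm_num

lemma aux_rpow32_sq (x : ℝ) (hx : 0 ≤ x) : (x^2) ^ ((3:ℝ)/2) = x ^ 3 := by
  rw [aux_rpow32 _ (sq_nonneg x), Real.sqrt_sq hx]

noncomputable def auxQ (d : ℕ) (E y : ℝ) : ℝ := y^(d+1) + E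
noncomputable def auxR (d : ℕ) (E y : ℝ) : ℝ := 1 - (y^d / auxQ d E y)^2
noncomputable def auxG (d : ℕ) (E y : ℝ) : ℝ := Real.sqrt (auxR d E y)
noncomputable def auxMd (d : ℕ) (E y : ℝ) : ℝ :=
  ((d:ℝ) * y^(d-1) * auxQ d E y - y^d * ((↑(d+1):ℝ) * y^d)) / (auxQ d E y)^2
noncomputable def auxGd (d : ℕ) (E y : ℝ) : ℝ :=
  -(2 * (y^d/auxQ d E y) * auxMd d E y) / (2 * Real.sqrt (auxR d E y))

lemma auxQ_deriv (d : ℕ) (E y : ℝ) : HasDerivAt (auxQ d E) ((↑(d+1):ℝ) * y^d) y := by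
  have h := hasDerivAt_pow (d+1) y
  simp only [Nat.add_sub_cancel] at h
  exact h.add_const E

lemma auxR_deriv (d : ℕ) (E y : ℝ) (hq : auxQ d E y ≠ 0) :
    HasDerivAt (auxR d E) (-(2 * (y^d/auxQ d E y) * auxMd d E y)) y := by
  have h1 : HasDerivAt (fun z => z^d / auxQ d E z) (auxMd d E y) y :=
    (hasDerivAt_pow d y).div (auxQ_deriv d E y) hq
  have h2 := (h1.pow 2).const_sub 1
  have h3 : HasDerivAt (auxR d E) (-(↑2 * (y ^ d / auxQ d E y) ^ (2 - 1) * auxMd d E y)) y := h2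
  convert h3 using 1
  push_cast
  ring

lemma auxG_deriv (d : ℕ) (E y : ℝ) (hq : auxQ d E y ≠ 0) (hr : auxR d E y ≠ 0) :
    HasDerivAt (auxG d E) (auxGd d E y) y :=
  (auxR_deriv d E y hq).sqrt hr

lemma auxG_sq (d : ℕ) (E y : ℝ) (hr : 0 ≤ auxR d E y) : auxG d E y ^ 2 = auxR d E y :=
  Real.sq_sqrt hr

lemma aux_ode (d : ℕ) (hd : 1 ≤ d) (E y : ℝ) (hy0 : 0 < y) (hq : 0 < auxQ d E y)
    (hr : 0 < auxR d E y) :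
    y * (auxGd d E y * auxG d E y) + (d:ℝ) * (1 - auxG d E y ^ 2)
      = ((d:ℝ)+1) * y * (1 - auxG d E y ^ 2) ^ ((3:ℝ)/2) := by
  have hgg := auxG_sq d E y hr.le
  have h1g : 1 - auxG d E y ^ 2 = (y^d / auxQ d E y)^2 := by
    rw [hgg]; simp only [auxR]; ring
  rw [h1g, aux_rpow32_sq _ (le_of_lt (div_pos (pow_pos hy0 d) hq))]
  have hsr : Real.sqrt (auxR d E y) ≠ 0 := ne_of_gt (Real.sqrt_pos.2 hr)
  have hcancel : auxGd d E y * auxG d E y = -((y^d/auxQ d E y) * auxMd d E y) := by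
    simp only [auxGd, auxG]
    field_simp
  rw [hcancel]
  simp only [auxMd]
  have hyd : y^d = y^(d-1) * y := by rw [← pow_succ, Nat.sub_add_cancel hd]
  rw [hyd]
  have hqne : auxQ d E y ≠ 0 := ne_of_gt hq
  field_simp
  push_cast
  ring

lemma auxR_pos_of (d : ℕ) (E y : ℝ) (hy0 : 0 < y) (hq : 0 < auxQ d E y)
    (hh : y ^ d < auxQ d E y) : 0 < auxR d E y := by
  have h1 : 0 < y^d / auxQ d E y := div_pos (pow_pos hy0 d) hq
  have h2 : y^d / auxQ d E y < 1 := (div_lt_one hq).2 hh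
  simp only [auxR]; nlinarith

lemma auxG_pos_of (d : ℕ) (E y : ℝ) (hr : 0 < auxR d E y) : 0 < auxG d E y :=
  Real.sqrt_pos.2 hr

lemma auxG_lt_one_of (d : ℕ) (E y : ℝ) (hy0 : 0 < y) (hq : 0 < auxQ d E y)
    (hh : y ^ d < auxQ d E y) : auxG d E y < 1 := by
  have hr := auxR_pos_of d E y hy0 hq hh
  have h2 := Real.sqrt_nonneg (auxR d E y)
  have h3 : auxR d E y < 1 := by
    have h1 : 0 < y^d / auxQ d E y := div_pos (pow_pos hy0 d) hq
    simp only [auxR]; nlinarith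
  have h4 := auxG_sq d E y hr.le
  simp only [auxG] at h4 ⊢
  nlinarith [Real.sqrt_nonneg (auxR d E y)]

lemma auxG_contDiffAt (d : ℕ) (E y : ℝ) (hq : auxQ d E y ≠ 0) (hr : auxR d E y ≠ 0) :
    ContDiffAt ℝ 1 (auxG d E) y := by
  have hqC : ContDiffAt ℝ 1 (auxQ d E) y := ((contDiff_id.pow (d+1)).add contDiff_const).contDiffAt
  have hrC : ContDiffAt ℝ 1 (auxR d E) y := by
    have h1 : ContDiffAt ℝ 1 (fun z => z ^ d / auxQ d E z) y :=
      ((contDiff_id.pow d)).contDiffAt.div hqC hq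
    exact contDiffAt_const.sub ((h1.pow 2))
  exact hrC.sqrt hr



/-- Global existence and indefinite expansion: a solution of the spherically symmetric CMC
ODE with `f(t₀) > d/(d+1)`, `0 ≤ f'(t₀) < 1` extends to `[t₀, ∞)` with `0 ≤ f' < 1` and
grows unboundedly. -/
theorem stmt2 (d : ℕ) (hd : 1 ≤ d) (a b t₀ : ℝ) (ht₀ : t₀ ∈ Set.Ioo a b)
    (f : ℝ → ℝ)
    (hf : ContDiffOn ℝ 2 f (Set.Ioo a b))
    (hpos : ∀ t ∈ Set.Ioo a b, 0 < f t)
    (hode : ∀ t ∈ Set.Ioo a b,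
      f t * deriv (deriv f) t + (d : ℝ) * (1 - (deriv f t) ^ 2)
        = ((d : ℝ) + 1) * f t * (1 - (deriv f t) ^ 2) ^ ((3 : ℝ) / 2))
    (hinit : f t₀ > (d : ℝ) / ((d : ℝ) + 1))
    (hv : |deriv f t₀| < 1) (hv0 : 0 ≤ deriv f t₀) :
    ∃ F : ℝ → ℝ,
      (∀ t ∈ Set.Ico t₀ b, F t = f t) ∧
      ContDiffOn ℝ 2 F (Set.Ici t₀) ∧
      (∀ t ∈ Set.Ici t₀, 0 < F t) ∧
      (∀ t ∈ Set.Ici t₀,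
        F t * deriv (deriv F) t + (d : ℝ) * (1 - (deriv F t) ^ 2)
          = ((d : ℝ) + 1) * F t * (1 - (deriv F t) ^ 2) ^ ((3 : ℝ) / 2)) ∧
      (∀ t ∈ Set.Ici t₀, 0 ≤ deriv F t ∧ deriv F t < 1) ∧
      Filter.Tendsto F Filter.atTop Filter.atTop := by

  obtain ⟨hat₀, ht₀b⟩ := ht₀
  set I : Set ℝ := Set.Ioo a b with hI
  have hIo : IsOpen I := isOpen_Ioo
  have hfd : ∀ t ∈ I, HasDerivAt f (deriv f t) t := fun t ht =>
    ((hf.differentiableOn two_ne_zero).differentiableAt (hIo.mem_nhds ht)).hasDerivAt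
  have hf1C : ContDiffOn ℝ 1 (deriv f) I := hf.deriv_of_isOpen hIo (by norm_num)
  have hf1d : ∀ t ∈ I, HasDerivAt (deriv f) (deriv (deriv f) t) t := fun t ht =>
    ((hf1C.differentiableOn one_ne_zero).differentiableAt (hIo.mem_nhds ht)).hasDerivAt
  have hf1c : ContinuousOn (deriv f) I := hf1C.continuousOn
  have hfc : ContinuousOn f I := hf.continuousOn
  have hd1 : (1:ℝ) ≤ (d:ℝ) := by exact_mod_cast hd
  have hy₀pos : 0 < f t₀ := hpos t₀ ⟨hat₀, ht₀b⟩
  have hf2pos : ∀ s ∈ I, deriv f s = 0 → f t₀ ≤ f s → 0 < deriv (deriv f) s := by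
    intro s hs h0 hles
    have h := hode s hs
    rw [h0] at h
    norm_num [Real.one_rpow] at h
    have hfs : 0 < f s := hpos s hs
    have hds : deriv (deriv f) s = ((d:ℝ)+1) - (d:ℝ)/(f s) := by
      field_simp at h ⊢; linarith
    rw [hds]
    rw [gt_iff_lt, div_lt_iff₀ (by positivity)] at hinit
    have : (d:ℝ) < ((d:ℝ)+1) * f s := lt_of_lt_of_le hinit (by nlinarith)
    rw [sub_pos, div_lt_iff₀ hfs]; linarith
  have hslope_pos : ∀ s ∈ I, deriv f s = 0 → 0 < deriv (deriv f) s →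
      (∀ᶠ t in nhdsWithin s (Ioi s), 0 < deriv f t) ∧
      (∀ᶠ t in nhdsWithin s (Iio s), deriv f t < 0) := by
    intro s hs h0 hc
    have hslope := hasDerivAt_iff_tendsto_slope.1 (hf1d s hs)
    have hev : ∀ᶠ t in nhdsWithin s {s}ᶜ, 0 < slope (deriv f) s t :=
      hslope.eventually (eventually_gt_nhds hc)
    constructor
    · have h1 : ∀ᶠ t in nhdsWithin s (Ioi s), 0 < slope (deriv f) s t :=
        hev.filter_mono (nhdsWithin_mono s fun x hx => ne_of_gt hx)
      filter_upwards [h1, self_mem_nhdsWithin] with t hts ht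
      have h2 : 0 < (deriv f t - deriv f s) / (t - s) := by
        rwa [slope_def_field] at hts
      have h3 := mul_pos h2 (sub_pos.2 ht)
      rw [div_mul_cancel₀ _ (sub_ne_zero.2 (ne_of_gt ht))] at h3
      rw [h0] at h3; linarith
    · have h1 : ∀ᶠ t in nhdsWithin s (Iio s), 0 < slope (deriv f) s t :=
        hev.filter_mono (nhdsWithin_mono s fun x hx => ne_of_lt hx)
      filter_upwards [h1, self_mem_nhdsWithin] with t hts ht
      have h2 : 0 < (deriv f t - deriv f s) / (t - s) := by
        rwa [slope_def_field] at hts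
      rcases div_pos_iff.1 h2 with ⟨_, hden⟩ | ⟨hnum, _⟩
      · have : t - s < 0 := sub_neg.2 ht
        linarith
      · rw [h0] at hnum; linarith
  have hmono_aux : ∀ p q : ℝ, t₀ ≤ p → p ≤ q → q < b → (∀ u ∈ Ico p q, 0 ≤ deriv f u) →
      f p ≤ f q := by
    intro p q hp hpq hqb hnn
    rcases eq_or_lt_of_le hpq with rfl | hlt
    · exact le_rfl
    · have hIcc : Icc p q ⊆ I := fun u hu =>
        ⟨lt_of_lt_of_le hat₀ (le_trans hp hu.1), lt_of_le_of_lt hu.2 hqb⟩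
      have hdiff : DifferentiableOn ℝ f (interior (Icc p q)) := by
        rw [interior_Icc]
        exact fun u hu => ((hfd u (hIcc ⟨le_of_lt hu.1, le_of_lt hu.2⟩)).differentiableAt).differentiableWithinAt
      have hm := monotoneOn_of_deriv_nonneg (convex_Icc p q) (hfc.mono hIcc) hdiff ?_
      · exact hm (left_mem_Icc.2 hpq) (right_mem_Icc.2 hpq) hpq
      · intro u hu
        rw [interior_Icc] at hu
        exact hnn u ⟨le_of_lt hu.1, hu.2⟩
  have hge : ∀ t ∈ Ico t₀ b, 0 ≤ deriv f t := by
    by_contra hcon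
    push_neg at hcon
    obtain ⟨u₀, hu₀, hu₀neg⟩ := hcon
    set S : Set ℝ := {t | t ∈ Ico t₀ b ∧ deriv f t < 0} with hS
    have hSne : S.Nonempty := ⟨u₀, hu₀, hu₀neg⟩
    have hSbdd : BddBelow S := ⟨t₀, fun u hu => hu.1.1⟩
    set s := sInf S with hs
    have hst₀ : t₀ ≤ s := le_csInf hSne fun u hu => hu.1.1
    have hsu₀ : s ≤ u₀ := csInf_le hSbdd ⟨hu₀, hu₀neg⟩
    have hsb : s < b := lt_of_le_of_lt hsu₀ hu₀.2
    have hsI : s ∈ I := ⟨lt_of_lt_of_le hat₀ hst₀, hsb⟩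
    have hbefore : ∀ u ∈ Ico t₀ s, 0 ≤ deriv f u := by
      intro u hu; by_contra hneg; push_neg at hneg
      exact absurd (csInf_le hSbdd ⟨⟨hu.1, lt_trans hu.2 hsb⟩, hneg⟩) (not_le.2 hu.2)
    have hcont : ContinuousAt (deriv f) s := (hf1C.continuousOn s hsI).continuousAt (hIo.mem_nhds hsI)
    have hle0 : deriv f s ≤ 0 := by
      by_contra hpos'
      push_neg at hpos'
      have hev : ∀ᶠ u in nhds s, 0 < deriv f u := hcont.eventually (eventually_gt_nhds hpos')
      rw [Metric.eventually_nhds_iff] at hev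
      obtain ⟨ε, hε, hball⟩ := hev
      obtain ⟨u, huS, hu⟩ := (csInf_lt_iff hSbdd hSne).1 (lt_add_of_pos_right s hε)
      have hsu : s ≤ u := csInf_le hSbdd huS
      have : 0 < deriv f u := hball (by rw [Real.dist_eq, abs_lt]; constructor <;> linarith)
      exact absurd this (not_lt.2 (le_of_lt huS.2))
    have hge0 : 0 ≤ deriv f s := by
      rcases eq_or_lt_of_le hst₀ with he | hlt
      · rw [← he]; exact hv0
      · have htd : Tendsto (deriv f) (nhdsWithin s (Iio s)) (nhds (deriv f s)) :=
          hcont.tendsto.mono_left nhdsWithin_le_nhds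
        refine ge_of_tendsto htd ?_
        filter_upwards [Ioo_mem_nhdsLT_of_mem (⟨hlt, le_refl s⟩ : s ∈ Ioc t₀ s)] with u hu
        exact hbefore u ⟨le_of_lt hu.1, hu.2⟩
    have h0 : deriv f s = 0 := le_antisymm hle0 hge0
    have hmono : f t₀ ≤ f s := hmono_aux t₀ s le_rfl hst₀ hsb hbefore
    obtain ⟨hright, -⟩ := hslope_pos s hsI h0 (hf2pos s hsI h0 hmono)
    obtain ⟨u', hu', hsub⟩ := mem_nhdsGT_iff_exists_Ioo_subset.1 hright
    obtain ⟨u, huS, huu'⟩ := (csInf_lt_iff hSbdd hSne).1 hu'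
    have hsu : s < u := by
      rcases eq_or_lt_of_le (csInf_le hSbdd huS) with he | h
      · exfalso
        have hcontra := huS.2
        rw [← he, h0] at hcontra
        exact lt_irrefl 0 hcontra
      · exact h
    exact absurd (hsub ⟨hsu, huu'⟩) (not_lt.2 (le_of_lt huS.2))
  have hgt : ∀ t ∈ Ioo t₀ b, 0 < deriv f t := by
    intro t ht
    rcases (hge t ⟨le_of_lt ht.1, ht.2⟩).lt_or_eq with h | h
    · exact h
    · exfalso
      have h0 : deriv f t = 0 := h.symm
      have htI : t ∈ I := ⟨lt_trans hat₀ ht.1, ht.2⟩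
      have hf2 := hf2pos t htI h0
        (hmono_aux t₀ t le_rfl (le_of_lt ht.1) ht.2 (fun u hu => hge u ⟨hu.1, lt_trans hu.2 ht.2⟩))
      obtain ⟨-, hleft⟩ := hslope_pos t htI h0 hf2
      have hmem : Ioo t₀ t ∈ nhdsWithin t (Iio t) :=
        Ioo_mem_nhdsLT_of_mem (⟨ht.1, le_refl t⟩ : t ∈ Ioc t₀ t)
      obtain ⟨u, hu1, hu2⟩ := (hleft.and (eventually_of_mem hmem (fun u hu => hu))).exists
      exact absurd (hge u ⟨le_of_lt hu2.1, lt_trans hu2.2 ht.2⟩) (not_le.2 hu1)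
  -- conservation law
  set W : ℝ → ℝ := fun t => f t ^ d / Real.sqrt (1 - deriv f t ^ 2) - f t ^ (d+1) with hWdef
  have hWd : ∀ u ∈ I, deriv f u ^ 2 < 1 → HasDerivAt W 0 u := by
    intro u hu hsqlt
    have h1v : 0 < 1 - deriv f u ^ 2 := by linarith
    have hσ : 0 < Real.sqrt (1 - deriv f u ^ 2) := Real.sqrt_pos.2 h1v
    set A := f u with hA0
    set v := deriv f u with hv0'
    set w := deriv (deriv f) u with hw0
    set σ := Real.sqrt (1 - v ^ 2) with hσ0
    have hσ2 : σ^2 = 1 - v^2 := Real.sq_sqrt h1v.le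
    have hAw : A * w = ((d:ℝ)+1) * A * σ^3 - (d:ℝ) * σ^2 := by
      have h := hode u hu
      rw [aux_rpow32 _ h1v.le] at h
      rw [hσ2]
      linarith
    have hs1 : HasDerivAt (fun t => 1 - deriv f t ^ 2) (-(2*v*w)) u := by
      have h := ((hf1d u hu).pow 2).const_sub 1
      refine h.congr_deriv ?_
      push_cast
      ring
    have hsqrt : HasDerivAt (fun t => Real.sqrt (1 - deriv f t ^ 2)) (-(2*v*w) / (2*σ)) u :=
      hs1.sqrt (ne_of_gt h1v)
    have hq : HasDerivAt (fun t => f t ^ d) ((d:ℝ) * A^(d-1) * v) u := (hfd u hu).pow d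
    have hdiv : HasDerivAt (fun t => f t ^ d / Real.sqrt (1 - deriv f t ^ 2))
        (((d:ℝ) * A^(d-1) * v * σ - A^d * (-(2*v*w)/(2*σ))) / σ^2) u :=
      hq.div hsqrt (ne_of_gt hσ)
    have hp1 : HasDerivAt (fun t => f t ^ (d+1)) ((((d:ℝ))+1) * A^d * v) u := by
      have h := (hfd u hu).pow (d+1)
      simp only [Nat.add_sub_cancel] at h
      refine h.congr_deriv ?_
      push_cast
      ring
    have hWD : HasDerivAt W
        (((d:ℝ) * A^(d-1) * v * σ - A^d * (-(2*v*w)/(2*σ))) / σ^2 - (((d:ℝ))+1) * A^d * v) u :=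
      hdiv.sub hp1
    have hApow : A^d = A^(d-1) * A := by
      rw [← pow_succ, Nat.sub_add_cancel hd]
    have hkey : A*w + (d:ℝ)*σ^2 - ((d:ℝ)+1)*A*σ^3 = 0 := by linarith
    have hz : ((d:ℝ) * A^(d-1) * v * σ - A^d * (-(2*v*w)/(2*σ))) / σ^2 - (((d:ℝ))+1) * A^d * v
        = A^(d-1) * v / σ^3 * (A*w + (d:ℝ)*σ^2 - ((d:ℝ)+1)*A*σ^3) := by
      rw [hApow]
      field_simp
      ring
    rw [hkey, mul_zero] at hz
    rw [hz] at hWD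
    exact hWD
  have hWconst : ∀ x ∈ Ico t₀ b, (∀ u' ∈ Icc t₀ x, deriv f u' ^ 2 < 1) →
      ∀ u' ∈ Icc t₀ x, W u' = W t₀ := by
    intro x hx hsq
    have hIcc : Icc t₀ x ⊆ I := fun u hu =>
      ⟨lt_of_lt_of_le hat₀ hu.1, lt_of_le_of_lt hu.2 hx.2⟩
    apply constant_of_has_deriv_right_zero
    · intro u hu
      exact ((hWd u (hIcc hu) (hsq u hu)).continuousAt).continuousWithinAt
    · intro u hu
      exact (hWd u (hIcc ⟨hu.1, hu.2.le⟩) (hsq u ⟨hu.1, hu.2.le⟩)).hasDerivWithinAt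
  set E : ℝ := f t₀ ^ d / Real.sqrt (1 - deriv f t₀ ^ 2) - f t₀ ^ (d+1) with hEdef
  set V : ℝ → ℝ := fun t => Real.sqrt (1 - deriv f t ^ 2) * auxQ d E (f t) - f t ^ d with hVdef
  have hVzero : ∀ x ∈ Ico t₀ b, (∀ u' ∈ Icc t₀ x, deriv f u' ^ 2 < 1) →
      ∀ u' ∈ Icc t₀ x, V u' = 0 := by
    intro x hx hsq u hu
    have hWu : W u = E := hWconst x hx hsq u hu
    have h1v : 0 < 1 - deriv f u ^ 2 := by have := hsq u hu; linarith
    have hσ : 0 < Real.sqrt (1 - deriv f u ^ 2) := Real.sqrt_pos.2 h1v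
    have : f u ^ d / Real.sqrt (1 - deriv f u ^ 2) = auxQ d E (f u) := by
      simp only [hWdef] at hWu
      simp only [auxQ]
      linarith
    simp only [hVdef]
    rw [← this]
    field_simp
    simp
  -- persistence of f' < 1
  have hlt1 : ∀ t ∈ Ico t₀ b, deriv f t < 1 := by
    by_contra hcon
    push_neg at hcon
    obtain ⟨u₀, hu₀, hu₀ge⟩ := hcon
    set S : Set ℝ := {t | t ∈ Ico t₀ b ∧ 1 ≤ deriv f t} with hS
    have hSne : S.Nonempty := ⟨u₀, hu₀, hu₀ge⟩
    have hSbdd : BddBelow S := ⟨t₀, fun u hu => hu.1.1⟩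
    set s := sInf S with hs
    have hst₀ : t₀ ≤ s := le_csInf hSne fun u hu => hu.1.1
    have hsb : s < b := lt_of_le_of_lt (csInf_le hSbdd ⟨hu₀, hu₀ge⟩) hu₀.2
    have hsI : s ∈ I := ⟨lt_of_lt_of_le hat₀ hst₀, hsb⟩
    have hbefore : ∀ u ∈ Ico t₀ s, deriv f u < 1 := by
      intro u hu; by_contra hneg; push_neg at hneg
      exact absurd (csInf_le hSbdd ⟨⟨hu.1, lt_trans hu.2 hsb⟩, hneg⟩) (not_le.2 hu.2)
    have hvlt1 : deriv f t₀ < 1 := lt_of_le_of_lt (le_abs_self _) hv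
    -- s > t₀
    have hts₀lt : t₀ < s := by
      have hcont : ContinuousAt (deriv f) t₀ :=
        (hf1C.continuousOn t₀ ⟨hat₀, ht₀b⟩).continuousAt (hIo.mem_nhds ⟨hat₀, ht₀b⟩)
      have hev : ∀ᶠ u in nhds t₀, deriv f u < 1 := hcont.eventually (eventually_lt_nhds hvlt1)
      rw [Metric.eventually_nhds_iff] at hev
      obtain ⟨ε, hε, hball⟩ := hev
      have : t₀ + ε/2 ≤ s := by
        apply le_csInf hSne
        intro u hu
        by_contra hlt'
        push_neg at hlt'
        have : deriv f u < 1 := hball (by rw [Real.dist_eq, abs_lt]; constructor <;>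
          [linarith [hu.1.1]; linarith])
        exact absurd this (not_lt.2 hu.2)
      linarith
    -- f' s ≥ 1
    have hcont : ContinuousAt (deriv f) s :=
      (hf1C.continuousOn s hsI).continuousAt (hIo.mem_nhds hsI)
    have hge1 : 1 ≤ deriv f s := by
      by_contra hlt'
      push_neg at hlt'
      have hev : ∀ᶠ u in nhds s, deriv f u < 1 := hcont.eventually (eventually_lt_nhds hlt')
      rw [Metric.eventually_nhds_iff] at hev
      obtain ⟨ε, hε, hball⟩ := hev
      obtain ⟨u, huS, hu⟩ := (csInf_lt_iff hSbdd hSne).1 (lt_add_of_pos_right s hε)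
      have hsu : s ≤ u := csInf_le hSbdd huS
      have : deriv f u < 1 := hball (by rw [Real.dist_eq, abs_lt]; constructor <;> linarith)
      exact absurd this (not_lt.2 huS.2)
    -- V vanishes before s
    have hVbefore : ∀ u ∈ Ico t₀ s, V u = 0 := by
      intro u hu
      refine hVzero u ⟨hu.1, lt_trans hu.2 hsb⟩ ?_ u ⟨hu.1, le_refl u⟩
      intro w hw
      have h₁ := hge w ⟨hw.1, lt_trans (lt_of_le_of_lt hw.2 hu.2) hsb⟩
      have h₂ := hbefore w ⟨hw.1, lt_of_le_of_lt hw.2 hu.2⟩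
      nlinarith
    -- V s = 0 by continuity from the left
    have hcf : ContinuousAt f s := (hfc s hsI).continuousAt (hIo.mem_nhds hsI)
    have hcV : ContinuousAt V s := by
      have h1 : ContinuousAt (fun t => 1 - deriv f t ^ 2) s := continuousAt_const.sub (hcont.pow 2)
      exact ((h1.sqrt).mul ((hcf.pow (d+1)).add continuousAt_const)).sub (hcf.pow d)
    have hVs : V s = 0 := by
      have ht1 : Tendsto V (nhdsWithin s (Iio s)) (nhds (V s)) :=
        hcV.tendsto.mono_left nhdsWithin_le_nhds
      have ht2 : Tendsto V (nhdsWithin s (Iio s)) (nhds 0) := by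
        refine Tendsto.congr' ?_ tendsto_const_nhds
        filter_upwards [Ioo_mem_nhdsLT_of_mem (⟨hts₀lt, le_refl s⟩ : s ∈ Ioc t₀ s)] with u hu
        exact (hVbefore u ⟨le_of_lt hu.1, hu.2⟩).symm
      exact tendsto_nhds_unique ht1 ht2
    -- but V s < 0
    have hsqz : Real.sqrt (1 - deriv f s ^ 2) = 0 := by
      apply Real.sqrt_eq_zero_of_nonpos
      nlinarith
    have hfs : 0 < f s := hpos s hsI
    simp only [hVdef] at hVs
    rw [hsqz, zero_mul, zero_sub, neg_eq_zero] at hVs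
    exact absurd hVs (ne_of_gt (pow_pos hfs d))
  have hsq01 : ∀ t ∈ Ico t₀ b, deriv f t ^ 2 < 1 := by
    intro t ht
    have h₁ := hge t ht
    have h₂ := hlt1 t ht
    nlinarith
  have hV0 : ∀ t ∈ Ico t₀ b, f t ^ d = Real.sqrt (1 - deriv f t ^ 2) * auxQ d E (f t) := by
    intro t ht
    have := hVzero t ht (fun u hu => hsq01 u ⟨hu.1, lt_of_le_of_lt hu.2 ht.2⟩) t ⟨ht.1, le_refl t⟩
    simp only [hVdef] at this
    linarith
  -- choice of base point t₁ and gluing point c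
  set t₁ : ℝ := (t₀ + b)/2 with ht₁def
  have ht₀t₁ : t₀ < t₁ := by simp only [ht₁def]; linarith
  have ht₁b : t₁ < b := by simp only [ht₁def]; linarith
  have ht₁I : t₁ ∈ I := ⟨lt_trans hat₀ ht₀t₁, ht₁b⟩
  set c : ℝ := (t₁ + b)/2 with hcdef
  have ht₁c : t₁ < c := by simp only [hcdef]; linarith
  have hcb : c < b := by simp only [hcdef]; linarith
  set y₁ : ℝ := f t₁ with hy₁def
  have hv₁pos : 0 < deriv f t₁ := hgt t₁ ⟨ht₀t₁, ht₁b⟩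
  have hv₁lt : deriv f t₁ < 1 := hlt1 t₁ ⟨ht₀t₁.le, ht₁b⟩
  have hy₁ge : f t₀ ≤ y₁ :=
    hmono_aux t₀ t₁ le_rfl ht₀t₁.le ht₁b (fun u hu => hge u ⟨hu.1, lt_trans hu.2 ht₁b⟩)
  have hc₀pos : (0:ℝ) < (d:ℝ)/((d:ℝ)+1) := by positivity
  have hy₁c₀ : (d:ℝ)/((d:ℝ)+1) < y₁ := lt_of_lt_of_le hinit hy₁ge
  have hy₁pos : 0 < y₁ := hpos t₁ ht₁I
  set hh : ℝ → ℝ := fun y => auxQ d E y - y ^ d with hhdef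
  have hhy₁pos : 0 < hh y₁ := by
    have hb0 := hV0 t₁ ⟨ht₀t₁.le, ht₁b⟩
    have h1v : 0 < 1 - deriv f t₁ ^ 2 := by nlinarith
    have hσpos : 0 < Real.sqrt (1 - deriv f t₁ ^ 2) := Real.sqrt_pos.2 h1v
    have hσsq : Real.sqrt (1 - deriv f t₁ ^ 2) ^ 2 = 1 - deriv f t₁ ^ 2 := Real.sq_sqrt h1v.le
    have hσlt1 : Real.sqrt (1 - deriv f t₁ ^ 2) < 1 := by
      nlinarith [Real.sqrt_nonneg (1 - deriv f t₁ ^ 2)]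
    have hyd : 0 < y₁ ^ d := pow_pos hy₁pos d
    have hqqpos : 0 < auxQ d E y₁ := by nlinarith
    simp only [hhdef]
    nlinarith
  have hhd : ∀ y : ℝ, HasDerivAt hh ((↑(d+1):ℝ) * y^d - (d:ℝ)*y^(d-1)) y := fun y =>
    (auxQ_deriv d E y).sub (hasDerivAt_pow d y)
  have hhmono : StrictMonoOn hh (Ici ((d:ℝ)/((d:ℝ)+1))) := by
    apply strictMonoOn_of_deriv_pos (convex_Ici _)
    · exact fun y _ => (hhd y).continuousAt.continuousWithinAt
    · intro y hy
      rw [interior_Ici] at hy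
      rw [(hhd y).deriv]
      have hy0 : 0 < y := lt_trans hc₀pos hy
      have hyp : 0 < y^(d-1) := pow_pos hy0 _
      have hyd : y^d = y^(d-1) * y := by rw [← pow_succ, Nat.sub_add_cancel hd]
      have hdy : (d:ℝ) < ((d:ℝ)+1) * y := by
        have hy' : (d:ℝ)/((d:ℝ)+1) < y := hy
        rw [div_lt_iff₀ (by positivity)] at hy'
        nlinarith
      rw [hyd]; push_cast; nlinarith
  have hev : ∀ᶠ y in nhds y₁, 0 < hh y :=
    (hhd y₁).continuousAt.eventually (eventually_gt_nhds hhy₁pos)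
  rw [Metric.eventually_nhds_iff] at hev
  obtain ⟨δ, hδ, hball⟩ := hev
  set l : ℝ := max (y₁ - δ/2) (((d:ℝ)/((d:ℝ)+1) + y₁)/2) with hldef
  have hllt : l < y₁ := max_lt (by linarith) (by linarith)
  have hlc₀ : (d:ℝ)/((d:ℝ)+1) < l :=
    lt_of_lt_of_le (by linarith : (d:ℝ)/((d:ℝ)+1) < ((d:ℝ)/((d:ℝ)+1) + y₁)/2) (le_max_right _ _)
  have hlpos : 0 < l := lt_trans hc₀pos hlc₀
  have hhl : 0 < hh l := by
    apply hball
    rw [Real.dist_eq, abs_lt]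
    constructor
    · have : y₁ - δ/2 ≤ l := le_max_left _ _
      linarith
    · linarith
  have hhU : ∀ y, l ≤ y → 0 < hh y := by
    intro y hy
    rcases eq_or_lt_of_le hy with rfl | hlt
    · exact hhl
    · exact lt_trans hhl (hhmono hlc₀.le (lt_trans hlc₀ hlt).le hlt)
  have hltQ : ∀ y, l ≤ y → y ^ d < auxQ d E y := by
    intro y hy
    have h1 := hhU y hy
    simp only [hhdef] at h1
    linarith
  have hqpos : ∀ y, l ≤ y → 0 < auxQ d E y := by
    intro y hy
    have h2 : 0 < y := lt_of_lt_of_le hlpos hy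
    exact lt_trans (pow_pos h2 d) (hltQ y hy)
  have hypos : ∀ y, l ≤ y → (0:ℝ) < y := fun y hy => lt_of_lt_of_le hlpos hy
  have hrpos : ∀ y, l ≤ y → 0 < auxR d E y := fun y hy =>
    auxR_pos_of d E y (hypos y hy) (hqpos y hy) (hltQ y hy)
  have hgpos : ∀ y, l ≤ y → 0 < auxG d E y := fun y hy => auxG_pos_of d E y (hrpos y hy)
  have hglt1 : ∀ y, l ≤ y → auxG d E y < 1 := fun y hy =>
    auxG_lt_one_of d E y (hypos y hy) (hqpos y hy) (hltQ y hy)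
  -- the time function T and its inverse Φ
  set T : ℝ → ℝ := fun y => t₁ + ∫ u in y₁..y, (auxG d E u)⁻¹ with hTdef
  have hgcont : ∀ y, l < y → ContinuousAt (fun u => (auxG d E u)⁻¹) y := by
    intro y hy
    have h1 : ContinuousAt (auxG d E) y :=
      (auxG_contDiffAt d E y (ne_of_gt (hqpos y hy.le)) (ne_of_gt (hrpos y hy.le))).continuousAt
    exact h1.inv₀ (ne_of_gt (hgpos y hy.le))
  have hgcontOn : ContinuousOn (fun u => (auxG d E u)⁻¹) (Ioi l) :=
    fun y hy => (hgcont y hy).continuousWithinAt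
  have hintg : ∀ y y' : ℝ, l < y → l < y' →
      IntervalIntegrable (fun u => (auxG d E u)⁻¹) MeasureTheory.volume y y' := by
    intro y y' hy hy'
    apply ContinuousOn.intervalIntegrable
    apply hgcontOn.mono
    intro u hu
    rw [Set.uIcc_eq_union] at hu
    rcases hu with h | h
    · exact lt_of_lt_of_le hy h.1
    · exact lt_of_lt_of_le hy' h.1
  have hly₁ : l < y₁ := hllt
  have hTd : ∀ y, l < y → HasDerivAt T ((auxG d E y)⁻¹) y := by
    intro y hy
    have h := intervalIntegral.integral_hasDerivAt_right (hintg y₁ y hly₁ hy)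
      (ContinuousOn.stronglyMeasurableAtFilter isOpen_Ioi hgcontOn y hy)
      (hgcont y hy)
    exact h.const_add t₁
  have hTy₁ : T y₁ = t₁ := by simp [hTdef]
  have hTmono : StrictMonoOn T (Ioi l) := by
    apply strictMonoOn_of_deriv_pos (convex_Ioi l)
    · exact fun y hy => (hTd y hy).continuousAt.continuousWithinAt
    · intro y hy
      rw [interior_Ioi] at hy
      rw [(hTd y hy).deriv]
      exact inv_pos.2 (hgpos y hy.le)
  have hgle1' : ∀ u, l ≤ u → 1 ≤ (auxG d E u)⁻¹ := by
    intro u hu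
    rw [← one_div, le_div_iff₀ (hgpos u hu)]
    linarith [hglt1 u hu]
  have hTexp : ∀ y y' : ℝ, l < y' → y' ≤ y → y - y' ≤ T y - T y' := by
    intro y y' hy' hle
    have hy : l < y := lt_of_lt_of_le hy' hle
    have h1 : T y - T y' = ∫ u in y'..y, (auxG d E u)⁻¹ := by
      simp only [hTdef, add_sub_add_left_eq_sub]
      rw [intervalIntegral.integral_interval_sub_left (hintg y₁ y hly₁ hy) (hintg y₁ y' hly₁ hy')]
    rw [h1]
    have h2 : y - y' = ∫ u in y'..y, (1:ℝ) := by simp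
    rw [h2]
    apply intervalIntegral.integral_mono_on hle intervalIntegrable_const (hintg y' y hy' hy)
    intro u hu
    exact hgle1' u (le_trans hy'.le hu.1)
  clear_value T
  set l' : ℝ := (l + y₁)/2 with hl'def
  have hl'1 : l < l' := by simp only [hl'def]; linarith
  have hl'2 : l' < y₁ := by simp only [hl'def]; linarith
  set t₁' : ℝ := T l' with ht₁'def
  have ht₁'lt : t₁' < t₁ := by
    rw [ht₁'def, ← hTy₁]
    exact hTmono (mem_Ioi.2 hl'1) (mem_Ioi.2 hly₁) hl'2
  clear_value t₁'
  have hsurj : ∀ t, t₁' ≤ t → ∃ y ∈ Icc l' (max y₁ (y₁ + t - t₁)), T y = t := by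
    intro t ht
    have hY1 : y₁ ≤ max y₁ (y₁ + t - t₁) := le_max_left _ _
    have hl'Y : l' ≤ max y₁ (y₁ + t - t₁) := le_trans hl'2.le hY1
    have hYl : l < max y₁ (y₁ + t - t₁) := lt_of_lt_of_le hly₁ hY1
    have hTY : t ≤ T (max y₁ (y₁ + t - t₁)) := by
      rcases le_total t t₁ with h | h
      · calc t ≤ t₁ := h
          _ = T y₁ := hTy₁.symm
          _ ≤ T (max y₁ (y₁ + t - t₁)) := by
              rcases eq_or_lt_of_le hY1 with he | hlt'
              · rw [← he]
              · exact (hTmono (mem_Ioi.2 hly₁) (mem_Ioi.2 hYl) hlt').le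
      · have hexp := hTexp (max y₁ (y₁ + t - t₁)) y₁ hly₁ hY1
        have h2 : y₁ + t - t₁ ≤ max y₁ (y₁ + t - t₁) := le_max_right _ _
        rw [hTy₁] at hexp
        linarith
    have hcont : ContinuousOn T (Icc l' (max y₁ (y₁ + t - t₁))) :=
      fun y hy => (hTd y (lt_of_lt_of_le hl'1 hy.1)).continuousAt.continuousWithinAt
    have hIVT := intermediate_value_Icc hl'Y hcont
    have hmem : t ∈ Icc (T l') (T (max y₁ (y₁ + t - t₁))) := ⟨by rw [← ht₁'def]; exact ht, hTY⟩
    obtain ⟨y, hy, hTy⟩ := hIVT hmem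
    exact ⟨y, hy, hTy⟩
  classical
  set Φ : ℝ → ℝ := fun t =>
    if h : ∃ y ∈ Icc l' (max y₁ (y₁ + t - t₁)), T y = t then h.choose else y₁ with hΦdef
  have hΦspec : ∀ t, t₁' ≤ t → T (Φ t) = t ∧ l' ≤ Φ t := by
    intro t ht
    have hex := hsurj t ht
    simp only [hΦdef]
    rw [dif_pos hex]
    obtain ⟨hy, hTy⟩ := hex.choose_spec
    exact ⟨hTy, hy.1⟩
  clear_value Φ
  have hΦgtl : ∀ t, t₁' ≤ t → l < Φ t := fun t ht => lt_of_lt_of_le hl'1 (hΦspec t ht).2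
  have hΦmono : ∀ s t, t₁' ≤ s → s ≤ t → Φ s ≤ Φ t := by
    intro s t hs hst
    by_contra hlt'
    push_neg at hlt'
    have h1 := (hΦspec s hs).1
    have h2 := (hΦspec t (le_trans hs hst)).1
    have h3 := hTmono (mem_Ioi.2 (hΦgtl t (le_trans hs hst))) (mem_Ioi.2 (hΦgtl s hs)) hlt'
    rw [h1, h2] at h3
    linarith
  have hΦy₁ : ∀ t, t₁ ≤ t → y₁ ≤ Φ t := by
    intro t ht
    have ht' : t₁' ≤ t := le_trans ht₁'lt.le ht
    by_contra h
    push_neg at h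
    have h3 := hTmono (mem_Ioi.2 (hΦgtl t ht')) (mem_Ioi.2 hly₁) h
    rw [(hΦspec t ht').1, hTy₁] at h3
    linarith
  have hΦlip : ∀ s t, t₁' ≤ s → s ≤ t → Φ t - Φ s ≤ t - s := by
    intro s t hs hst
    have h := hTexp (Φ t) (Φ s) (hΦgtl s hs) (hΦmono s t hs hst)
    rw [(hΦspec s hs).1, (hΦspec t (le_trans hs hst)).1] at h
    linarith
  have hΦcont : ∀ t, t₁' < t → ContinuousAt Φ t := by
    intro t ht
    rw [Metric.continuousAt_iff]
    intro ε hε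
    refine ⟨min (ε/2) ((t - t₁')/2), ?_, ?_⟩
    · apply lt_min <;> linarith
    intro s hs
    rw [Real.dist_eq] at hs ⊢
    have hs' := abs_lt.1 (lt_of_lt_of_le hs (min_le_right _ _))
    have hs'' := abs_lt.1 (lt_of_lt_of_le hs (min_le_left _ _))
    have hs1 : t₁' ≤ s := by linarith
    have habs : |Φ s - Φ t| ≤ |s - t| := by
      rcases le_total s t with h | h
      · rw [abs_of_nonpos (sub_nonpos.2 (hΦmono s t hs1 h)), abs_of_nonpos (sub_nonpos.2 h)]
        have := hΦlip s t hs1 h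
        linarith
      · rw [abs_of_nonneg (sub_nonneg.2 (hΦmono t s ht.le h)), abs_of_nonneg (sub_nonneg.2 h)]
        have := hΦlip t s ht.le h
        linarith
    calc |Φ s - Φ t| ≤ |s - t| := habs
      _ < ε := abs_lt.2 ⟨by linarith, by linarith⟩
  have hΦd : ∀ t, t₁' < t → HasDerivAt Φ (auxG d E (Φ t)) t := by
    intro t ht
    have hleftinv : ∀ᶠ s in nhds t, T (Φ s) = s := by
      filter_upwards [Ioi_mem_nhds ht] with s hs
      exact (hΦspec s (le_of_lt hs)).1
    have h := HasDerivAt.of_local_left_inverse (hΦcont t ht) (hTd (Φ t) (hΦgtl t ht.le))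
      (ne_of_gt (inv_pos.2 (hgpos _ (hΦgtl t ht.le).le))) hleftinv
    rw [inv_inv] at h
    exact h
  have hΦderiv : ∀ t, t₁' < t → deriv Φ t = auxG d E (Φ t) := fun t ht => (hΦd t ht).deriv
  have hΦd2 : ∀ t, t₁' < t →
      HasDerivAt (deriv Φ) (auxGd d E (Φ t) * auxG d E (Φ t)) t := by
    intro t ht
    have hcomp : HasDerivAt (fun s => auxG d E (Φ s)) (auxGd d E (Φ t) * auxG d E (Φ t)) t :=
      (auxG_deriv d E (Φ t) (ne_of_gt (hqpos _ (hΦgtl t ht.le).le))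
        (ne_of_gt (hrpos _ (hΦgtl t ht.le).le))).comp t (hΦd t ht)
    apply hcomp.congr_of_eventuallyEq
    filter_upwards [Ioi_mem_nhds ht] with s hs
    exact hΦderiv s hs
  have hΦC1 : ContDiffOn ℝ 1 Φ (Ioi t₁') := by
    rw [show (1:WithTop ℕ∞) = 0 + 1 by norm_num, contDiffOn_succ_iff_deriv_of_isOpen isOpen_Ioi]
    refine ⟨fun t ht => (hΦd t ht).differentiableAt.differentiableWithinAt, by simp, ?_⟩
    rw [contDiffOn_zero]
    intro t ht
    have h1 : ContinuousAt (fun s => auxG d E (Φ s)) t :=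
      ((auxG_contDiffAt d E (Φ t) (ne_of_gt (hqpos _ (hΦgtl t ht.le).le))
        (ne_of_gt (hrpos _ (hΦgtl t ht.le).le))).continuousAt).comp (hΦcont t ht)
    have h2 : ContinuousAt (deriv Φ) t := by
      apply h1.congr
      filter_upwards [Ioi_mem_nhds ht] with s hs
      exact (hΦderiv s hs).symm
    exact h2.continuousWithinAt
  have hΦC2 : ContDiffOn ℝ 2 Φ (Ioi t₁') := by
    rw [show (2:WithTop ℕ∞) = 1 + 1 by norm_num, contDiffOn_succ_iff_deriv_of_isOpen isOpen_Ioi]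
    refine ⟨fun t ht => (hΦd t ht).differentiableAt.differentiableWithinAt, by simp, ?_⟩
    have hgΦ : ContDiffOn ℝ 1 (fun s => auxG d E (Φ s)) (Ioi t₁') := by
      intro t ht
      exact ((auxG_contDiffAt d E (Φ t) (ne_of_gt (hqpos _ (hΦgtl t ht.le).le))
        (ne_of_gt (hrpos _ (hΦgtl t ht.le).le))).comp t
        (hΦC1.contDiffAt (Ioi_mem_nhds ht))).contDiffWithinAt
    exact hgΦ.congr (fun t ht => hΦderiv t ht)
  -- f equals Φ on [t₁, b)
  have hflgt : ∀ t ∈ Ico t₁ b, l < f t ∧ y₁ ≤ f t := by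
    intro t ht
    have h1 : y₁ ≤ f t := hmono_aux t₁ t ht₀t₁.le ht.1 ht.2
      (fun u hu => hge u ⟨le_trans ht₀t₁.le hu.1, lt_trans hu.2 ht.2⟩)
    exact ⟨lt_of_lt_of_le hllt h1, h1⟩
  have hfg : ∀ t ∈ Ico t₁ b, deriv f t = auxG d E (f t) := by
    intro t ht
    have htIco : t ∈ Ico t₀ b := ⟨le_trans ht₀t₁.le ht.1, ht.2⟩
    have hb0 := hV0 t htIco
    have h1v : 0 < 1 - deriv f t ^ 2 := by have := hsq01 t htIco; linarith
    have hq := hqpos (f t) (hflgt t ht).1.le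
    have hσ : Real.sqrt (1 - deriv f t ^ 2) = f t ^ d / auxQ d E (f t) := by
      rw [hb0]
      field_simp
    have hr : auxR d E (f t) = deriv f t ^ 2 := by
      simp only [auxR]
      rw [← hσ, Real.sq_sqrt h1v.le]
      ring
    show deriv f t = auxG d E (f t)
    simp only [auxG]
    rw [hr, Real.sqrt_sq (hge t htIco)]
  have hfΦ : ∀ t ∈ Ico t₁ b, f t = Φ t := by
    intro t ht
    have hTft : T (f t) = t := by
      rcases eq_or_lt_of_le ht.1 with he | hlt'
      · rw [← he, ← hy₁def, hTy₁, he]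
      · have hcont : ContinuousOn (fun s => T (f s) - s) (Icc t₁ t) := by
          intro s hs
          have hsIco : s ∈ Ico t₁ b := ⟨hs.1, lt_of_le_of_lt hs.2 ht.2⟩
          have hsI : s ∈ I := ⟨lt_trans hat₀ (lt_of_lt_of_le ht₀t₁ hs.1), hsIco.2⟩
          exact (((hTd (f s) (hflgt s hsIco).1).comp s (hfd s hsI)).sub
            (hasDerivAt_id s)).continuousAt.continuousWithinAt
        have hderiv0 : ∀ s ∈ Ico t₁ t, HasDerivWithinAt (fun s => T (f s) - s) 0 (Ici s) s := by
          intro s hs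
          have hsIco : s ∈ Ico t₁ b := ⟨hs.1, lt_trans hs.2 ht.2⟩
          have hsI : s ∈ I := ⟨lt_trans hat₀ (lt_of_lt_of_le ht₀t₁ hs.1), hsIco.2⟩
          have hD : HasDerivAt (fun s => T (f s) - s)
              ((auxG d E (f s))⁻¹ * deriv f s - 1) s :=
            ((hTd (f s) (hflgt s hsIco).1).comp s (hfd s hsI)).sub (hasDerivAt_id s)
          have hz : (auxG d E (f s))⁻¹ * deriv f s - 1 = 0 := by
            rw [hfg s hsIco]
            field_simp [ne_of_gt (hgpos (f s) (hflgt s hsIco).1.le)]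
            simp
          rw [hz] at hD
          exact hD.hasDerivWithinAt
        have hconst := constant_of_has_deriv_right_zero hcont hderiv0 t
          (right_mem_Icc.2 ht.1)
        have h0 : T (f t₁) - t₁ = 0 := by rw [← hy₁def, hTy₁]; ring
        rw [h0] at hconst
        linarith [hconst]
    have ht₁'le : t₁' ≤ t := le_trans ht₁'lt.le ht.1
    have h2 := (hΦspec t ht₁'le).1
    exact hTmono.injOn (mem_Ioi.2 (hflgt t ht).1) (mem_Ioi.2 (hΦgtl t ht₁'le))
      (hTft.trans h2.symm)
  -- assemble F
  set F : ℝ → ℝ := fun t => if t < c then f t else Φ t with hFdef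
  have hFf : ∀ t ∈ I, F t = f t := by
    intro t htI
    by_cases h : t < c
    · simp only [hFdef, if_pos h]
    · push_neg at h
      simp only [hFdef, if_neg (not_lt.2 h)]
      exact (hfΦ t ⟨le_trans ht₁c.le h, htI.2⟩).symm
  have hFff : ∀ t, t₁ < t → F t = Φ t := by
    intro t htgt
    by_cases h : t < c
    · simp only [hFdef, if_pos h]
      exact hfΦ t ⟨htgt.le, lt_trans h hcb⟩
    · simp only [hFdef, if_neg h]
  clear_value F
  have hFev_f : ∀ t ∈ I, F =ᶠ[nhds t] f := fun t htI =>
    eventually_of_mem (hIo.mem_nhds htI) hFf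
  have hFev_Φ : ∀ t, t₁ < t → F =ᶠ[nhds t] Φ := fun t htgt =>
    eventually_of_mem (Ioi_mem_nhds htgt) (fun s hs => hFff s hs)
  have hderivF_f : ∀ t ∈ I, deriv F t = deriv f t := fun t htI => (hFev_f t htI).deriv_eq
  have hderiv2F_f : ∀ t ∈ I, deriv (deriv F) t = deriv (deriv f) t := by
    intro t htI
    have h : deriv F =ᶠ[nhds t] deriv f :=
      eventually_of_mem (hIo.mem_nhds htI) (fun s hs => (hFev_f s hs).deriv_eq)
    exact h.deriv_eq
  have hderivF_Φ : ∀ t, t₁ < t → deriv F t = deriv Φ t := fun t ht => (hFev_Φ t ht).deriv_eq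
  have hderiv2F_Φ : ∀ t, t₁ < t → deriv (deriv F) t = deriv (deriv Φ) t := by
    intro t ht
    have h : deriv F =ᶠ[nhds t] deriv Φ :=
      eventually_of_mem (Ioi_mem_nhds ht) (fun s hs => (hFev_Φ s hs).deriv_eq)
    exact h.deriv_eq
  refine ⟨F, ?_, ?_, ?_, ?_, ?_, ?_⟩
  · intro t ht
    exact hFf t ⟨lt_of_lt_of_le hat₀ ht.1, ht.2⟩
  · intro t ht
    by_cases hb' : t < b
    · have htI : t ∈ I := ⟨lt_of_lt_of_le hat₀ ht, hb'⟩
      exact ((hf.contDiffAt (hIo.mem_nhds htI)).congr_of_eventuallyEq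
        (hFev_f t htI)).contDiffWithinAt
    · push_neg at hb'
      have htgt : t₁ < t := lt_of_lt_of_le ht₁b hb'
      have h1 : ContDiffAt ℝ 2 Φ t := hΦC2.contDiffAt (Ioi_mem_nhds (lt_trans ht₁'lt htgt))
      exact (h1.congr_of_eventuallyEq (hFev_Φ t htgt)).contDiffWithinAt
  · intro t ht
    by_cases hb' : t < b
    · have htI : t ∈ I := ⟨lt_of_lt_of_le hat₀ ht, hb'⟩
      rw [hFf t htI]
      exact hpos t htI
    · push_neg at hb'
      have htgt : t₁ < t := lt_of_lt_of_le ht₁b hb'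
      rw [hFff t htgt]
      have h2 := (hΦspec t (le_of_lt (lt_trans ht₁'lt htgt))).2
      have := hl'1
      linarith [hlpos]
  · intro t ht
    by_cases hb' : t < b
    · have htI : t ∈ I := ⟨lt_of_lt_of_le hat₀ ht, hb'⟩
      rw [hFf t htI, hderivF_f t htI, hderiv2F_f t htI]
      exact hode t htI
    · push_neg at hb'
      have htgt : t₁ < t := lt_of_lt_of_le ht₁b hb'
      have ht' : t₁' < t := lt_trans ht₁'lt htgt
      rw [hFff t htgt, hderivF_Φ t htgt, hderiv2F_Φ t htgt, hΦderiv t ht',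
        (hΦd2 t ht').deriv]
      have hy := hΦgtl t ht'.le
      exact aux_ode d hd E (Φ t) (hypos _ hy.le) (hqpos _ hy.le) (hrpos _ hy.le)
  · intro t ht
    by_cases hb' : t < b
    · have htI : t ∈ I := ⟨lt_of_lt_of_le hat₀ ht, hb'⟩
      rw [hderivF_f t htI]
      exact ⟨hge t ⟨ht, hb'⟩, hlt1 t ⟨ht, hb'⟩⟩
    · push_neg at hb'
      have htgt : t₁ < t := lt_of_lt_of_le ht₁b hb'
      have ht' : t₁' < t := lt_trans ht₁'lt htgt
      rw [hderivF_Φ t htgt, hΦderiv t ht']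
      have hy := (hΦgtl t ht'.le).le
      exact ⟨(hgpos _ hy).le, hglt1 _ hy⟩
  · rw [tendsto_atTop]
    intro M
    have hYl : l < max y₁ M := lt_of_lt_of_le hly₁ (le_max_left _ _)
    filter_upwards [eventually_ge_atTop (max c (T (max y₁ M)))] with t htt
    have htc : c ≤ t := le_trans (le_max_left _ _) htt
    have htY : T (max y₁ M) ≤ t := le_trans (le_max_right _ _) htt
    have htgt : t₁ < t := lt_of_lt_of_le ht₁c htc
    have ht' : t₁' ≤ t := (lt_trans ht₁'lt htgt).le
    have hYle : max y₁ M ≤ Φ t := by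
      by_contra hcon
      push_neg at hcon
      have h3 := hTmono (mem_Ioi.2 (hΦgtl t ht')) (mem_Ioi.2 hYl) hcon
      rw [(hΦspec t ht').1] at h3
      linarith
    rw [hFff t htgt]
    exact le_trans (le_max_right y₁ M) hYle
end

section
/- If f satisfies the spherically symmetric CMC ODE, then the quantities γ = f'/√(1-(f')²) and η = f·√(1-(f')²) satisfy η·γ' = (d+1)·η − d and η' = f'·√(1-(f')²)·(d+1)·(1 − η), wherever |f'| < 1. -/
/-- The auxiliary quantities `γ = f'/√(1-(f')²)` and `η = f·√(1-(f')²)` satisfy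
`η·γ' = (d+1)·η − d` and `η' = f'·√(1-(f')²)·(d+1)·(1 − η)`. -/
theorem stmt4 (d : ℕ) (hd : 1 ≤ d) (a b : ℝ) (f : ℝ → ℝ)
    (hf : ContDiffOn ℝ 2 f (Set.Ioo a b))
    (hpos : ∀ t ∈ Set.Ioo a b, 0 < f t)
    (hder : ∀ t ∈ Set.Ioo a b, |deriv f t| < 1)
    (hode : ∀ t ∈ Set.Ioo a b,
      f t * deriv (deriv f) t + (d : ℝ) * (1 - (deriv f t) ^ 2)
        = ((d : ℝ) + 1) * f t * (1 - (deriv f t) ^ 2) ^ ((3 : ℝ) / 2))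
    (γ η : ℝ → ℝ)
    (hγ : ∀ t, γ t = deriv f t / Real.sqrt (1 - (deriv f t) ^ 2))
    (hη : ∀ t, η t = f t * Real.sqrt (1 - (deriv f t) ^ 2)) :
    ∀ t ∈ Set.Ioo a b,
      η t * deriv γ t = ((d : ℝ) + 1) * η t - (d : ℝ) ∧
      deriv η t = deriv f t * Real.sqrt (1 - (deriv f t) ^ 2) * ((d : ℝ) + 1) * (1 - η t) := by
  intro t ht
  have hopen : IsOpen (Set.Ioo a b) := isOpen_Ioo
  set c : ℝ := deriv f t with hc
  set k : ℝ := deriv (deriv f) t with hk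
  have hc2 : c ^ 2 < 1 := by
    have := hder t ht
    have h1 := abs_lt.mp this
    nlinarith [h1.1, h1.2]
  have hx0 : (0:ℝ) < 1 - c ^ 2 := by linarith
  set s : ℝ := Real.sqrt (1 - c ^ 2) with hsdef
  have hspos : 0 < s := Real.sqrt_pos.mpr hx0
  have hs2 : s ^ 2 = 1 - c ^ 2 := Real.sq_sqrt hx0.le
  -- derivative of f at t
  have hfd : HasDerivAt f c t := by
    have : DifferentiableAt ℝ f t :=
      ((hf.contDiffAt (hopen.mem_nhds ht)).of_le one_le_two).differentiableAt one_ne_zero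
    simpa [hc] using this.hasDerivAt
  -- derivative of deriv f at t
  have hdf : HasDerivAt (deriv f) k t := by
    have h1 : ContDiffOn ℝ 1 (deriv f) (Set.Ioo a b) :=
      hf.deriv_of_isOpen hopen (by norm_num)
    have : DifferentiableAt ℝ (deriv f) t :=
      (h1.contDiffAt (hopen.mem_nhds ht)).differentiableAt one_ne_zero
    simpa [hk] using this.hasDerivAt
  -- derivative of 1 - (deriv f)^2
  have hinner : HasDerivAt (fun x => 1 - (deriv f x) ^ 2) (-(2 * c * k)) t := by
    have := (hdf.fun_pow 2)
    have h2 : HasDerivAt (fun x => (deriv f x) ^ 2) (2 * c * k) t := by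
      simpa [hc, mul_comm, mul_assoc, mul_left_comm] using this
    simpa using (hasDerivAt_const t (1:ℝ)).fun_sub h2
  -- derivative of sqrt (1 - (deriv f)^2)
  have hsq : HasDerivAt (fun x => Real.sqrt (1 - (deriv f x) ^ 2)) (-(c * k) / s) t := by
    have := (Real.hasDerivAt_sqrt (x := 1 - c ^ 2) (ne_of_gt hx0)).comp t hinner
    convert this using 1 <;> try rfl
    field_simp
    ring
  -- derivative of γ
  have hγfun : γ = fun x => deriv f x / Real.sqrt (1 - (deriv f x) ^ 2) := funext hγ
  have hηfun : η = fun x => f x * Real.sqrt (1 - (deriv f x) ^ 2) := funext hη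
  have hγ' : HasDerivAt γ (k / s ^ 3) t := by
    rw [hγfun]
    have hdiv := hdf.div hsq (ne_of_gt hspos)
    convert hdiv using 1 <;> try rfl
    rw [← hsdef]
    field_simp
    linear_combination (-k) * hs2
  have hη' : HasDerivAt η (c * s + f t * (-(c * k) / s)) t := by
    rw [hηfun]
    exact hfd.mul hsq
  have hdγ : deriv γ t = k / s ^ 3 := hγ'.deriv
  have hdη : deriv η t = c * s + f t * (-(c * k) / s) := hη'.deriv
  -- rewrite the ODE
  have h32 : (1 - c ^ 2) ^ ((3:ℝ)/2) = s ^ 3 := by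
    rw [hsdef, Real.sqrt_eq_rpow, ← Real.rpow_natCast ((1 - c^2) ^ ((1:ℝ)/2)) 3,
      ← Real.rpow_mul hx0.le]
    norm_num
  have hodet : f t * k + (d : ℝ) * (1 - c ^ 2) = ((d : ℝ) + 1) * f t * s ^ 3 := by
    have := hode t ht
    rw [← hc, ← hk, h32] at this
    exact this
  have hodet' : f t * k = ((d : ℝ) + 1) * f t * s ^ 3 - (d : ℝ) * s ^ 2 := by
    rw [hs2]; linarith
  constructor
  · rw [hη t, ← hc, ← hsdef, hdγ]
    field_simp
    linear_combination hodet'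
  · rw [hdη, hη t, ← hc, ← hsdef]
    field_simp
    linear_combination (-c) * hodet'
end

section
/- Let f be a positive C² solution of the spherically symmetric CMC ODE on (t₀, ∞) with f' never vanishing and |f'| < 1 throughout. If lim_{t→∞} f(t) exists and is finite, then lim_{t→∞} f(t) = d/(d+1). -/
open Set Filter Real


/-- If a positive solution of the spherically symmetric CMC ODE on `(t₀, ∞)` has
nonvanishing derivative and a finite limit at infinity, then that limit is `d/(d+1)`. -/
theorem stmt6 (d : ℕ) (hd : 1 ≤ d) (t₀ : ℝ) (f : ℝ → ℝ) (L : ℝ)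
    (hf : ContDiffOn ℝ 2 f (Set.Ioi t₀))
    (hpos : ∀ t ∈ Set.Ioi t₀, 0 < f t)
    (hder : ∀ t ∈ Set.Ioi t₀, |deriv f t| < 1)
    (hder0 : ∀ t ∈ Set.Ioi t₀, deriv f t ≠ 0)
    (hode : ∀ t ∈ Set.Ioi t₀,
      f t * deriv (deriv f) t + (d : ℝ) * (1 - (deriv f t) ^ 2)
        = ((d : ℝ) + 1) * f t * (1 - (deriv f t) ^ 2) ^ ((3 : ℝ) / 2))
    (hlim : Filter.Tendsto f Filter.atTop (nhds L)) :
    L = (d : ℝ) / ((d : ℝ) + 1) := by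
  have hopen : IsOpen (Set.Ioi t₀) := isOpen_Ioi
  set u := deriv f with hu
  set v := deriv (deriv f) with hvdef
  have hf1 : ∀ t ∈ Set.Ioi t₀, HasDerivAt f (u t) t := fun t ht =>
    ((hf.contDiffAt (hopen.mem_nhds ht)).differentiableAt (by norm_num)).hasDerivAt
  have hucd : ContDiffOn ℝ 1 u (Set.Ioi t₀) :=
    hf.deriv_of_isOpen hopen (by norm_num)
  have hu1 : ∀ t ∈ Set.Ioi t₀, HasDerivAt u (v t) t := fun t ht =>
    ((hucd.contDiffAt (hopen.mem_nhds ht)).differentiableAt (by norm_num)).hasDerivAt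
  set q : ℝ → ℝ := fun t => 1 - u t ^ 2 with hqdef
  set s : ℝ → ℝ := fun t => Real.sqrt (q t) with hsdef
  set E : ℝ → ℝ := fun t => f t ^ d * (s t)⁻¹ - f t ^ (d + 1) with hEdef
  have hq : ∀ t ∈ Set.Ioi t₀, 0 < q t := by
    intro t ht
    have := hder t ht
    have : u t ^ 2 < 1 := by
      rw [sq_lt_one_iff_abs_lt_one]; exact this
    simp only [hqdef]; linarith
  have hspos : ∀ t ∈ Set.Ioi t₀, 0 < s t := fun t ht => Real.sqrt_pos.2 (hq t ht)
  have hsle : ∀ t ∈ Set.Ioi t₀, s t ≤ 1 := by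
    intro t ht
    have : q t ≤ 1 := by simp only [hqdef]; nlinarith [sq_nonneg (u t)]
    calc s t ≤ Real.sqrt 1 := Real.sqrt_le_sqrt this
      _ = 1 := Real.sqrt_one
  have hs2 : ∀ t ∈ Set.Ioi t₀, s t ^ 2 = q t := fun t ht => Real.sq_sqrt (hq t ht).le
  -- rewrite the rpow in the ODE
  have hode' : ∀ t ∈ Set.Ioi t₀,
      f t * v t + (d : ℝ) * s t ^ 2 = ((d : ℝ) + 1) * f t * s t ^ 3 := by
    intro t ht
    have h1 : (q t) ^ ((3 : ℝ) / 2) = s t ^ 3 := by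
      rw [hsdef]
      rw [show ((3 : ℝ) / 2) = (1 / 2 : ℝ) * (3 : ℕ) by norm_num,
        Real.rpow_mul (hq t ht).le, Real.rpow_natCast, ← Real.sqrt_eq_rpow]
    have h2 := hode t ht
    rw [show (1 - deriv f t ^ 2) = q t from rfl] at h2
    rw [h1] at h2
    rw [hs2 t ht]
    linarith
  -- E has zero derivative on Ioi t₀
  have hE0 : ∀ t ∈ Set.Ioi t₀, HasDerivAt E 0 t := by
    intro t ht
    have hqd : HasDerivAt q (-(2 * u t ^ 1 * v t)) t := ((hu1 t ht).pow 2).const_sub 1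
    have hsd : HasDerivAt s (-(2 * u t ^ 1 * v t) / (2 * s t)) t :=
      (hqd.sqrt (hq t ht).ne')
    have hgd : HasDerivAt (fun t => (s t)⁻¹)
        (-(-(2 * u t ^ 1 * v t) / (2 * s t)) / s t ^ 2) t :=
      hsd.inv (hspos t ht).ne'
    have hfd : HasDerivAt (fun t => f t ^ d) ((d : ℝ) * f t ^ (d - 1) * u t) t :=
      (hf1 t ht).pow d
    have hfd1 : HasDerivAt (fun t => f t ^ (d + 1)) ((((d : ℕ) + 1 : ℕ) : ℝ) * f t ^ d * u t) t := by
      have h := (hf1 t ht).pow (d + 1)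
      simp only [Nat.add_sub_cancel] at h
      exact h
    have hED : HasDerivAt E
        (((d : ℝ) * f t ^ (d - 1) * u t) * (s t)⁻¹ +
          f t ^ d * (-(-(2 * u t ^ 1 * v t) / (2 * s t)) / s t ^ 2) -
          ((((d : ℕ) + 1 : ℕ) : ℝ) * f t ^ d * u t)) t :=
      (hfd.mul hgd).sub hfd1
    have hsne : s t ≠ 0 := (hspos t ht).ne'
    have hfne : f t ≠ 0 := (hpos t ht).ne'
    have hfd' : f t ^ (d - 1) * f t = f t ^ d := by
      rw [← pow_succ, Nat.sub_add_cancel hd]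
    refine hED.congr_deriv ?_
    rw [show f t ^ d = f t ^ (d - 1) * f t from hfd'.symm]
    have key := hode' t ht
    push_cast
    field_simp
    linear_combination (f t ^ (d - 1) * u t) * key
  -- E is constant on Ioi t₀
  have hEdiff : ∀ t ∈ Set.Ioi t₀, DifferentiableAt ℝ E t := fun t ht =>
    (hE0 t ht).differentiableAt
  have hEconst : ∀ x ∈ Set.Ioi t₀, ∀ y ∈ Set.Ioi t₀, E x = E y := by
    have key : ∀ x y, x ∈ Set.Ioi t₀ → y ∈ Set.Ioi t₀ → x < y → E x = E y := by
      intro x y hx hy hxy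
      have hc : ContinuousOn E (Set.Icc x y) := fun t ht =>
        ((hEdiff t (lt_of_lt_of_le hx ht.1)).continuousAt).continuousWithinAt
      have hdo : DifferentiableOn ℝ E (Set.Ioo x y) := fun t ht =>
        (hEdiff t (hx.trans ht.1)).differentiableWithinAt
      obtain ⟨c, hc1, hc2⟩ := exists_deriv_eq_slope E hxy hc hdo
      have hzero : deriv E c = 0 := (hE0 c (hx.trans hc1.1)).deriv
      rw [hzero, eq_comm, div_eq_zero_iff] at hc2
      rcases hc2 with h | h
      · linarith [sub_eq_zero.mp h]
      · exact absurd h (sub_ne_zero.2 (ne_of_gt hxy))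
    intro x hx y hy
    rcases lt_trichotomy x y with h | h | h
    · exact key x y hx hy h
    · rw [h]
    · exact (key y x hy hx h).symm
  have ht1 : t₀ + 1 ∈ Set.Ioi t₀ := by simp
  set e : ℝ := E (t₀ + 1) with hedef
  have hEe : ∀ t ∈ Set.Ioi t₀, E t = e := fun t ht => hEconst t ht _ ht1
  have hginv : ∀ t ∈ Set.Ioi t₀, (s t)⁻¹ = (e + f t ^ (d + 1)) / f t ^ d := by
    intro t ht
    have h1 := hEe t ht
    have hfne : f t ≠ 0 := (hpos t ht).ne'
    rw [hEdef] at h1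
    field_simp at h1 ⊢
    linarith
  -- the sequence cₙ from the mean value theorem
  set a : ℕ → ℝ := fun n => max t₀ 0 + 1 + n with hadef
  have haIoi : ∀ n : ℕ, a n ∈ Set.Ioi t₀ := by
    intro n
    have : t₀ ≤ max t₀ 0 := le_max_left _ _
    have : (0:ℝ) ≤ n := Nat.cast_nonneg n
    simp only [hadef, Set.mem_Ioi]
    have := le_max_left t₀ 0
    linarith
  have hmvt : ∀ n : ℕ, ∃ c ∈ Set.Ioo (a n) (a n + 1),
      deriv f c = (f (a n + 1) - f (a n)) / (a n + 1 - a n) := by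
    intro n
    have h1 : a n < a n + 1 := lt_add_one _
    have hc : ContinuousOn f (Set.Icc (a n) (a n + 1)) := fun t ht =>
      ((hf1 t (lt_of_lt_of_le (haIoi n) ht.1)).differentiableAt.continuousAt).continuousWithinAt
    have hdo : DifferentiableOn ℝ f (Set.Ioo (a n) (a n + 1)) := fun t ht =>
      (hf1 t ((haIoi n).trans ht.1)).differentiableAt.differentiableWithinAt
    exact exists_deriv_eq_slope f h1 hc hdo
  choose c hcmem hcval using hmvt
  have hcIoi : ∀ n : ℕ, c n ∈ Set.Ioi t₀ := fun n => (haIoi n).trans (hcmem n).1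
  have hcn_top : Filter.Tendsto c Filter.atTop Filter.atTop := by
    apply Filter.tendsto_atTop_mono (fun n : ℕ => le_of_lt ?_) tendsto_natCast_atTop_atTop
    have h1 : (n:ℝ) < a n := by
      simp only [hadef]
      have := le_max_right t₀ 0
      linarith
    exact h1.trans (hcmem n).1
  have hucn : Filter.Tendsto (fun n => u (c n)) Filter.atTop (nhds 0) := by
    have h1 : Filter.Tendsto (fun n : ℕ => a n) Filter.atTop Filter.atTop := by
      apply Filter.tendsto_atTop_mono (fun n : ℕ => ?_) tendsto_natCast_atTop_atTop
      simp only [hadef]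
      have := le_max_right t₀ 0
      linarith
    have h2 : Filter.Tendsto (fun n : ℕ => a n + 1) Filter.atTop Filter.atTop :=
      Filter.tendsto_atTop_add_const_right _ 1 h1
    have h3 : Filter.Tendsto (fun n : ℕ => f (a n + 1) - f (a n)) Filter.atTop (nhds (L - L)) :=
      (hlim.comp h2).sub (hlim.comp h1)
    rw [sub_self] at h3
    apply h3.congr
    intro n
    have h := hcval n
    rw [show a n + 1 - a n = (1:ℝ) by ring, div_one] at h
    exact h.symm
  have hfcn : Filter.Tendsto (fun n => f (c n)) Filter.atTop (nhds L) := hlim.comp hcn_top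
  have hscn : Filter.Tendsto (fun n => s (c n)) Filter.atTop (nhds 1) := by
    have h1 : Filter.Tendsto (fun n => q (c n)) Filter.atTop (nhds 1) := by
      have := (tendsto_const_nhds (x := (1:ℝ)) (f := Filter.atTop (α := ℕ))).sub (hucn.pow 2)
      simpa using this
    have h2 := (Real.continuous_sqrt.tendsto 1).comp h1
    rw [Real.sqrt_one] at h2
    exact h2
  have hetends : Filter.Tendsto (fun n => E (c n)) Filter.atTop
      (nhds (L ^ d * 1⁻¹ - L ^ (d + 1))) := by
    exact ((hfcn.pow d).mul (hscn.inv₀ one_ne_zero)).sub (hfcn.pow (d + 1))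
  have heval : e = L ^ d - L ^ (d + 1) := by
    have h1 : Filter.Tendsto (fun n : ℕ => e) Filter.atTop (nhds e) := tendsto_const_nhds
    have h2 : (fun n => E (c n)) = fun n : ℕ => e := funext fun n => hEe _ (hcIoi n)
    rw [h2] at hetends
    have := tendsto_nhds_unique h1 hetends
    rw [this]; ring
  -- L is positive
  have hL0 : 0 ≤ L := by
    apply ge_of_tendsto hlim
    filter_upwards [Filter.eventually_gt_atTop t₀] with t ht
    exact (hpos t ht).le
  have hL : 0 < L := by
    rcases hL0.lt_or_eq with h | h
    · exact h
    · exfalso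
      have he0 : e = 0 := by
        rw [heval, ← h, zero_pow (by omega), zero_pow (by omega), sub_zero]
      have hge : ∀ t ∈ Set.Ioi t₀, (1:ℝ) ≤ f t := by
        intro t ht
        have h1 := hginv t ht
        rw [he0, zero_add] at h1
        have hfne : f t ≠ 0 := (hpos t ht).ne'
        have h2 : (s t)⁻¹ = f t := by
          rw [h1, pow_succ]
          field_simp
        have h3 : (1:ℝ) ≤ (s t)⁻¹ := (one_le_inv₀ (hspos t ht)).2 (hsle t ht)
        rw [h2] at h3; exact h3
      have : (1:ℝ) ≤ L := by
        apply ge_of_tendsto hlim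
        filter_upwards [Filter.eventually_gt_atTop t₀] with t ht
        exact hge t ht
      linarith [h]
  -- deriv f tends to 0 at infinity
  have hsinv1 : Filter.Tendsto (fun t => (s t)⁻¹) Filter.atTop (nhds 1) := by
    have h1 : Filter.Tendsto (fun t => (e + f t ^ (d + 1)) / f t ^ d) Filter.atTop
        (nhds ((e + L ^ (d + 1)) / L ^ d)) :=
      (tendsto_const_nhds.add (hlim.pow (d + 1))).div (hlim.pow d)
        (pow_ne_zero d hL.ne')
    have h2 : (e + L ^ (d + 1)) / L ^ d = 1 := by
      rw [heval]
      field_simp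
      ring
    rw [h2] at h1
    apply h1.congr'
    filter_upwards [Filter.eventually_gt_atTop t₀] with t ht
    exact (hginv t ht).symm
  have hs1 : Filter.Tendsto s Filter.atTop (nhds 1) := by
    have h1 := hsinv1.inv₀ one_ne_zero
    rw [inv_one] at h1
    apply h1.congr'
    filter_upwards [Filter.eventually_gt_atTop t₀] with t ht
    rw [inv_inv]
  have hu0 : Filter.Tendsto u Filter.atTop (nhds 0) := by
    have h1 : Filter.Tendsto (fun t => u t ^ 2) Filter.atTop (nhds 0) := by
      have h2 := (tendsto_const_nhds (x := (1:ℝ)) (f := Filter.atTop (α := ℝ))).sub (hs1.pow 2)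
      norm_num at h2
      apply h2.congr'
      filter_upwards [Filter.eventually_gt_atTop t₀] with t ht
      have := hs2 t ht
      simp only [hqdef] at this
      linarith
    rw [tendsto_zero_iff_abs_tendsto_zero]
    have h3 := (Real.continuous_sqrt.tendsto 0).comp h1
    rw [Real.sqrt_zero] at h3
    apply h3.congr
    intro t
    exact Real.sqrt_sq_eq_abs (u t)
  -- deriv (deriv f) tends to (d+1) - d/L
  have hv : Filter.Tendsto v Filter.atTop (nhds (((d:ℝ) + 1) - (d:ℝ) / L)) := by
    have h1 : Filter.Tendsto (fun t => ((d:ℝ) + 1) * s t ^ 3 - (d:ℝ) * s t ^ 2 / f t)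
        Filter.atTop (nhds (((d:ℝ) + 1) * 1 ^ 3 - (d:ℝ) * 1 ^ 2 / L)) :=
      (tendsto_const_nhds.mul (hs1.pow 3)).sub
        ((tendsto_const_nhds.mul (hs1.pow 2)).div hlim hL.ne')
    simp only [one_pow, mul_one] at h1
    apply h1.congr'
    filter_upwards [Filter.eventually_gt_atTop t₀] with t ht
    have h2 := hode' t ht
    have hfne : f t ≠ 0 := (hpos t ht).ne'
    field_simp
    linarith
  -- the limit of v must be 0
  have hC : ((d:ℝ) + 1) - (d:ℝ) / L = 0 := by
    by_contra hC
    set C : ℝ := ((d:ℝ) + 1) - (d:ℝ) / L with hCdef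
    have hCpos : 0 < |C| := abs_pos.2 hC
    have h1 : ∀ᶠ t in Filter.atTop, |C| / 2 < |v t| := by
      filter_upwards [hv.eventually (Metric.ball_mem_nhds C (by positivity : 0 < |C| / 2))]
        with t ht
      rw [Real.dist_eq] at ht
      have := abs_sub_abs_le_abs_sub (v t) C
      have h2 := abs_sub_abs_le_abs_sub C (v t)
      rw [abs_sub_comm C (v t)] at h2
      linarith
    have h2 : ∀ᶠ t in Filter.atTop, |u t| < |C| / 8 := by
      filter_upwards [hu0.eventually (Metric.ball_mem_nhds 0 (by positivity : 0 < |C| / 8))]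
        with t ht
      rw [Real.dist_eq, sub_zero] at ht
      exact ht
    obtain ⟨T, hT⟩ := ((h1.and h2).and (Filter.eventually_gt_atTop t₀)).exists_forall_of_atTop
    have hT0 : t₀ < T := (hT T le_rfl).2
    have hmvt2 : ∃ ξ ∈ Set.Ioo T (T + 1), deriv u ξ = (u (T + 1) - u T) / (T + 1 - T) := by
      have h3 : T < T + 1 := lt_add_one _
      have hc : ContinuousOn u (Set.Icc T (T + 1)) := fun t ht =>
        ((hu1 t (lt_of_lt_of_le hT0 ht.1)).differentiableAt.continuousAt).continuousWithinAt
      have hdo : DifferentiableOn ℝ u (Set.Ioo T (T + 1)) := fun t ht =>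
        (hu1 t (hT0.trans ht.1)).differentiableAt.differentiableWithinAt
      exact exists_deriv_eq_slope u h3 hc hdo
    obtain ⟨ξ, hξ1, hξ2⟩ := hmvt2
    have hξT : T ≤ ξ := hξ1.1.le
    have hd1 : deriv u ξ = v ξ := rfl
    rw [hd1] at hξ2
    have hvξ : |C| / 2 < |v ξ| := (hT ξ hξT).1.1
    have huT : |u T| < |C| / 8 := (hT T le_rfl).1.2
    have huT1 : |u (T + 1)| < |C| / 8 := (hT (T + 1) (by linarith)).1.2
    rw [hξ2] at hvξ
    have : |u (T + 1) - u T| ≤ |u (T + 1)| + |u T| := abs_sub _ _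
    have h4 : T + 1 - T = 1 := by ring
    rw [h4, div_one] at hvξ
    linarith
  -- conclude
  have hdL : (d:ℝ) = ((d:ℝ) + 1) * L := by
    field_simp [hL.ne'] at hC
    linarith
  rw [eq_div_iff (by positivity : ((d:ℝ) + 1) ≠ 0)]
  linarith
end

section
/- Let f₁ and f₂ be two distinct C² positive solutions of the spherically symmetric CMC ODE with |f₁'|, |f₂'| < 1 on a common interval. Then the function (f₂ − f₁)² has at most one critical point on that interval, and any critical point is a strict local minimum. -/
open Set Filter Topology

noncomputable def odeV (d : ℝ) : ℝ × ℝ → ℝ × ℝ :=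
  fun u => (u.2, (d + 1) * (1 - u.2 ^ 2) ^ ((3:ℝ)/2) - d * (1 - u.2 ^ 2) / u.1)

lemma odeV_contDiffAt (d : ℝ) {x : ℝ × ℝ} (h1 : x.1 ≠ 0) (h2 : (1 : ℝ) - x.2 ^ 2 ≠ 0) :
    ContDiffAt ℝ 1 (odeV d) x := by
  apply ContDiffAt.prodMk
  · exact contDiffAt_snd
  · have hq : ContDiffAt ℝ 1 (fun u : ℝ × ℝ => 1 - u.2 ^ 2) x :=
      contDiffAt_const.sub (contDiffAt_snd.pow 2)
    exact ((contDiffAt_const.mul (hq.rpow_const_of_ne h2)).sub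
      ((contDiffAt_const.mul hq).div contDiffAt_fst h1))

lemma sol_hasDerivAt {a b : ℝ} {f : ℝ → ℝ} (hf : ContDiffOn ℝ 2 f (Ioo a b))
    {t : ℝ} (ht : t ∈ Ioo a b) :
    HasDerivAt f (deriv f t) t ∧ HasDerivAt (deriv f) (deriv (deriv f) t) t := by
  have hmem : Ioo a b ∈ 𝓝 t := isOpen_Ioo.mem_nhds ht
  constructor
  · exact ((hf.differentiableOn (by norm_num)).differentiableAt hmem).hasDerivAt
  · have h1 : ContDiffOn ℝ 1 (deriv f) (Ioo a b) :=
      hf.deriv_of_isOpen isOpen_Ioo (m := 1) (by norm_num)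
    exact ((h1.differentiableOn (by norm_num)).differentiableAt hmem).hasDerivAt

lemma sol_deriv_continuousOn {a b : ℝ} {f : ℝ → ℝ} (hf : ContDiffOn ℝ 2 f (Ioo a b)) :
    ContinuousOn (deriv f) (Ioo a b) :=
  (hf.deriv_of_isOpen isOpen_Ioo (m := 1) (by norm_num)).continuousOn

lemma sol_snd_deriv {d a b : ℝ} {f : ℝ → ℝ}
    (hpos : ∀ t ∈ Ioo a b, 0 < f t)
    (hode : ∀ t ∈ Ioo a b, f t * deriv (deriv f) t + d * (1 - (deriv f t)^2)
      = (d+1) * f t * (1 - (deriv f t)^2) ^ ((3:ℝ)/2))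
    {t : ℝ} (ht : t ∈ Ioo a b) :
    deriv (deriv f) t
      = (d+1) * (1 - (deriv f t)^2) ^ ((3:ℝ)/2) - d * (1 - (deriv f t)^2) / f t := by
  have h := hode t ht
  have hf := (hpos t ht).ne'
  field_simp
  ring_nf at h ⊢
  linarith

lemma sol_vec_hasDerivAt {d a b : ℝ} {f : ℝ → ℝ}
    (hf : ContDiffOn ℝ 2 f (Ioo a b))
    (hpos : ∀ t ∈ Ioo a b, 0 < f t)
    (hode : ∀ t ∈ Ioo a b, f t * deriv (deriv f) t + d * (1 - (deriv f t)^2)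
      = (d+1) * f t * (1 - (deriv f t)^2) ^ ((3:ℝ)/2))
    {t : ℝ} (ht : t ∈ Ioo a b) :
    HasDerivAt (fun s => ((f s, deriv f s) : ℝ × ℝ))
      (odeV d ((f t, deriv f t) : ℝ × ℝ)) t := by
  have h := sol_hasDerivAt hf ht
  have h2 := sol_snd_deriv hpos hode ht
  have : odeV d ((f t, deriv f t) : ℝ × ℝ) = (deriv f t, deriv (deriv f) t) := by
    simp [odeV, h2]
  rw [this]
  exact h.1.prodMk h.2

lemma jets_ne (d : ℝ) (a b : ℝ) (f₁ f₂ : ℝ → ℝ)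
    (hf₁ : ContDiffOn ℝ 2 f₁ (Ioo a b)) (hf₂ : ContDiffOn ℝ 2 f₂ (Ioo a b))
    (hpos₁ : ∀ t ∈ Ioo a b, 0 < f₁ t) (hpos₂ : ∀ t ∈ Ioo a b, 0 < f₂ t)
    (hder₁ : ∀ t ∈ Ioo a b, |deriv f₁ t| < 1) (hder₂ : ∀ t ∈ Ioo a b, |deriv f₂ t| < 1)
    (hode₁ : ∀ t ∈ Ioo a b, f₁ t * deriv (deriv f₁) t + d * (1 - (deriv f₁ t)^2)
      = (d+1) * f₁ t * (1 - (deriv f₁ t)^2) ^ ((3:ℝ)/2))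
    (hode₂ : ∀ t ∈ Ioo a b, f₂ t * deriv (deriv f₂) t + d * (1 - (deriv f₂ t)^2)
      = (d+1) * f₂ t * (1 - (deriv f₂ t)^2) ^ ((3:ℝ)/2))
    (hdist : ¬ Set.EqOn f₁ f₂ (Ioo a b)) :
    ∀ t ∈ Ioo a b, ¬ (f₁ t = f₂ t ∧ deriv f₁ t = deriv f₂ t) := by
  set u₁ : ℝ → ℝ × ℝ := fun t => (f₁ t, deriv f₁ t) with hu₁def
  set u₂ : ℝ → ℝ × ℝ := fun t => (f₂ t, deriv f₂ t) with hu₂def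
  have hu₁c : ContinuousOn u₁ (Ioo a b) :=
    (hf₁.continuousOn).prodMk (sol_deriv_continuousOn hf₁)
  have hu₂c : ContinuousOn u₂ (Ioo a b) :=
    (hf₂.continuousOn).prodMk (sol_deriv_continuousOn hf₂)
  intro t₀ ht₀ ⟨he, hde⟩
  -- local uniqueness
  have hloc : ∀ t₁ ∈ Ioo a b, u₁ t₁ = u₂ t₁ → u₁ =ᶠ[𝓝 t₁] u₂ := by
    intro t₁ ht₁ heq
    have hx1 : (u₁ t₁).1 ≠ 0 := (hpos₁ t₁ ht₁).ne'
    have hx2 : (1 : ℝ) - (u₁ t₁).2 ^ 2 ≠ 0 := by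
      have := hder₁ t₁ ht₁
      have h2 : (deriv f₁ t₁) ^ 2 < 1 := by
        have := abs_lt.mp this
        nlinarith
      simp only [hu₁def]
      nlinarith
    obtain ⟨K, s, hs, hK⟩ := (odeV_contDiffAt d hx1 hx2).exists_lipschitzOnWith
    have hmem : Ioo a b ∈ 𝓝 t₁ := isOpen_Ioo.mem_nhds ht₁
    have hs₂ : s ∈ 𝓝 (u₂ t₁) := heq ▸ hs
    refine ODE_solution_unique_of_eventually (v := fun _ : ℝ => odeV d)
      (s := fun _ : ℝ => s) (Filter.Eventually.of_forall fun _ => hK) ?_ ?_ heq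
    · filter_upwards [hmem, (hu₁c.continuousAt hmem).eventually_mem hs] with t hta hts
      exact ⟨sol_vec_hasDerivAt hf₁ hpos₁ hode₁ hta, hts⟩
    · filter_upwards [hmem, (hu₂c.continuousAt hmem).eventually_mem hs₂] with t hta hts
      exact ⟨sol_vec_hasDerivAt hf₂ hpos₂ hode₂ hta, hts⟩
  -- clopen argument
  set U : Set ℝ := interior {t | u₁ t = u₂ t} with hUdef
  set V : Set ℝ := {t | t ∈ Ioo a b ∧ u₁ t ≠ u₂ t} with hVdef
  have hUopen : IsOpen U := isOpen_interior
  have hVopen : IsOpen V := by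
    rw [isOpen_iff_mem_nhds]
    rintro t ⟨hta, hne⟩
    have hmem : Ioo a b ∈ 𝓝 t := isOpen_Ioo.mem_nhds hta
    have h : ∀ᶠ s' in 𝓝 t, u₁ s' - u₂ s' ≠ 0 :=
      ((hu₁c.continuousAt hmem).sub (hu₂c.continuousAt hmem)).eventually_ne
        (sub_ne_zero.mpr hne)
    filter_upwards [hmem, h] with s' h1 h2
    exact ⟨h1, sub_ne_zero.mp h2⟩
  have hcover : Ioo a b ⊆ U ∪ V := by
    intro t hta
    by_cases h : u₁ t = u₂ t
    · left
      rw [hUdef, mem_interior_iff_mem_nhds]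
      filter_upwards [hloc t hta h] with s' hs'
      exact hs'
    · exact Or.inr ⟨hta, h⟩
  have hVempty : Ioo a b ∩ V = ∅ := by
    by_contra hne
    have hU : (Ioo a b ∩ U).Nonempty := by
      refine ⟨t₀, ht₀, ?_⟩
      rw [hUdef, mem_interior_iff_mem_nhds]
      have : u₁ t₀ = u₂ t₀ := by simp [hu₁def, hu₂def, he, hde]
      filter_upwards [hloc t₀ ht₀ this] with s' hs'
      exact hs'
    obtain ⟨t, hta, htU, htV⟩ := isPreconnected_Ioo U V hUopen hVopen hcover hU
      (nonempty_iff_ne_empty.mpr hne)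
    exact htV.2 (interior_subset (s := {t | u₁ t = u₂ t}) htU)
  apply hdist
  intro t hta
  have : ¬ (t ∈ Ioo a b ∧ u₁ t ≠ u₂ t) := by
    intro h
    exact absurd (mem_inter hta h) (by rw [hVempty]; exact notMem_empty t)
  push_neg at this
  have heq := this hta
  exact congrArg Prod.fst heq

lemma diff_sq_hasDerivAt {a b : ℝ} {f₁ f₂ : ℝ → ℝ}
    (hf₁ : ContDiffOn ℝ 2 f₁ (Ioo a b)) (hf₂ : ContDiffOn ℝ 2 f₂ (Ioo a b))
    {t : ℝ} (ht : t ∈ Ioo a b) :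
    HasDerivAt (fun s => (f₂ s - f₁ s) ^ 2)
      (2 * (f₂ t - f₁ t) * (deriv f₂ t - deriv f₁ t)) t := by
  have h1 := (sol_hasDerivAt hf₁ ht).1
  have h2 := (sol_hasDerivAt hf₂ ht).1
  have := (h2.sub h1).pow 2
  refine this.congr_deriv ?_
  simp only [Pi.sub_apply]
  push_cast
  ring

lemma key_localmin (d : ℝ) (hd : 1 ≤ d) (a b : ℝ) (f₁ f₂ : ℝ → ℝ)
    (hf₁ : ContDiffOn ℝ 2 f₁ (Ioo a b)) (hf₂ : ContDiffOn ℝ 2 f₂ (Ioo a b))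
    (hpos₁ : ∀ t ∈ Ioo a b, 0 < f₁ t) (hpos₂ : ∀ t ∈ Ioo a b, 0 < f₂ t)
    (hder₁ : ∀ t ∈ Ioo a b, |deriv f₁ t| < 1) (hder₂ : ∀ t ∈ Ioo a b, |deriv f₂ t| < 1)
    (hode₁ : ∀ t ∈ Ioo a b, f₁ t * deriv (deriv f₁) t + d * (1 - (deriv f₁ t)^2)
      = (d+1) * f₁ t * (1 - (deriv f₁ t)^2) ^ ((3:ℝ)/2))
    (hode₂ : ∀ t ∈ Ioo a b, f₂ t * deriv (deriv f₂) t + d * (1 - (deriv f₂ t)^2)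
      = (d+1) * f₂ t * (1 - (deriv f₂ t)^2) ^ ((3:ℝ)/2))
    (hdist : ¬ Set.EqOn f₁ f₂ (Ioo a b)) :
    ∀ t ∈ Ioo a b, deriv (fun s => (f₂ s - f₁ s) ^ 2) t = 0 →
      ∀ᶠ s in 𝓝[≠] t, (f₂ t - f₁ t) ^ 2 < (f₂ s - f₁ s) ^ 2 := by
  intro t ht hcrit
  have h1 := (sol_hasDerivAt hf₁ ht).1
  have h2 := (sol_hasDerivAt hf₂ ht).1
  have hD := diff_sq_hasDerivAt hf₁ hf₂ ht
  have hderiv : deriv (fun s => (f₂ s - f₁ s) ^ 2) t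
      = 2 * (f₂ t - f₁ t) * (deriv f₂ t - deriv f₁ t) := hD.deriv
  rw [hderiv] at hcrit
  have hjets := jets_ne d a b f₁ f₂ hf₁ hf₂ hpos₁ hpos₂ hder₁ hder₂ hode₁ hode₂ hdist t ht
  rcases mul_eq_zero.mp hcrit with h0 | hg'
  · -- f₂ t = f₁ t, so derivatives differ
    have hg0 : f₂ t - f₁ t = 0 := by
      rcases mul_eq_zero.mp h0 with h | h
      · norm_num at h
      · exact h
    have hg' : deriv f₂ t - deriv f₁ t ≠ 0 := by
      intro h
      exact hjets ⟨(sub_eq_zero.mp hg0).symm, (sub_eq_zero.mp h).symm⟩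
    have hT : Tendsto (slope (fun s => f₂ s - f₁ s) t) (𝓝[≠] t)
        (𝓝 (deriv f₂ t - deriv f₁ t)) := hasDerivAt_iff_tendsto_slope.mp (h2.sub h1)
    filter_upwards [hT.eventually_ne hg', self_mem_nhdsWithin] with s hs hsne
    rw [hg0]
    have hgs : f₂ s - f₁ s ≠ 0 := by
      intro h
      apply hs
      rw [slope_def_field, h, hg0]
      simp
    simpa using pow_two_pos_of_ne_zero hgs
  · -- deriv f₂ t = deriv f₁ t, so f values differ
    have hg' : deriv f₂ t - deriv f₁ t = 0 := hg'
    have hgne : f₂ t - f₁ t ≠ 0 := by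
      intro h
      exact hjets ⟨(sub_eq_zero.mp h).symm, (sub_eq_zero.mp hg').symm⟩
    have h1' := (sol_hasDerivAt hf₁ ht).2
    have h2' := (sol_hasDerivAt hf₂ ht).2
    -- second derivative of the squared difference
    set c : ℝ := 2 * ((f₂ t - f₁ t) * (deriv (deriv f₂) t - deriv (deriv f₁) t)) with hcdef
    have hc : 0 < c := by
      have hp2 : deriv f₂ t = deriv f₁ t := sub_eq_zero.mp hg'
      have hs1 := sol_snd_deriv hpos₁ hode₁ ht
      have hs2 := sol_snd_deriv hpos₂ hode₂ ht
      have hf1 := hpos₁ t ht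
      have hf2 := hpos₂ t ht
      have hp1 : 0 < 1 - (deriv f₁ t) ^ 2 := by
        have := abs_lt.mp (hder₁ t ht); nlinarith
      have hdd : deriv (deriv f₂) t - deriv (deriv f₁) t
          = d * (1 - (deriv f₁ t) ^ 2) * (f₂ t - f₁ t) / (f₁ t * f₂ t) := by
        rw [hs1, hs2, hp2]
        field_simp
        ring
      rw [hcdef, hdd]
      have hd0 : (0:ℝ) < d := by linarith
      have hgg : 0 < (f₂ t - f₁ t) ^ 2 := pow_two_pos_of_ne_zero hgne
      rw [div_eq_mul_inv]
      have : (f₂ t - f₁ t) * (d * (1 - deriv f₁ t ^ 2) * (f₂ t - f₁ t))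
          = d * (1 - deriv f₁ t ^ 2) * (f₂ t - f₁ t) ^ 2 := by ring
      calc (0:ℝ) < 2 * (d * (1 - deriv f₁ t ^ 2) * (f₂ t - f₁ t) ^ 2 * (f₁ t * f₂ t)⁻¹) := by
            apply mul_pos two_pos
            apply mul_pos (mul_pos (mul_pos hd0 hp1) hgg)
            exact inv_pos.mpr (mul_pos hf1 hf2)
        _ = 2 * ((f₂ t - f₁ t) * (d * (1 - deriv f₁ t ^ 2) * (f₂ t - f₁ t) / (f₁ t * f₂ t) )) := by
            rw [div_eq_mul_inv]; ring
        _ = 2 * ((f₂ t - f₁ t) * (d * (1 - deriv f₁ t ^ 2) * (f₂ t - f₁ t) * (f₁ t * f₂ t)⁻¹)) := by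
            rw [div_eq_mul_inv]
    -- deriv of (f₂ - f₁)² has derivative c at t
    have hev : deriv (fun s => (f₂ s - f₁ s) ^ 2)
        =ᶠ[𝓝 t] fun s => 2 * (f₂ s - f₁ s) * (deriv f₂ s - deriv f₁ s) := by
      filter_upwards [isOpen_Ioo.mem_nhds ht] with s hs
      exact (diff_sq_hasDerivAt hf₁ hf₂ hs).deriv
    have hG : HasDerivAt (fun s => 2 * (f₂ s - f₁ s) * (deriv f₂ s - deriv f₁ s)) c t := by
      have := (((h2.sub h1).const_mul 2).mul ((h2'.sub h1')))
      refine this.congr_deriv ?_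
      simp only [Pi.sub_apply]
      rw [hcdef, hg']
      ring
    have hD2 : HasDerivAt (deriv (fun s => (f₂ s - f₁ s) ^ 2)) c t :=
      hG.congr_of_eventuallyEq hev
    -- second derivative test
    have hT : Tendsto (slope (deriv (fun s => (f₂ s - f₁ s) ^ 2)) t) (𝓝[≠] t) (𝓝 c) :=
      hasDerivAt_iff_tendsto_slope.mp hD2
    have hslope : ∀ᶠ s in 𝓝[≠] t,
        (0 < slope (deriv (fun s => (f₂ s - f₁ s) ^ 2)) t s ∧ s ∈ Ioo a b) :=
      Filter.Eventually.and (hT.eventually (eventually_gt_nhds hc))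
        (eventually_nhdsWithin_of_eventually_nhds (isOpen_Ioo.eventually_mem ht))
    rw [eventually_nhdsWithin_iff] at hslope
    obtain ⟨δ, hδ, hball'⟩ := Metric.eventually_nhds_iff_ball.mp hslope
    have hball : ∀ s ∈ Metric.ball t δ, s ≠ t →
        (0 < slope (deriv (fun s => (f₂ s - f₁ s) ^ 2)) t s ∧ s ∈ Ioo a b) := by
      intro s hs hsne
      exact hball' s hs (by simpa using hsne)
    set h : ℝ → ℝ := fun s => (f₂ s - f₁ s) ^ 2 with hhdef
    have hcont : ContinuousOn h (Ioo a b) :=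
      ((hf₂.continuousOn.sub hf₁.continuousOn).pow 2)
    have hballIoo : ∀ s ∈ Metric.ball t δ, s ∈ Ioo a b := by
      intro s hs
      by_cases hst : s = t
      · exact hst ▸ ht
      · exact (hball s hs hst).2
    have hdpos : ∀ s ∈ Metric.ball t δ, t < s → 0 < deriv h s := by
      intro s hs hts
      have h0 := (hball s hs (ne_of_gt hts)).1
      rw [slope_def_field, hderiv, hcrit, sub_zero] at h0
      have := mul_pos h0 (sub_pos.mpr hts)
      rwa [div_mul_cancel₀] at this
      exact sub_ne_zero.mpr (ne_of_gt hts)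
    have hdneg : ∀ s ∈ Metric.ball t δ, s < t → deriv h s < 0 := by
      intro s hs hts
      have h0 := (hball s hs (ne_of_lt hts)).1
      rw [slope_def_field, hderiv, hcrit, sub_zero] at h0
      rcases div_pos_iff.mp h0 with ⟨hx, hy⟩ | ⟨hx, hy⟩
      · linarith [sub_neg.mpr hts]
      · exact hx
    have hsub1 : Ico t (t + δ) ⊆ Metric.ball t δ := by
      intro s hs
      rw [Real.ball_eq_Ioo]
      exact ⟨by linarith [hs.1, hδ], hs.2⟩
    have hsub2 : Ioc (t - δ) t ⊆ Metric.ball t δ := by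
      intro s hs
      rw [Real.ball_eq_Ioo]
      exact ⟨hs.1, by linarith [hs.2, hδ]⟩
    have hmono : StrictMonoOn h (Ico t (t + δ)) := by
      apply strictMonoOn_of_deriv_pos (convex_Ico _ _)
        (hcont.mono (fun s hs => hballIoo s (hsub1 hs)))
      intro x hx
      rw [interior_Ico] at hx
      exact hdpos x (hsub1 ⟨hx.1.le, hx.2⟩) hx.1
    have hanti : StrictAntiOn h (Ioc (t - δ) t) := by
      apply strictAntiOn_of_deriv_neg (convex_Ioc _ _)
        (hcont.mono (fun s hs => hballIoo s (hsub2 hs)))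
      intro x hx
      rw [interior_Ioc] at hx
      exact hdneg x (hsub2 ⟨hx.1, hx.2.le⟩) hx.2
    filter_upwards [mem_nhdsWithin_of_mem_nhds (Metric.ball_mem_nhds t hδ),
      self_mem_nhdsWithin] with s hs hsne
    rcases lt_or_gt_of_ne (Ne.symm hsne)  with hlt | hgt
    · -- t < s
      exact hmono (left_mem_Ico.mpr (by linarith)) ⟨hlt.le, by
        have := Real.ball_eq_Ioo t δ ▸ hs; exact this.2⟩ hlt
    · -- s < t
      exact hanti ⟨(Real.ball_eq_Ioo t δ ▸ hs).1, hgt.le⟩ (right_mem_Ioc.mpr (by linarith)) hgt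

/-- Maximum principle: for two distinct solutions `f₁, f₂` of the spherically symmetric
CMC ODE, the function `(f₂ − f₁)²` has at most one critical point, and any critical point
is a strict local minimum. -/
theorem stmt7 (d : ℕ) (hd : 1 ≤ d) (a b : ℝ) (f₁ f₂ : ℝ → ℝ)
    (hf₁ : ContDiffOn ℝ 2 f₁ (Set.Ioo a b))
    (hf₂ : ContDiffOn ℝ 2 f₂ (Set.Ioo a b))
    (hpos₁ : ∀ t ∈ Set.Ioo a b, 0 < f₁ t)
    (hpos₂ : ∀ t ∈ Set.Ioo a b, 0 < f₂ t)
    (hder₁ : ∀ t ∈ Set.Ioo a b, |deriv f₁ t| < 1)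
    (hder₂ : ∀ t ∈ Set.Ioo a b, |deriv f₂ t| < 1)
    (hode₁ : ∀ t ∈ Set.Ioo a b,
      f₁ t * deriv (deriv f₁) t + (d : ℝ) * (1 - (deriv f₁ t) ^ 2)
        = ((d : ℝ) + 1) * f₁ t * (1 - (deriv f₁ t) ^ 2) ^ ((3 : ℝ) / 2))
    (hode₂ : ∀ t ∈ Set.Ioo a b,
      f₂ t * deriv (deriv f₂) t + (d : ℝ) * (1 - (deriv f₂ t) ^ 2)
        = ((d : ℝ) + 1) * f₂ t * (1 - (deriv f₂ t) ^ 2) ^ ((3 : ℝ) / 2))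
    (hdist : ¬ Set.EqOn f₁ f₂ (Set.Ioo a b)) :
    Set.Subsingleton {t ∈ Set.Ioo a b | deriv (fun s => (f₂ s - f₁ s) ^ 2) t = 0} ∧
    ∀ t ∈ Set.Ioo a b, deriv (fun s => (f₂ s - f₁ s) ^ 2) t = 0 →
      ∀ᶠ s in nhdsWithin t {t}ᶜ, (f₂ t - f₁ t) ^ 2 < (f₂ s - f₁ s) ^ 2 := by
  have hd' : (1:ℝ) ≤ (d:ℝ) := by exact_mod_cast hd
  have hkey := key_localmin (d:ℝ) hd' a b f₁ f₂ hf₁ hf₂ hpos₁ hpos₂ hder₁ hder₂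
    hode₁ hode₂ hdist
  refine ⟨?_, hkey⟩
  have main : ∀ t₁ t₂ : ℝ, t₁ ∈ Ioo a b → deriv (fun s => (f₂ s - f₁ s) ^ 2) t₁ = 0 →
      t₂ ∈ Ioo a b → deriv (fun s => (f₂ s - f₁ s) ^ 2) t₂ = 0 → t₁ < t₂ → False := by
    intro t₁ t₂ h₁ hc₁ h₂ hc₂ hlt
    set h : ℝ → ℝ := fun s => (f₂ s - f₁ s) ^ 2 with hh
    have hsub : Icc t₁ t₂ ⊆ Ioo a b :=
      fun s hs => ⟨lt_of_lt_of_le h₁.1 hs.1, lt_of_le_of_lt hs.2 h₂.2⟩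
    have hcont : ContinuousOn h (Icc t₁ t₂) :=
      ((hf₂.continuousOn.sub hf₁.continuousOn).pow 2).mono hsub
    obtain ⟨t₃, ht₃, hmax⟩ := isCompact_Icc.exists_isMaxOn (nonempty_Icc.mpr hlt.le) hcont
    have hgt1 : h t₁ < h t₃ := by
      have hev := (hkey t₁ h₁ hc₁).filter_mono
        (nhdsWithin_mono t₁ (fun x hx => mem_compl_singleton_iff.mpr (ne_of_gt hx)))
      have hev' : ∀ᶠ s in 𝓝[>] t₁, h t₁ < h s ∧ s ∈ Ioo t₁ t₂ := hev.and
        (by filter_upwards [Ioo_mem_nhdsGT_of_mem ⟨le_refl t₁, hlt⟩] with s hs; exact hs)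
      obtain ⟨s, hs1, hs2⟩ := hev'.exists
      exact lt_of_lt_of_le hs1 (hmax ⟨hs2.1.le, hs2.2.le⟩)
    have hgt2 : h t₂ < h t₃ := by
      have hev := (hkey t₂ h₂ hc₂).filter_mono
        (nhdsWithin_mono t₂ (fun x hx => mem_compl_singleton_iff.mpr (ne_of_lt hx)))
      have hev' : ∀ᶠ s in 𝓝[<] t₂, h t₂ < h s ∧ s ∈ Ioo t₁ t₂ := hev.and
        (by filter_upwards [Ioo_mem_nhdsLT_of_mem ⟨hlt, le_refl t₂⟩] with s hs; exact hs)
      obtain ⟨s, hs1, hs2⟩ := hev'.exists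
      exact lt_of_lt_of_le hs1 (hmax ⟨hs2.1.le, hs2.2.le⟩)
    have h3 : t₃ ∈ Ioo t₁ t₂ := by
      refine ⟨lt_of_le_of_ne ht₃.1 ?_, lt_of_le_of_ne ht₃.2 ?_⟩
      · intro he; rw [← he] at hgt1; exact lt_irrefl _ hgt1
      · intro he; rw [he] at hgt2; exact lt_irrefl _ hgt2
    have hloc : IsLocalMax h t₃ := hmax.isLocalMax (Icc_mem_nhds h3.1 h3.2)
    have hc₃ : deriv h t₃ = 0 := hloc.deriv_eq_zero
    have hev3 := hkey t₃ (hsub (Ioo_subset_Icc_self h3)) hc₃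
    have hev3' : ∀ᶠ s in 𝓝[≠] t₃, h t₃ < h s ∧ s ∈ Icc t₁ t₂ := hev3.and
      (by filter_upwards [mem_nhdsWithin_of_mem_nhds (Icc_mem_nhds h3.1 h3.2)] with s hs
          exact hs)
    obtain ⟨s, hs1, hs2⟩ := hev3'.exists
    exact absurd (hmax hs2) (not_le.mpr hs1)
  intro x hx y hy
  by_contra hne
  rcases lt_or_gt_of_ne hne with hlt | hlt
  · exact main x y hx.1 hx.2 hy.1 hy.2 hlt
  · exact main y x hy.1 hy.2 hx.1 hx.2 hlt
end

section
/- Two distinct solutions f₁, f₂ of the spherically symmetric CMC ODE (with |f'| < 1, f > 0) intersect at most once; and if they do intersect at a point, then f₂ − f₁ is strictly monotonic on the whole common interval of existence. -/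
open Set Filter Topology


noncomputable def cmcV (d : ℕ) : ℝ × ℝ → ℝ × ℝ :=
  fun z => (z.2, ((d:ℝ)+1) * (1 - z.2^2) ^ ((3:ℝ)/2) - (d:ℝ) * (1 - z.2^2) / z.1)

lemma cmcV_contDiffAt (d : ℕ) {z : ℝ × ℝ} (h1 : z.1 ≠ 0) (h2 : 1 - z.2^2 ≠ 0) :
    ContDiffAt ℝ 1 (cmcV d) z := by
  apply ContDiffAt.prodMk
  · exact contDiff_snd.contDiffAt
  · apply ContDiffAt.sub
    · exact contDiffAt_const.mul
        (ContDiffAt.rpow_const_of_ne (contDiffAt_const.sub (contDiff_snd.contDiffAt.pow 2)) h2)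
    · exact ContDiffAt.div
        (contDiffAt_const.mul (contDiffAt_const.sub (contDiff_snd.contDiffAt.pow 2)))
        contDiff_fst.contDiffAt h1

lemma sol_pair_hasDerivAt (d : ℕ) {a b : ℝ} {f : ℝ → ℝ}
    (hf : ContDiffOn ℝ 2 f (Set.Ioo a b))
    (hpos : ∀ t ∈ Set.Ioo a b, 0 < f t)
    (hode : ∀ t ∈ Set.Ioo a b,
      f t * deriv (deriv f) t + (d : ℝ) * (1 - (deriv f t) ^ 2)
        = ((d : ℝ) + 1) * f t * (1 - (deriv f t) ^ 2) ^ ((3 : ℝ) / 2))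
    {t : ℝ} (ht : t ∈ Set.Ioo a b) :
    HasDerivAt (fun t => (f t, deriv f t)) (cmcV d (f t, deriv f t)) t := by
  have hO : IsOpen (Ioo a b) := isOpen_Ioo
  have h1 : ContDiffOn ℝ 1 (deriv f) (Ioo a b) := hf.deriv_of_isOpen hO (by norm_num)
  have hd1 : HasDerivAt f (deriv f t) t :=
    ((hf.differentiableOn (by norm_num)).differentiableAt (hO.mem_nhds ht)).hasDerivAt
  have hd2 : HasDerivAt (deriv f) (deriv (deriv f) t) t :=
    ((h1.differentiableOn (by norm_num)).differentiableAt (hO.mem_nhds ht)).hasDerivAt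
  have key : cmcV d (f t, deriv f t) = (deriv f t, deriv (deriv f) t) := by
    have h := hode t ht
    have hf0 : f t ≠ 0 := (hpos t ht).ne'
    simp only [cmcV, Prod.mk.injEq]
    refine ⟨trivial, ?_⟩
    field_simp
    linarith [h]
  rw [key]
  exact hd1.prodMk hd2


lemma one_sub_sq_pos {p : ℝ} (h : |p| < 1) : 0 < 1 - p ^ 2 := by
  nlinarith [abs_lt.1 h |>.1, abs_lt.1 h |>.2]

lemma cmc_second_deriv_pos (d : ℕ) (hd : 1 ≤ d) {a b : ℝ} {f₁ f₂ : ℝ → ℝ}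
    (hpos₁ : ∀ t ∈ Set.Ioo a b, 0 < f₁ t)
    (hpos₂ : ∀ t ∈ Set.Ioo a b, 0 < f₂ t)
    (hder₁ : ∀ t ∈ Set.Ioo a b, |deriv f₁ t| < 1)
    (hode₁ : ∀ t ∈ Set.Ioo a b,
      f₁ t * deriv (deriv f₁) t + (d : ℝ) * (1 - (deriv f₁ t) ^ 2)
        = ((d : ℝ) + 1) * f₁ t * (1 - (deriv f₁ t) ^ 2) ^ ((3 : ℝ) / 2))
    (hode₂ : ∀ t ∈ Set.Ioo a b,
      f₂ t * deriv (deriv f₂) t + (d : ℝ) * (1 - (deriv f₂ t) ^ 2)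
        = ((d : ℝ) + 1) * f₂ t * (1 - (deriv f₂ t) ^ 2) ^ ((3 : ℝ) / 2))
    {s : ℝ} (hs : s ∈ Set.Ioo a b) (hpeq : deriv f₁ s = deriv f₂ s)
    (hlt : f₁ s < f₂ s) :
    0 < deriv (deriv f₂) s - deriv (deriv f₁) s := by
  have e₁ := hode₁ s hs
  have e₂ := hode₂ s hs
  rw [← hpeq] at e₂
  have hP : 0 < 1 - (deriv f₁ s) ^ 2 := one_sub_sq_pos (hder₁ s hs)
  have h1 : 0 < f₁ s := hpos₁ s hs
  have h2 : 0 < f₂ s := hpos₂ s hs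
  have hd0 : (0:ℝ) < (d : ℝ) := by exact_mod_cast Nat.lt_of_lt_of_le Nat.zero_lt_one hd
  have key : f₁ s * f₂ s * (deriv (deriv f₂) s - deriv (deriv f₁) s)
      = (d : ℝ) * (1 - (deriv f₁ s) ^ 2) * (f₂ s - f₁ s) := by
    linear_combination f₁ s * e₂ - f₂ s * e₁
  nlinarith [mul_pos (mul_pos hd0 hP) (sub_pos.2 hlt), mul_pos h1 h2]


lemma deriv_nonpos_of_nonneg_left {φ : ℝ → ℝ} {s c m : ℝ} (hc : c < s)
    (hder : HasDerivAt φ m s) (h0 : φ s = 0) (hnn : ∀ t ∈ Ioo c s, 0 ≤ φ t) : m ≤ 0 := by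
  have h := hasDerivAt_iff_tendsto_slope.1 hder
  have h' : Tendsto (slope φ s) (𝓝[<] s) (𝓝 m) :=
    h.mono_left (nhdsWithin_mono _ (fun x hx => ne_of_lt hx))
  refine le_of_tendsto h' ?_
  filter_upwards [Ioo_mem_nhdsLT_of_mem (⟨hc, le_rfl⟩ : s ∈ Ioc c s)] with t ht
  rw [slope_def_field, h0, sub_zero]
  exact div_nonpos_of_nonneg_of_nonpos (hnn t ht) (by linarith [ht.2])

lemma deriv_nonneg_of_nonneg_right {φ : ℝ → ℝ} {s c m : ℝ} (hc : s < c)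
    (hder : HasDerivAt φ m s) (h0 : φ s = 0) (hnn : ∀ t ∈ Ioo s c, 0 ≤ φ t) : 0 ≤ m := by
  have h := hasDerivAt_iff_tendsto_slope.1 hder
  have h' : Tendsto (slope φ s) (𝓝[>] s) (𝓝 m) :=
    h.mono_left (nhdsWithin_mono _ (fun x hx => ne_of_gt hx))
  refine ge_of_tendsto h' ?_
  filter_upwards [Ioo_mem_nhdsGT_of_mem (⟨le_rfl, hc⟩ : s ∈ Ico s c)] with t ht
  have : slope φ s t = (φ t - φ s) / (t - s) := slope_def_field φ s t
  rw [this, h0, sub_zero]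
  exact div_nonneg (hnn t ht) (by linarith [ht.1])


lemma cmc_eqOn (d : ℕ) {a b : ℝ} {f₁ f₂ : ℝ → ℝ}
    (hf₁ : ContDiffOn ℝ 2 f₁ (Set.Ioo a b))
    (hf₂ : ContDiffOn ℝ 2 f₂ (Set.Ioo a b))
    (hpos₁ : ∀ t ∈ Set.Ioo a b, 0 < f₁ t)
    (hpos₂ : ∀ t ∈ Set.Ioo a b, 0 < f₂ t)
    (hder₁ : ∀ t ∈ Set.Ioo a b, |deriv f₁ t| < 1)
    (hode₁ : ∀ t ∈ Set.Ioo a b,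
      f₁ t * deriv (deriv f₁) t + (d : ℝ) * (1 - (deriv f₁ t) ^ 2)
        = ((d : ℝ) + 1) * f₁ t * (1 - (deriv f₁ t) ^ 2) ^ ((3 : ℝ) / 2))
    (hode₂ : ∀ t ∈ Set.Ioo a b,
      f₂ t * deriv (deriv f₂) t + (d : ℝ) * (1 - (deriv f₂ t) ^ 2)
        = ((d : ℝ) + 1) * f₂ t * (1 - (deriv f₂ t) ^ 2) ^ ((3 : ℝ) / 2))
    {t₀ : ℝ} (ht₀ : t₀ ∈ Set.Ioo a b) (h0 : f₁ t₀ = f₂ t₀)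
    (h0' : deriv f₁ t₀ = deriv f₂ t₀) :
    Set.EqOn f₁ f₂ (Set.Ioo a b) := by
  have hO : IsOpen (Ioo a b) := isOpen_Ioo
  set F₁ : ℝ → ℝ × ℝ := fun t => (f₁ t, deriv f₁ t) with hF₁def
  set F₂ : ℝ → ℝ × ℝ := fun t => (f₂ t, deriv f₂ t) with hF₂def
  have hc₁ : ContinuousOn F₁ (Ioo a b) :=
    (hf₁.continuousOn).prodMk ((hf₁.deriv_of_isOpen (m := 1) hO (by norm_num)).continuousOn)
  have hc₂ : ContinuousOn F₂ (Ioo a b) :=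
    (hf₂.continuousOn).prodMk ((hf₂.deriv_of_isOpen (m := 1) hO (by norm_num)).continuousOn)
  haveI : PreconnectedSpace (Ioo a b : Set ℝ) :=
    Subtype.preconnectedSpace ((convex_Ioo a b).isPreconnected)
  set S : Set (Ioo a b) := {x | F₁ (x : ℝ) = F₂ (x : ℝ)} with hSdef
  have hSclosed : IsClosed S := isClosed_eq hc₁.restrict hc₂.restrict
  have hSopen : IsOpen S := by
    rw [isOpen_iff_mem_nhds]
    rintro x hx
    have hx' : F₁ (x : ℝ) = F₂ (x : ℝ) := hx
    have hz1 : (F₁ (x : ℝ)).1 ≠ 0 := (hpos₁ _ x.2).ne'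
    have hz2 : 1 - (F₁ (x : ℝ)).2 ^ 2 ≠ 0 := (one_sub_sq_pos (hder₁ _ x.2)).ne'
    obtain ⟨K, s, hs, hlip⟩ := (cmcV_contDiffAt d hz1 hz2).exists_lipschitzOnWith
    have hioo : ∀ᶠ t in 𝓝 (x : ℝ), t ∈ Ioo a b := hO.eventually_mem x.2
    have hev : F₁ =ᶠ[𝓝 (x : ℝ)] F₂ := by
      apply ODE_solution_unique_of_eventually (v := fun _ : ℝ => cmcV d)
        (s := fun _ : ℝ => s) (.of_forall fun _ => hlip) ?_ ?_ hx'
      · have hmem : ∀ᶠ t in 𝓝 (x : ℝ), F₁ t ∈ s :=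
          (hc₁.continuousAt (hO.mem_nhds x.2)).preimage_mem_nhds hs
        filter_upwards [hmem, hioo] with t h1 h2
        exact ⟨sol_pair_hasDerivAt d hf₁ hpos₁ hode₁ h2, h1⟩
      · have hs' : s ∈ 𝓝 (F₂ (x : ℝ)) := hx' ▸ hs
        have hmem : ∀ᶠ t in 𝓝 (x : ℝ), F₂ t ∈ s :=
          (hc₂.continuousAt (hO.mem_nhds x.2)).preimage_mem_nhds hs'
        filter_upwards [hmem, hioo] with t h1 h2
        exact ⟨sol_pair_hasDerivAt d hf₂ hpos₂ hode₂ h2, h1⟩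
    have hmemnhds : {t : ℝ | F₁ t = F₂ t} ∈ 𝓝 (x : ℝ) := hev
    rw [nhds_subtype_eq_comap]
    exact Filter.preimage_mem_comap hmemnhds
  have hSuniv : S = univ :=
    (IsClopen.eq_univ ⟨hSclosed, hSopen⟩) ⟨⟨t₀, ht₀⟩, by
      show F₁ t₀ = F₂ t₀
      simp [hF₁def, hF₂def, h0, h0']⟩
  intro t ht
  have : (⟨t, ht⟩ : Ioo a b) ∈ S := hSuniv ▸ mem_univ _
  exact congrArg Prod.fst this


lemma cmc_diff_deriv_pos (d : ℕ) (hd : 1 ≤ d) {a b : ℝ} {f₁ f₂ : ℝ → ℝ}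
    (hf₁ : ContDiffOn ℝ 2 f₁ (Set.Ioo a b))
    (hf₂ : ContDiffOn ℝ 2 f₂ (Set.Ioo a b))
    (hpos₁ : ∀ t ∈ Set.Ioo a b, 0 < f₁ t)
    (hpos₂ : ∀ t ∈ Set.Ioo a b, 0 < f₂ t)
    (hder₁ : ∀ t ∈ Set.Ioo a b, |deriv f₁ t| < 1)
    (hder₂ : ∀ t ∈ Set.Ioo a b, |deriv f₂ t| < 1)
    (hode₁ : ∀ t ∈ Set.Ioo a b,
      f₁ t * deriv (deriv f₁) t + (d : ℝ) * (1 - (deriv f₁ t) ^ 2)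
        = ((d : ℝ) + 1) * f₁ t * (1 - (deriv f₁ t) ^ 2) ^ ((3 : ℝ) / 2))
    (hode₂ : ∀ t ∈ Set.Ioo a b,
      f₂ t * deriv (deriv f₂) t + (d : ℝ) * (1 - (deriv f₂ t) ^ 2)
        = ((d : ℝ) + 1) * f₂ t * (1 - (deriv f₂ t) ^ 2) ^ ((3 : ℝ) / 2))
    {t₀ : ℝ} (ht₀ : t₀ ∈ Set.Ioo a b) (h0 : f₁ t₀ = f₂ t₀)
    (hp0 : 0 < deriv f₂ t₀ - deriv f₁ t₀) :
    ∀ t ∈ Set.Ioo a b, 0 < deriv f₂ t - deriv f₁ t := by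
  have hO : IsOpen (Ioo a b) := isOpen_Ioo
  set h : ℝ → ℝ := fun t => deriv f₂ t - deriv f₁ t with hhdef
  have hc₁ : ContinuousOn (deriv f₁) (Ioo a b) :=
    (hf₁.deriv_of_isOpen (m := 1) hO (by norm_num)).continuousOn
  have hc₂ : ContinuousOn (deriv f₂) (Ioo a b) :=
    (hf₂.deriv_of_isOpen (m := 1) hO (by norm_num)).continuousOn
  have hch : ContinuousOn h (Ioo a b) := hc₂.sub hc₁
  have hdiff₁ : ∀ t ∈ Ioo a b, HasDerivAt f₁ (deriv f₁ t) t := fun t ht =>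
    ((hf₁.differentiableOn (by norm_num)).differentiableAt (hO.mem_nhds ht)).hasDerivAt
  have hdiff₂ : ∀ t ∈ Ioo a b, HasDerivAt f₂ (deriv f₂ t) t := fun t ht =>
    ((hf₂.differentiableOn (by norm_num)).differentiableAt (hO.mem_nhds ht)).hasDerivAt
  have hdd₁ : ∀ t ∈ Ioo a b, HasDerivAt (deriv f₁) (deriv (deriv f₁) t) t := fun t ht =>
    (((hf₁.deriv_of_isOpen (m := 1) hO (by norm_num)).differentiableOn
      (by norm_num)).differentiableAt (hO.mem_nhds ht)).hasDerivAt
  have hdd₂ : ∀ t ∈ Ioo a b, HasDerivAt (deriv f₂) (deriv (deriv f₂) t) t := fun t ht =>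
    (((hf₂.deriv_of_isOpen (m := 1) hO (by norm_num)).differentiableOn
      (by norm_num)).differentiableAt (hO.mem_nhds ht)).hasDerivAt
  have hgderiv : ∀ t ∈ Ioo a b, HasDerivAt (fun t => f₂ t - f₁ t) (h t) t := fun t ht =>
    (hdiff₂ t ht).sub (hdiff₁ t ht)
  have hhderiv : ∀ t ∈ Ioo a b,
      HasDerivAt h (deriv (deriv f₂) t - deriv (deriv f₁) t) t := fun t ht =>
    (hdd₂ t ht).sub (hdd₁ t ht)
  have hgcont : ContinuousOn (fun t => f₂ t - f₁ t) (Ioo a b) :=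
    hf₂.continuousOn.sub hf₁.continuousOn
  by_contra hcon
  push_neg at hcon
  obtain ⟨w, hw, hwle⟩ := hcon
  -- produce a zero of h in Ioo a b
  have hzero : ∃ u ∈ Ioo a b, h u = 0 := by
    rcases eq_or_lt_of_le hwle with heq | hlt
    · exact ⟨w, hw, heq⟩
    · rcases lt_trichotomy t₀ w with htw | htw | htw
      · have hsub : Icc t₀ w ⊆ Ioo a b := fun r hr => ⟨lt_of_lt_of_le ht₀.1 hr.1,
          lt_of_le_of_lt hr.2 hw.2⟩
        obtain ⟨c, hc, hc0⟩ := intermediate_value_Icc' (le_of_lt htw) (hch.mono hsub)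
          (⟨le_of_lt hlt, le_of_lt hp0⟩ : (0:ℝ) ∈ Icc (h w) (h t₀))
        exact ⟨c, hsub hc, hc0⟩
      · exact absurd (htw ▸ hlt) (not_lt.2 (le_of_lt hp0))
      · have hsub : Icc w t₀ ⊆ Ioo a b := fun r hr => ⟨lt_of_lt_of_le hw.1 hr.1,
          lt_of_le_of_lt hr.2 ht₀.2⟩
        obtain ⟨c, hc, hc0⟩ := intermediate_value_Icc (le_of_lt htw) (hch.mono hsub)
          (⟨le_of_lt hlt, le_of_lt hp0⟩ : (0:ℝ) ∈ Icc (h w) (h t₀))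
        exact ⟨c, hsub hc, hc0⟩
  obtain ⟨u, hu, hu0⟩ := hzero
  have hut₀ : u ≠ t₀ := fun he => (ne_of_gt hp0) (he ▸ hu0)
  rcases hut₀.lt_or_gt with htu | htu
  · -- u < t₀ : take s' = sSup of zeros in [u, t₀]
    set Z := {r ∈ Icc u t₀ | h r = 0} with hZdef
    have hsubZ : Icc u t₀ ⊆ Ioo a b := fun r hr =>
      ⟨lt_of_lt_of_le hu.1 hr.1, lt_of_le_of_lt hr.2 ht₀.2⟩
    have hZclosed : IsClosed Z :=
      (hch.mono hsubZ).preimage_isClosed_of_isClosed isClosed_Icc isClosed_singleton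
    have hZne : Z.Nonempty := ⟨u, ⟨le_rfl, le_of_lt htu⟩, hu0⟩
    have hbdd : BddAbove Z := (bddAbove_Icc (a := u) (b := t₀)).mono (sep_subset _ _)
    set s' := sSup Z with hs'def
    have hs'mem : s' ∈ Z := hZclosed.csSup_mem hZne hbdd
    obtain ⟨⟨hus', hs't⟩, hs'0⟩ := hs'mem
    have hs't₀ : s' < t₀ := lt_of_le_of_ne hs't (fun he => (ne_of_gt hp0) (he ▸ hs'0))
    have hs'Ioo : s' ∈ Ioo a b := hsubZ ⟨hus', hs't⟩
    have hpos' : ∀ r ∈ Ioc s' t₀, 0 < h r := by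
      intro r hr
      rcases lt_trichotomy (h r) 0 with hr0 | hr0 | hr0
      · exfalso
        have hsub2 : Icc r t₀ ⊆ Ioo a b := fun x hx =>
          ⟨lt_of_lt_of_le hs'Ioo.1 (le_trans (le_of_lt hr.1) hx.1), lt_of_le_of_lt hx.2 ht₀.2⟩
        obtain ⟨c, hc, hc0⟩ := intermediate_value_Icc (hr.2) (hch.mono hsub2)
          (⟨le_of_lt hr0, le_of_lt hp0⟩ : (0:ℝ) ∈ Icc (h r) (h t₀))
        have : c ≤ s' := le_csSup hbdd ⟨⟨le_trans hus' (le_trans (le_of_lt hr.1) hc.1), hc.2⟩, hc0⟩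
        linarith [hc.1, hr.1]
      · exfalso
        have : r ≤ s' := le_csSup hbdd ⟨⟨le_trans hus' (le_of_lt hr.1), hr.2⟩, hr0⟩
        linarith [hr.1]
      · exact hr0
    -- g strictly increasing on [s', t₀]
    have hsub3 : Icc s' t₀ ⊆ Ioo a b := fun x hx =>
      ⟨lt_of_lt_of_le hs'Ioo.1 hx.1, lt_of_le_of_lt hx.2 ht₀.2⟩
    have hgmono : StrictMonoOn (fun t => f₂ t - f₁ t) (Icc s' t₀) := by
      apply strictMonoOn_of_deriv_pos (convex_Icc _ _) (hgcont.mono hsub3)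
      intro x hx
      rw [interior_Icc] at hx
      rw [(hgderiv x (hsub3 (Ioo_subset_Icc_self hx))).deriv]
      exact hpos' x ⟨hx.1, le_of_lt hx.2⟩
    have hgs' : f₂ s' - f₁ s' < 0 := by
      have := hgmono (left_mem_Icc.2 (le_of_lt hs't₀)) (right_mem_Icc.2 (le_of_lt hs't₀)) hs't₀
      simp only at this
      linarith [this, (by rw [h0, sub_self] : f₂ t₀ - f₁ t₀ = 0)]
    have hpeq : deriv f₂ s' = deriv f₁ s' := by
      have : h s' = 0 := hs'0
      simpa [hhdef, sub_eq_zero] using this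
    have hsec : 0 < deriv (deriv f₁) s' - deriv (deriv f₂) s' :=
      cmc_second_deriv_pos d hd hpos₂ hpos₁ hder₂ hode₂ hode₁ hs'Ioo hpeq (by linarith)
    have hnn : ∀ t ∈ Ioo s' t₀, 0 ≤ h t := fun t ht =>
      le_of_lt (hpos' t ⟨ht.1, le_of_lt ht.2⟩)
    have := deriv_nonneg_of_nonneg_right hs't₀ (hhderiv s' hs'Ioo) hs'0 hnn
    linarith
  · -- t₀ < u : take s' = sInf of zeros in [t₀, u]
    set Z := {r ∈ Icc t₀ u | h r = 0} with hZdef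
    have hsubZ : Icc t₀ u ⊆ Ioo a b := fun r hr =>
      ⟨lt_of_lt_of_le ht₀.1 hr.1, lt_of_le_of_lt hr.2 hu.2⟩
    have hZclosed : IsClosed Z :=
      (hch.mono hsubZ).preimage_isClosed_of_isClosed isClosed_Icc isClosed_singleton
    have hZne : Z.Nonempty := ⟨u, ⟨le_of_lt htu, le_rfl⟩, hu0⟩
    have hbdd : BddBelow Z := (bddBelow_Icc (a := u) (b := t₀)).mono (sep_subset _ _)
    set s' := sInf Z with hs'def
    have hs'mem : s' ∈ Z := hZclosed.csInf_mem hZne hbdd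
    obtain ⟨⟨hts', hs'u⟩, hs'0⟩ := hs'mem
    have ht₀s' : t₀ < s' := lt_of_le_of_ne hts' (fun he => (ne_of_gt hp0) (he ▸ hs'0))
    have hs'Ioo : s' ∈ Ioo a b := hsubZ ⟨hts', hs'u⟩
    have hpos' : ∀ r ∈ Ico t₀ s', 0 < h r := by
      intro r hr
      rcases lt_trichotomy (h r) 0 with hr0 | hr0 | hr0
      · exfalso
        have hsub2 : Icc t₀ r ⊆ Ioo a b := fun x hx =>
          ⟨lt_of_lt_of_le ht₀.1 hx.1,
            lt_of_le_of_lt hx.2 (lt_of_lt_of_le hr.2 (le_trans hs'u (le_of_lt hu.2)))⟩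
        obtain ⟨c, hc, hc0⟩ := intermediate_value_Icc' (hr.1) (hch.mono hsub2)
          (⟨le_of_lt hr0, le_of_lt hp0⟩ : (0:ℝ) ∈ Icc (h r) (h t₀))
        have : s' ≤ c := csInf_le hbdd ⟨⟨hc.1, le_trans hc.2 (le_trans (le_of_lt hr.2) hs'u)⟩, hc0⟩
        linarith [hc.2, hr.2]
      · exfalso
        have : s' ≤ r := csInf_le hbdd ⟨⟨hr.1, le_trans (le_of_lt hr.2) hs'u⟩, hr0⟩
        linarith [hr.2]
      · exact hr0
    have hsub3 : Icc t₀ s' ⊆ Ioo a b := fun x hx =>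
      ⟨lt_of_lt_of_le ht₀.1 hx.1, lt_of_le_of_lt hx.2 hs'Ioo.2⟩
    have hgmono : StrictMonoOn (fun t => f₂ t - f₁ t) (Icc t₀ s') := by
      apply strictMonoOn_of_deriv_pos (convex_Icc _ _) (hgcont.mono hsub3)
      intro x hx
      rw [interior_Icc] at hx
      rw [(hgderiv x (hsub3 (Ioo_subset_Icc_self hx))).deriv]
      exact hpos' x ⟨le_of_lt hx.1, hx.2⟩
    have hgs' : 0 < f₂ s' - f₁ s' := by
      have := hgmono (left_mem_Icc.2 (le_of_lt ht₀s')) (right_mem_Icc.2 (le_of_lt ht₀s')) ht₀s'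
      simp only at this
      linarith [this, (by rw [h0, sub_self] : f₂ t₀ - f₁ t₀ = 0)]
    have hpeq : deriv f₁ s' = deriv f₂ s' := by
      have : h s' = 0 := hs'0
      have := sub_eq_zero.1 this
      linarith
    have hsec : 0 < deriv (deriv f₂) s' - deriv (deriv f₁) s' :=
      cmc_second_deriv_pos d hd hpos₁ hpos₂ hder₁ hode₁ hode₂ hs'Ioo hpeq (by linarith)
    have hnn : ∀ t ∈ Ioo t₀ s', 0 ≤ h t := fun t ht =>
      le_of_lt (hpos' t ⟨le_of_lt ht.1, ht.2⟩)
    have := deriv_nonpos_of_nonneg_left ht₀s' (hhderiv s' hs'Ioo) hs'0 hnn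
    linarith


/-- Two distinct solutions of the spherically symmetric CMC ODE intersect at most once,
and if they do intersect then their difference is strictly monotonic. -/
theorem stmt8 (d : ℕ) (hd : 1 ≤ d) (a b : ℝ) (f₁ f₂ : ℝ → ℝ)
    (hf₁ : ContDiffOn ℝ 2 f₁ (Set.Ioo a b))
    (hf₂ : ContDiffOn ℝ 2 f₂ (Set.Ioo a b))
    (hpos₁ : ∀ t ∈ Set.Ioo a b, 0 < f₁ t)
    (hpos₂ : ∀ t ∈ Set.Ioo a b, 0 < f₂ t)
    (hder₁ : ∀ t ∈ Set.Ioo a b, |deriv f₁ t| < 1)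
    (hder₂ : ∀ t ∈ Set.Ioo a b, |deriv f₂ t| < 1)
    (hode₁ : ∀ t ∈ Set.Ioo a b,
      f₁ t * deriv (deriv f₁) t + (d : ℝ) * (1 - (deriv f₁ t) ^ 2)
        = ((d : ℝ) + 1) * f₁ t * (1 - (deriv f₁ t) ^ 2) ^ ((3 : ℝ) / 2))
    (hode₂ : ∀ t ∈ Set.Ioo a b,
      f₂ t * deriv (deriv f₂) t + (d : ℝ) * (1 - (deriv f₂ t) ^ 2)
        = ((d : ℝ) + 1) * f₂ t * (1 - (deriv f₂ t) ^ 2) ^ ((3 : ℝ) / 2))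
    (hdist : ¬ Set.EqOn f₁ f₂ (Set.Ioo a b)) :
    Set.Subsingleton {t ∈ Set.Ioo a b | f₁ t = f₂ t} ∧
    ((∃ t ∈ Set.Ioo a b, f₁ t = f₂ t) →
      StrictMonoOn (fun t => f₂ t - f₁ t) (Set.Ioo a b) ∨
      StrictAntiOn (fun t => f₂ t - f₁ t) (Set.Ioo a b)) := by
  have hO : IsOpen (Set.Ioo a b) := isOpen_Ioo
  have hgcont : ContinuousOn (fun t => f₂ t - f₁ t) (Set.Ioo a b) :=
    hf₂.continuousOn.sub hf₁.continuousOn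
  have hgderiv : ∀ t ∈ Set.Ioo a b,
      HasDerivAt (fun t => f₂ t - f₁ t) (deriv f₂ t - deriv f₁ t) t := fun t ht =>
    (((hf₂.differentiableOn (by norm_num)).differentiableAt (hO.mem_nhds ht)).hasDerivAt).sub
      (((hf₁.differentiableOn (by norm_num)).differentiableAt (hO.mem_nhds ht)).hasDerivAt)
  have key : ∀ t₀ ∈ Set.Ioo a b, f₁ t₀ = f₂ t₀ →
      StrictMonoOn (fun t => f₂ t - f₁ t) (Set.Ioo a b) ∨
      StrictAntiOn (fun t => f₂ t - f₁ t) (Set.Ioo a b) := by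
    intro t₀ ht₀ he
    rcases lt_trichotomy (deriv f₂ t₀ - deriv f₁ t₀) 0 with hc | hc | hc
    · right
      have hall := cmc_diff_deriv_pos d hd hf₂ hf₁ hpos₂ hpos₁ hder₂ hder₁ hode₂ hode₁
        ht₀ he.symm (by linarith)
      apply strictAntiOn_of_deriv_neg (convex_Ioo a b) hgcont
      intro x hx
      rw [interior_Ioo] at hx
      rw [(hgderiv x hx).deriv]
      linarith [hall x hx]
    · exact absurd (cmc_eqOn d hf₁ hf₂ hpos₁ hpos₂ hder₁ hode₁ hode₂ ht₀ he
        (by linarith)) hdist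
    · left
      have hall := cmc_diff_deriv_pos d hd hf₁ hf₂ hpos₁ hpos₂ hder₁ hder₂ hode₁ hode₂
        ht₀ he hc
      apply strictMonoOn_of_deriv_pos (convex_Ioo a b) hgcont
      intro x hx
      rw [interior_Ioo] at hx
      rw [(hgderiv x hx).deriv]
      exact hall x hx
  constructor
  · rintro t₁ ⟨ht₁, he₁⟩ t₂ ⟨ht₂, he₂⟩
    by_contra hne
    have hg12 : f₂ t₁ - f₁ t₁ = f₂ t₂ - f₁ t₂ := by rw [← he₁, ← he₂, sub_self, sub_self]
    rcases key t₁ ht₁ he₁ with H | H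
    · exact hne (H.injOn ht₁ ht₂ hg12)
    · exact hne (H.injOn ht₁ ht₂ hg12)
  · rintro ⟨t₀, ht₀, he⟩
    exact key t₀ ht₀ he
end

section
/- Let f be a positive C² solution of the spherically symmetric CMC ODE on (t₀, ∞) with |f'| < 1 and lim_{t→∞} f(t) = ∞. Then lim_{t→∞} f'(t) = 1. -/
/-- If a positive solution of the spherically symmetric CMC ODE expands indefinitely, then
`f'(t) → 1` as `t → ∞`. -/
theorem stmt9 (d : ℕ) (hd : 1 ≤ d) (t₀ : ℝ) (f : ℝ → ℝ)
    (hf : ContDiffOn ℝ 2 f (Set.Ioi t₀))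
    (hpos : ∀ t ∈ Set.Ioi t₀, 0 < f t)
    (hder : ∀ t ∈ Set.Ioi t₀, |deriv f t| < 1)
    (hode : ∀ t ∈ Set.Ioi t₀,
      f t * deriv (deriv f) t + (d : ℝ) * (1 - (deriv f t) ^ 2)
        = ((d : ℝ) + 1) * f t * (1 - (deriv f t) ^ 2) ^ ((3 : ℝ) / 2))
    (hlim : Filter.Tendsto f Filter.atTop Filter.atTop) :
    Filter.Tendsto (deriv f) Filter.atTop (nhds 1) := by
  have hopen : IsOpen (Set.Ioi t₀) := isOpen_Ioi
  have hfd : ∀ t ∈ Set.Ioi t₀, DifferentiableAt ℝ f t := fun t ht =>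
    (hf.differentiableOn (by norm_num)).differentiableAt (hopen.mem_nhds ht)
  have hf1 : ContDiffOn ℝ 1 (deriv f) (Set.Ioi t₀) :=
    hf.deriv_of_isOpen hopen le_rfl
  have hfd' : ∀ t ∈ Set.Ioi t₀, DifferentiableAt ℝ (deriv f) t := fun t ht =>
    (hf1.differentiableOn (by norm_num)).differentiableAt (hopen.mem_nhds ht)
  have hcont' : ContinuousOn (deriv f) (Set.Ioi t₀) := hf1.continuousOn
  have hcontf : ContinuousOn f (Set.Ioi t₀) := fun t ht =>
    (hfd t ht).continuousAt.continuousWithinAt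
  set G : ℝ → ℝ := fun u => (1 - (deriv f u) ^ 2) *
      (((d : ℝ) + 1) * Real.sqrt (1 - (deriv f u) ^ 2) - (d : ℝ) / f u) with hGdef
  -- the ODE expresses f'' as a continuous function of f and f'
  have hGf : ∀ t ∈ Set.Ioi t₀, deriv (deriv f) t = G t := by
    intro t ht
    have hp := abs_lt.mp (hder t ht)
    have hx : 0 < 1 - (deriv f t) ^ 2 := by nlinarith [hp.1, hp.2]
    have hft := hpos t ht
    have hrp : (1 - (deriv f t) ^ 2) ^ ((3 : ℝ) / 2)
        = (1 - (deriv f t) ^ 2) * Real.sqrt (1 - (deriv f t) ^ 2) := by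
      rw [show (3 : ℝ) / 2 = 1 + 1 / 2 by norm_num, Real.rpow_add hx, Real.rpow_one,
        Real.sqrt_eq_rpow]
    have hode' := hode t ht
    rw [hrp] at hode'
    have h2 : f t * deriv (deriv f) t = f t * G t := by
      have hGt : f t * G t = ((d : ℝ) + 1) * f t *
          ((1 - (deriv f t) ^ 2) * Real.sqrt (1 - (deriv f t) ^ 2))
          - (d : ℝ) * (1 - (deriv f t) ^ 2) := by
        simp only [hGdef]
        field_simp
      rw [hGt]; linarith
    exact mul_left_cancel₀ (ne_of_gt hft) h2
  have hGcont : ContinuousOn G (Set.Ioi t₀) := by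
    apply ContinuousOn.mul
    · exact continuousOn_const.sub (hcont'.pow 2)
    · apply ContinuousOn.sub
      · exact continuousOn_const.mul
          (Real.continuous_sqrt.comp_continuousOn (continuousOn_const.sub (hcont'.pow 2)))
      · exact continuousOn_const.div hcontf (fun t ht => ne_of_gt (hpos t ht))
  have key : ∀ c : ℝ, 0 ≤ c → c < 1 → ∀ᶠ t in Filter.atTop, c ≤ deriv f t := by
    intro c hc0 hc1
    have hc2 : 0 < 1 - c ^ 2 := by nlinarith
    set s1 := Real.sqrt (1 - c ^ 2) with hs1def
    have hs1 : 0 < s1 := Real.sqrt_pos.mpr hc2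
    set M := 2 * (d : ℝ) / (((d : ℝ) + 1) * s1) + 1 with hMdef
    have hM0 : 0 < M := by positivity
    have hMgt : (d : ℝ) / M < ((d : ℝ) + 1) * s1 / 2 := by
      rw [div_lt_iff₀ hM0]
      have hne : ((d : ℝ) + 1) * s1 ≠ 0 := by positivity
      have hexp : ((d : ℝ) + 1) * s1 / 2 * M = (d : ℝ) + ((d : ℝ) + 1) * s1 / 2 := by
        rw [hMdef]; field_simp
      rw [hexp]
      have : 0 < ((d : ℝ) + 1) * s1 / 2 := by positivity
      linarith
    obtain ⟨T, hT⟩ : ∃ T, ∀ t ≥ T, t₀ < t ∧ M ≤ f t := by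
      obtain ⟨T, hT⟩ := Filter.eventually_atTop.mp
        ((hlim.eventually_ge_atTop M).and (Filter.eventually_gt_atTop t₀))
      exact ⟨T, fun t ht => ⟨(hT t ht).2, (hT t ht).1⟩⟩
    -- G is bounded below on the region 0 ≤ f' ≤ c, f ≥ M
    have hGpos : ∀ u, T ≤ u → 0 ≤ deriv f u → deriv f u ≤ c →
        (1 - c ^ 2) * (((d : ℝ) + 1) * s1 / 2) ≤ G u := by
      intro u hu h0 hcu
      obtain ⟨hu0, huM⟩ := hT u hu
      have hp2 : (deriv f u) ^ 2 ≤ c ^ 2 := by nlinarith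
      have hv : 1 - c ^ 2 ≤ 1 - (deriv f u) ^ 2 := by linarith
      have hsq : s1 ≤ Real.sqrt (1 - (deriv f u) ^ 2) := Real.sqrt_le_sqrt hv
      have hdiv : (d : ℝ) / f u ≤ (d : ℝ) / M :=
        div_le_div_of_nonneg_left (by positivity) hM0 huM
      have hmul : ((d : ℝ) + 1) * s1 ≤ ((d : ℝ) + 1) * Real.sqrt (1 - (deriv f u) ^ 2) :=
        mul_le_mul_of_nonneg_left hsq (by positivity)
      have h1 : ((d : ℝ) + 1) * s1 / 2 ≤
          ((d : ℝ) + 1) * Real.sqrt (1 - (deriv f u) ^ 2) - (d : ℝ) / f u := by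
        linarith
      calc (1 - c ^ 2) * (((d : ℝ) + 1) * s1 / 2)
          ≤ (1 - (deriv f u) ^ 2) *
            (((d : ℝ) + 1) * Real.sqrt (1 - (deriv f u) ^ 2) - (d : ℝ) / f u) := by
            apply mul_le_mul hv h1 (by positivity) (by linarith)
        _ = G u := rfl
    -- barrier lemma: levels b ∈ [0,c] cannot be crossed downward
    have barrier : ∀ b, 0 ≤ b → b ≤ c → ∀ s, T ≤ s → b ≤ deriv f s →
        ∀ t, s ≤ t → b ≤ deriv f t := by
      intro b hb0 hbc s hs hfs t hst
      by_contra hbt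
      push_neg at hbt
      set S := {u : ℝ | u ∈ Set.Icc s t ∧ b ≤ deriv f u} with hSdef
      have hsub : Set.Icc s t ⊆ Set.Ioi t₀ := fun u hu =>
        lt_of_lt_of_le (hT s hs).1 hu.1
      have hScl : IsClosed S := by
        have : S = Set.Icc s t ∩ (deriv f) ⁻¹' (Set.Ici b) := by
          ext u; simp [hSdef, Set.mem_Icc, and_assoc]
        rw [this]
        exact (hcont'.mono hsub).preimage_isClosed_of_isClosed isClosed_Icc isClosed_Ici
      have hScpt : IsCompact S := isCompact_Icc.of_isClosed_subset hScl (fun u hu => hu.1)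
      have hSne : S.Nonempty := ⟨s, ⟨le_refl s, hst⟩, hfs⟩
      have hrS := hScpt.sSup_mem hSne
      set r := sSup S with hrdef
      have hrIcc : r ∈ Set.Icc s t := hrS.1
      have hfr : b ≤ deriv f r := hrS.2
      have hrt : r < t := lt_of_le_of_ne hrIcc.2 (fun h => by rw [h] at hfr; linarith)
      have hlater : ∀ u, r < u → u ≤ t → deriv f u < b := by
        intro u h1 h2
        by_contra h3
        push_neg at h3
        have hu : u ∈ S := ⟨⟨le_trans hrIcc.1 h1.le, h2⟩, h3⟩
        have := le_csSup hScpt.bddAbove hu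
        linarith
      have hrT : T ≤ r := le_trans hs hrIcc.1
      have hrt₀ : r ∈ Set.Ioi t₀ := hsub ⟨hrIcc.1, hrIcc.2⟩
      rcases lt_or_ge b (deriv f r) with hgt | hle
      · have hc : ContinuousAt (deriv f) r := hcont'.continuousAt (hopen.mem_nhds hrt₀)
        have hev : ∀ᶠ u in nhds r, b < deriv f u := hc.eventually_const_lt hgt
        obtain ⟨δ, hδ0, hδ⟩ := Metric.eventually_nhds_iff.mp hev
        set u := min (r + δ / 2) t with hudef
        have hu1 : r < u := lt_min (by linarith) hrt
        have h1 : deriv f u < b := hlater u hu1 (min_le_right _ _)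
        have h2 : b < deriv f u := by
          apply hδ
          rw [Real.dist_eq, abs_of_pos (sub_pos.mpr hu1)]
          have : u ≤ r + δ / 2 := min_le_left _ _
          linarith
        linarith
      · have hfrb : deriv f r = b := le_antisymm hle hfr
        have hGr : 0 < G r := by
          have := hGpos r hrT (hfrb ▸ hb0) (hfrb ▸ hbc)
          have hpos' : 0 < (1 - c ^ 2) * (((d : ℝ) + 1) * s1 / 2) := by positivity
          linarith
        have hcG : ContinuousAt G r := hGcont.continuousAt (hopen.mem_nhds hrt₀)
        have hev : ∀ᶠ u in nhds r, 0 < G u := hcG.eventually_const_lt hGr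
        obtain ⟨δ, hδ0, hδ⟩ := Metric.eventually_nhds_iff.mp hev
        set u := min (r + δ / 2) t with hudef
        have hu1 : r < u := lt_min (by linarith) hrt
        have hut : u ≤ t := min_le_right _ _
        have hsubu : Set.Icc r u ⊆ Set.Ioi t₀ := fun x hx =>
          hsub ⟨le_trans hrIcc.1 hx.1, le_trans hx.2 hut⟩
        have hmono : StrictMonoOn (deriv f) (Set.Icc r u) := by
          apply strictMonoOn_of_deriv_pos (convex_Icc r u) (hcont'.mono hsubu)
          intro x hx
          rw [interior_Icc] at hx
          have hx₀ : x ∈ Set.Ioi t₀ := hsubu ⟨hx.1.le, hx.2.le⟩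
          rw [hGf x hx₀]
          apply hδ
          rw [Real.dist_eq, abs_of_pos (sub_pos.mpr hx.1)]
          have h3 : x < r + δ / 2 := lt_of_lt_of_le hx.2 (min_le_left _ _)
          linarith
        have h4 := hmono (Set.left_mem_Icc.mpr hu1.le) (Set.right_mem_Icc.mpr hu1.le) hu1
        have h5 := hlater u hu1 hut
        rw [hfrb] at h4
        linarith
    -- step 2 : some point with f' ≥ 0
    obtain ⟨s, hsT, hs0⟩ : ∃ s, T ≤ s ∧ 0 ≤ deriv f s := by
      by_contra h
      push_neg at h
      have hdec : ∀ t, T ≤ t → f t ≤ f T := by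
        intro t ht
        have hsub : Set.Icc T t ⊆ Set.Ioi t₀ := fun x hx =>
          lt_of_lt_of_le (hT T le_rfl).1 hx.1
        have hanti : AntitoneOn f (Set.Icc T t) := by
          apply antitoneOn_of_deriv_nonpos (convex_Icc T t) (hcontf.mono hsub)
          · intro x hx
            rw [interior_Icc] at hx
            exact (hfd x (hsub ⟨hx.1.le, hx.2.le⟩)).differentiableWithinAt
          · intro x hx
            rw [interior_Icc] at hx
            exact (h x hx.1.le).le
        exact hanti (Set.left_mem_Icc.mpr ht) (Set.right_mem_Icc.mpr ht) ht
      obtain ⟨a, ha⟩ := Filter.eventually_atTop.mp (hlim.eventually_gt_atTop (f T))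
      have h1 := hdec (max a T) (le_max_right _ _)
      have h2 := ha (max a T) (le_max_left _ _)
      linarith
    have step3 : ∀ t, s ≤ t → 0 ≤ deriv f t := barrier 0 le_rfl hc0 s hsT hs0
    -- step 4 : some point with f' ≥ c
    obtain ⟨s', hss', hsc⟩ : ∃ s', s ≤ s' ∧ c ≤ deriv f s' := by
      by_contra h
      push_neg at h
      set δ := (1 - c ^ 2) * (((d : ℝ) + 1) * s1 / 2) with hδdef
      have hδ0 : 0 < δ := by positivity
      have grow : ∀ t, s ≤ t → deriv f s + δ * (t - s) ≤ deriv f t := by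
        intro t ht
        have hsubst : Set.Icc s t ⊆ Set.Ioi t₀ := fun x hx =>
          lt_of_lt_of_le (hT s hsT).1 hx.1
        have hmono : MonotoneOn (fun u => deriv f u - δ * u) (Set.Icc s t) := by
          apply monotoneOn_of_deriv_nonneg (convex_Icc s t)
          · exact (hcont'.mono hsubst).sub (continuous_const.mul continuous_id).continuousOn
          · intro x hx
            rw [interior_Icc] at hx
            exact ((hfd' x (hsubst ⟨hx.1.le, hx.2.le⟩)).sub
              ((differentiableAt_id.const_mul δ))).differentiableWithinAt
          · intro x hx
            rw [interior_Icc] at hx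
            have hx₀ : x ∈ Set.Ioi t₀ := hsubst ⟨hx.1.le, hx.2.le⟩
            have hxT : T ≤ x := le_trans hsT hx.1.le
            have hG := hGpos x hxT (step3 x hx.1.le) (h x hx.1.le).le
            have hDA : HasDerivAt (fun u => deriv f u - δ * u)
                (deriv (deriv f) x - δ) x := by
              simpa using ((hfd' x hx₀).hasDerivAt.fun_sub ((hasDerivAt_id' x).const_mul δ))
            rw [hDA.deriv, hGf x hx₀]
            linarith
        have h6 := hmono (Set.left_mem_Icc.mpr ht) (Set.right_mem_Icc.mpr ht) ht
        simp only at h6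
        nlinarith
      have hst : s ≤ s + 2 / δ := by
        have : 0 < 2 / δ := by positivity
        linarith
      have h7 := grow (s + 2 / δ) hst
      have h8 := abs_lt.mp (hder (s + 2 / δ) (lt_of_lt_of_le (hT s hsT).1 hst))
      have h9 : δ * (s + 2 / δ - s) = 2 := by
        field_simp
        ring
      linarith
    have step5 := barrier c hc0 le_rfl s' (le_trans hsT hss') hsc
    exact Filter.eventually_atTop.mpr ⟨s', fun t ht => step5 t ht⟩
  rw [Metric.tendsto_nhds]
  intro ε hε
  have hc0 : (0 : ℝ) ≤ max (1 - ε / 2) 0 := le_max_right _ _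
  have hc1 : max (1 - ε / 2) 0 < 1 := max_lt (by linarith) one_pos
  filter_upwards [key _ hc0 hc1, Filter.eventually_gt_atTop t₀] with t h1 h2
  have h3 := abs_lt.mp (hder t h2)
  have h4 : 1 - ε / 2 ≤ max (1 - ε / 2) 0 := le_max_left _ _
  rw [Real.dist_eq, abs_lt]
  constructor <;> linarith
end

section
/- Let f be a positive C² solution of the spherically symmetric CMC ODE on (t₀, ∞) with |f'| < 1 that expands indefinitely (f(t) → ∞). Then 1 − f'(t) is integrable on (t₀, ∞), and consequently there exists a constant τ₀ such that |f(t) − (t − τ₀)| → 0 as t → ∞; i.e., the solution is asymptotic to a light cone. -/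
open Set Filter MeasureTheory

set_option maxHeartbeats 1000000 in
/-- For an indefinitely expanding solution of the spherically symmetric CMC ODE,
`1 − f'` is integrable on `(t₀, ∞)`, and consequently the solution is asymptotic to a
light cone: `|f(t) − (t − τ₀)| → 0` for some constant `τ₀`. -/
theorem stmt10 (d : ℕ) (hd : 1 ≤ d) (t₀ : ℝ) (f : ℝ → ℝ)
    (hf : ContDiffOn ℝ 2 f (Set.Ioi t₀))
    (hpos : ∀ t ∈ Set.Ioi t₀, 0 < f t)
    (hder : ∀ t ∈ Set.Ioi t₀, |deriv f t| < 1)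
    (hode : ∀ t ∈ Set.Ioi t₀,
      f t * deriv (deriv f) t + (d : ℝ) * (1 - (deriv f t) ^ 2)
        = ((d : ℝ) + 1) * f t * (1 - (deriv f t) ^ 2) ^ ((3 : ℝ) / 2))
    (hlim : Filter.Tendsto f Filter.atTop Filter.atTop) :
    MeasureTheory.IntegrableOn (fun t => 1 - deriv f t) (Set.Ioi t₀) ∧
    ∃ τ₀ : ℝ, Filter.Tendsto (fun t => |f t - (t - τ₀)|) Filter.atTop (nhds 0) := by
  obtain ⟨k, rfl⟩ : ∃ k, d = k + 1 := ⟨d - 1, by omega⟩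
  have hsOpen : IsOpen (Set.Ioi t₀) := isOpen_Ioi
  set v := deriv f with hv_def
  -- regularity facts
  have hv1 : ContDiffOn ℝ 1 v (Set.Ioi t₀) := hf.deriv_of_isOpen hsOpen (by norm_num)
  have hvc : ContinuousOn v (Set.Ioi t₀) := hv1.continuousOn
  have hfd : ∀ t ∈ Set.Ioi t₀, HasDerivAt f (v t) t := fun t ht =>
    ((hf.contDiffAt (hsOpen.mem_nhds ht)).differentiableAt (by norm_num)).hasDerivAt
  have hvd : ∀ t ∈ Set.Ioi t₀, HasDerivAt v (deriv v t) t := fun t ht =>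
    ((hv1.contDiffAt (hsOpen.mem_nhds ht)).differentiableAt (by norm_num)).hasDerivAt
  -- positivity
  have hw : ∀ t ∈ Set.Ioi t₀, 0 < 1 - v t ^ 2 := by
    intro t ht
    have h := hder t ht
    nlinarith [sq_abs (v t), abs_nonneg (v t)]
  have hg : ∀ t ∈ Set.Ioi t₀, 0 < Real.sqrt (1 - v t ^ 2) :=
    fun t ht => Real.sqrt_pos.2 (hw t ht)
  have hgsq : ∀ t ∈ Set.Ioi t₀, Real.sqrt (1 - v t ^ 2) ^ 2 = 1 - v t ^ 2 :=
    fun t ht => Real.sq_sqrt (hw t ht).le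
  -- rewrite the ODE
  have hode' : ∀ t ∈ Set.Ioi t₀,
      deriv v t = ((k : ℝ) + 2) * Real.sqrt (1 - v t ^ 2) ^ 3
        - ((k : ℝ) + 1) * Real.sqrt (1 - v t ^ 2) ^ 2 / f t := by
    intro t ht
    have h := hode t ht
    have hrpow : (1 - v t ^ 2) ^ ((3 : ℝ) / 2) = Real.sqrt (1 - v t ^ 2) ^ 3 := by
      rw [show ((3 : ℝ) / 2) = (1 / 2) * 3 by ring, Real.rpow_mul (hw t ht).le,
        Real.sqrt_eq_rpow]
      rw [show (3 : ℝ) = ((3 : ℕ) : ℝ) by norm_num, Real.rpow_natCast]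
    rw [hrpow] at h
    have hfne : f t ≠ 0 := (hpos t ht).ne'
    rw [hgsq t ht]
    push_cast at h
    field_simp at h ⊢
    linarith [h]
  -- the first integral E
  set E : ℝ → ℝ := fun t => f t ^ (k + 1) / Real.sqrt (1 - v t ^ 2) - f t ^ (k + 2) with hE_def
  have hE : ∀ t ∈ Set.Ioi t₀, HasDerivAt E 0 t := by
    intro t ht
    have h1 : HasDerivAt (fun t => 1 - v t ^ 2) (-(2 * v t * deriv v t)) t := by
      have := ((hvd t ht).pow 2)
      have h2 := (hasDerivAt_const t (1 : ℝ)).sub this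
      refine h2.congr_deriv ?_
      push_cast
      ring
    have hne : 1 - v t ^ 2 ≠ 0 := (hw t ht).ne'
    have h2 : HasDerivAt (fun t => Real.sqrt (1 - v t ^ 2))
        (1 / (2 * Real.sqrt (1 - v t ^ 2)) * (-(2 * v t * deriv v t))) t :=
      (Real.hasDerivAt_sqrt hne).comp t h1
    have h3 : HasDerivAt (fun t => f t ^ (k + 1)) (((k : ℝ) + 1) * f t ^ k * v t) t := by
      have h := (hfd t ht).pow (k + 1)
      simp only [Nat.add_sub_cancel] at h
      refine h.congr_deriv ?_
      push_cast; ring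
    have h4 : HasDerivAt (fun t => f t ^ (k + 1 + 1)) (((k : ℝ) + 2) * f t ^ (k + 1) * v t) t := by
      have h := (hfd t ht).pow (k + 1 + 1)
      simp only [Nat.add_sub_cancel] at h
      refine h.congr_deriv ?_
      push_cast; ring
    have hgne : Real.sqrt (1 - v t ^ 2) ≠ 0 := (hg t ht).ne'
    have h5 := (h3.div h2 hgne).sub h4
    refine h5.congr_deriv ?_
    have hb := hode' t ht
    have hgsq' := hgsq t ht
    have hgpos := hg t ht
    have hfpos := hpos t ht
    set G := Real.sqrt (1 - v t ^ 2) with hG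
    set F := f t with hF
    set a := v t with ha
    set b := deriv v t with hb'
    rw [hb]
    have hFk : F ^ (k + 1) = F ^ k * F := pow_succ F k
    field_simp
    ring
  -- E is constant
  have hEdiff : DifferentiableOn ℝ E (Set.Ioi t₀) :=
    fun t ht => ((hE t ht).differentiableAt).differentiableWithinAt
  have hEconst : ∀ x ∈ Set.Ioi t₀, ∀ y ∈ Set.Ioi t₀, E x = E y := by
    intro x hx y hy
    refine (convex_Ioi t₀).is_const_of_fderivWithin_eq_zero hEdiff ?_ hx hy
    intro z hz
    have h := (hE z hz).hasFDerivAt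
    have h0 : (ContinuousLinearMap.toSpanSingleton ℝ (0 : ℝ)) = 0 := by
      ext x; simp
    rw [h0] at h
    exact h.hasFDerivWithinAt.fderivWithin (hsOpen.uniqueDiffOn z hz)
  have ht1 : t₀ + 1 ∈ Set.Ioi t₀ := by simp
  set C : ℝ := E (t₀ + 1) with hC_def
  clear_value C
  -- key algebraic identity
  have hkey : ∀ t ∈ Set.Ioi t₀,
      Real.sqrt (1 - v t ^ 2) * (f t ^ (k + 2) + C) = f t ^ (k + 1) ∧ 0 < f t ^ (k + 2) + C := by
    intro t ht
    have h := hEconst t ht (t₀ + 1) ht1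
    rw [← hC_def] at h
    have hgpos := hg t ht
    have hfpos := hpos t ht
    have h2 : f t ^ (k + 1) / Real.sqrt (1 - v t ^ 2) = f t ^ (k + 2) + C := by
      have : E t = C := h
      rw [hE_def] at this
      simp only at this
      linarith
    constructor
    · field_simp at h2
      linarith [h2]
    · rw [← h2]
      positivity
  -- choose a large starting time T
  obtain ⟨T', hT'⟩ := Filter.eventually_atTop.1 (hlim.eventually_ge_atTop (max 4 (2 * |C|)))
  set T : ℝ := max T' (max (t₀ + 1) 1) with hT_def
  have hTt₀ : t₀ < T := lt_of_lt_of_le (lt_add_one t₀) ((le_max_left _ _).trans (le_max_right _ _))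
  have hT1 : (1 : ℝ) ≤ T := (le_max_right _ _).trans (le_max_right _ _)
  have hTM : ∀ t, T ≤ t → max 4 (2 * |C|) ≤ f t := fun t ht => hT' t ((le_max_left _ _).trans ht)
  have hmem : ∀ t, T ≤ t → t ∈ Set.Ioi t₀ := fun t h => lt_of_lt_of_le hTt₀ h
  clear_value T
  -- quantitative bounds for t ≥ T
  have hquant : ∀ t, T ≤ t → 1 - v t ^ 2 ≤ 4 / f t ^ 2 ∧ 3 / 4 ≤ v t ^ 2 := by
    intro t ht
    have htmem := hmem t ht
    have hf4 : 4 ≤ f t := (le_max_left _ _).trans (hTM t ht)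
    have hfC : 2 * |C| ≤ f t := (le_max_right _ _).trans (hTM t ht)
    have hf1 : (1 : ℝ) ≤ f t := by linarith
    have hfpos : 0 < f t := by linarith
    have hApos : 0 < f t ^ (k + 1) := pow_pos hfpos _
    have hpow : f t ≤ f t ^ (k + 2) := le_self_pow₀ hf1 (by omega)
    have hFC2 : f t ^ (k + 2) / 2 ≤ f t ^ (k + 2) + C := by
      have h1 : -|C| ≤ C := neg_abs_le C
      linarith
    obtain ⟨hk1, hk2⟩ := hkey t htmem
    have hgpos := hg t htmem
    have hsucc : f t ^ (k + 2) = f t ^ (k + 1) * f t := pow_succ _ _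
    have hgb : Real.sqrt (1 - v t ^ 2) * f t ≤ 2 := by
      have h2 : Real.sqrt (1 - v t ^ 2) * (f t ^ (k + 2) / 2)
          ≤ Real.sqrt (1 - v t ^ 2) * (f t ^ (k + 2) + C) :=
        mul_le_mul_of_nonneg_left hFC2 hgpos.le
      rw [hk1, hsucc] at h2
      nlinarith [mul_pos hgpos hfpos]
    have h1v : 1 - v t ^ 2 ≤ 4 / f t ^ 2 := by
      have hsq : (Real.sqrt (1 - v t ^ 2) * f t) ^ 2 ≤ 2 ^ 2 := by
        nlinarith [mul_pos hgpos hfpos]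
      rw [mul_pow, hgsq t htmem] at hsq
      rw [le_div_iff₀ (by positivity : (0:ℝ) < f t ^ 2)]
      nlinarith
    refine ⟨h1v, ?_⟩
    have : 4 / f t ^ 2 ≤ 1 / 4 := by
      rw [div_le_div_iff₀ (by positivity) (by norm_num)]
      nlinarith
    linarith
  -- the sign of v on [T, ∞)
  have hvne : ∀ t, T ≤ t → v t ≠ 0 := by
    intro t ht h0
    have := (hquant t ht).2
    rw [h0] at this
    norm_num at this
  have hvT : 0 < v T := by
    by_contra hvT
    push_neg at hvT
    have hneg : ∀ t, T ≤ t → v t < 0 := by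
      intro t ht
      by_contra h
      push_neg at h
      obtain ⟨c, hc, hvc⟩ := intermediate_value_Icc ht
        (hvc.mono fun x hx => hmem x hx.1) (⟨hvT, h⟩ : (0 : ℝ) ∈ Set.Icc (v T) (v t))
      exact hvne c hc.1 hvc
    have hanti : AntitoneOn f (Set.Ici T) := by
      refine antitoneOn_of_deriv_nonpos (convex_Ici T)
        (hf.continuousOn.mono fun x hx => hmem x hx) ?_ ?_
      · intro x hx
        rw [interior_Ici] at hx
        exact (hfd x (hmem x hx.le)).differentiableAt.differentiableWithinAt
      · intro x hx
        rw [interior_Ici] at hx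
        exact (hneg x hx.le).le
    obtain ⟨a, ha⟩ := Filter.eventually_atTop.1
      ((hlim.eventually_ge_atTop (f T + 1)).and (Filter.eventually_ge_atTop T))
    obtain ⟨hft, ht⟩ := ha (max a T) (le_max_left _ _)
    have := hanti Set.self_mem_Ici ht ht
    linarith
  have hvhalf : ∀ t, T ≤ t → 1 / 2 ≤ v t := by
    have hvpos : ∀ t, T ≤ t → 0 < v t := by
      intro t ht
      rcases (hvne t ht).lt_or_gt with h | h
      · exfalso
        obtain ⟨c, hc, hvc⟩ := intermediate_value_Icc' ht
          (hvc.mono fun x hx => hmem x hx.1) (⟨h.le, hvT.le⟩ : (0 : ℝ) ∈ Set.Icc (v t) (v T))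
        exact hvne c hc.1 hvc
      · exact h
    intro t ht
    have h1 := (hquant t ht).2
    have h2 := hvpos t ht
    nlinarith
  -- growth of f
  have hgrow : ∀ t, T ≤ t → f T + (t - T) / 2 ≤ f t := by
    have hmono : MonotoneOn (fun x => f x - x / 2) (Set.Ici T) := by
      refine monotoneOn_of_deriv_nonneg (convex_Ici T) ?_ ?_ ?_
      · exact ((hf.continuousOn.mono fun x hx => hmem x hx).sub
          ((continuous_id.div_const 2).continuousOn))
      · intro x hx
        rw [interior_Ici] at hx
        exact (((hfd x (hmem x hx.le)).sub
          ((hasDerivAt_id x).div_const 2)).differentiableAt).differentiableWithinAt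
      · intro x hx
        rw [interior_Ici] at hx
        have hdx : deriv (fun x => f x - x / 2) x = v x - 1 / 2 :=
          ((hfd x (hmem x hx.le)).sub ((hasDerivAt_id x).div_const 2)).deriv
        rw [hdx]
        linarith [hvhalf x hx.le]
    intro t ht
    have := hmono Set.self_mem_Ici ht ht
    simp only at this
    linarith
  -- the decay bound
  have hbound : ∀ t, 2 * T ≤ t → 1 - v t ≤ 64 / t ^ 2 := by
    intro t ht2
    have hT0 : (0 : ℝ) < T := by linarith
    have ht : T ≤ t := by nlinarith
    have htpos : (0 : ℝ) < t := by nlinarith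
    have hf4 : 4 ≤ f T := (le_max_left _ _).trans (hTM T le_rfl)
    have hft : t / 4 ≤ f t := by
      have h1 := hgrow t ht
      nlinarith
    have h1 := (hquant t ht).1
    have h2 := hvhalf t ht
    have h3 : 4 / f t ^ 2 ≤ 64 / t ^ 2 := by
      rw [div_le_div_iff₀ (by nlinarith) (by positivity)]
      nlinarith
    have h4 := (abs_lt.1 (hder t (hmem t ht))).2
    nlinarith [mul_nonneg (by linarith : (0:ℝ) ≤ 1 - v t) (by linarith : (0:ℝ) ≤ v t)]
  -- integrability
  have hint : MeasureTheory.IntegrableOn (fun t => 1 - v t) (Set.Ioi t₀) := by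
    have hunion : Set.Ioc t₀ (2 * T) ∪ Set.Ioi (2 * T) = Set.Ioi t₀ :=
      Set.Ioc_union_Ioi_eq_Ioi (by linarith)
    rw [← hunion]
    refine MeasureTheory.IntegrableOn.union ?_ ?_
    · refine MeasureTheory.Measure.integrableOn_of_bounded (M := 2) measure_Ioc_lt_top.ne
        ((measurable_const.sub (measurable_deriv f)).aestronglyMeasurable) ?_
      rw [MeasureTheory.ae_restrict_iff' measurableSet_Ioc]
      filter_upwards with x hx
      have h := abs_lt.1 (hder x hx.1)
      rw [Real.norm_eq_abs, abs_of_nonneg (by linarith)]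
      linarith
    · have hT0 : (0 : ℝ) < 2 * T := by linarith
      have hmaj : MeasureTheory.IntegrableOn (fun t : ℝ => 64 * t ^ (-2 : ℝ))
          (Set.Ioi (2 * T)) :=
        (integrableOn_Ioi_rpow_of_lt (by norm_num) hT0).const_mul 64
      refine hmaj.mono'
        ((measurable_const.sub (measurable_deriv f)).aestronglyMeasurable.restrict) ?_
      rw [MeasureTheory.ae_restrict_iff' measurableSet_Ioi]
      filter_upwards with x hx
      simp only [Set.mem_Ioi] at hx
      have hxpos : (0 : ℝ) < x := by linarith
      have hx2 : 2 * T ≤ x := hx.le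
      have hxT : T ≤ x := by linarith
      have h1 := hbound x hx2
      have h2 := abs_lt.1 (hder x (hmem x hxT))
      rw [Real.norm_eq_abs, abs_of_nonneg (by linarith)]
      rw [Real.rpow_neg hxpos.le, show (2 : ℝ) = ((2 : ℕ) : ℝ) by norm_num,
        Real.rpow_natCast]
      rw [div_eq_mul_inv] at h1
      linarith
  refine ⟨hint, ?_⟩
  -- the light cone asymptotics
  have hintT : MeasureTheory.IntegrableOn (fun t => 1 - v t) (Set.Ioi T) :=
    hint.mono_set (Set.Ioi_subset_Ioi hTt₀.le)
  set J : ℝ := ∫ x in Set.Ioi T, (1 - v x) with hJ_def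
  refine ⟨T - f T + J, ?_⟩
  have hFTC : ∀ t, T ≤ t → f t - (t - (T - f T + J)) = J - ∫ x in T..t, (1 - v x) := by
    intro t ht
    have huIcc : Set.uIcc T t = Set.Icc T t := Set.uIcc_of_le ht
    have hsub : Set.uIcc T t ⊆ Set.Ioi t₀ := by
      rw [huIcc]; exact fun x hx => hmem x hx.1
    have hivi : IntervalIntegrable v MeasureTheory.volume T t :=
      (hvc.mono hsub).intervalIntegrable
    have h1 : ∫ x in T..t, v x = f t - f T :=
      intervalIntegral.integral_eq_sub_of_hasDerivAt (fun x hx => hfd x (hsub hx)) hivi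
    have h2 : ∫ x in T..t, (1 - v x) = (t - T) - (f t - f T) := by
      rw [intervalIntegral.integral_sub intervalIntegrable_const hivi, h1,
        intervalIntegral.integral_const]
      simp [smul_eq_mul]
    rw [h2]; ring
  have htend : Filter.Tendsto (fun t => ∫ x in T..t, (1 - v x)) Filter.atTop (nhds J) :=
    MeasureTheory.intervalIntegral_tendsto_integral_Ioi T hintT Filter.tendsto_id
  have h0 : Filter.Tendsto (fun t => |J - ∫ x in T..t, (1 - v x)|) Filter.atTop (nhds 0) := by
    have h1 : Filter.Tendsto (fun t => J - ∫ x in T..t, (1 - v x)) Filter.atTop (nhds (J - J)) :=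
      tendsto_const_nhds.sub htend
    rw [sub_self] at h1
    simpa using h1.abs
  refine h0.congr' ?_
  filter_upwards [Filter.eventually_ge_atTop T] with t ht
  rw [← hFTC t ht]
end

section
/- Let f be a positive C² solution of the spherically symmetric CMC ODE with |f'| ≤ 1 such that f(t) → 0 as t ↗ T for some finite T. Then |f'(t)| → 1 as t ↗ T; moreover there are ε > 0 and C > 0 such that √(1 − f'(t)²) ≤ C·(T − t) for all t ∈ (T − ε, T). -/
open Set Filter Real

private lemma rpow32 (x : ℝ) (hx : 0 ≤ x) : x ^ ((3:ℝ)/2) = x * Real.sqrt x := by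
  rw [show (3:ℝ)/2 = 1 + 1/2 by norm_num, Real.rpow_add' hx (by norm_num), Real.rpow_one,
    Real.sqrt_eq_rpow]

private lemma aux_div (p q s fv dd : ℝ) (hs : s ≠ 0) (hf : fv ≠ 0) (hs2 : s^2 = 1 - p^2)
    (hq : q = (dd+1)*((1-p^2)*s) - dd*(1-p^2)/fv) :
    dd/(fv*s) - (dd+1) = ((-q)*s - (-p)*(-(2*p*q)/(2*s)))/s^2 := by
  have h1 : ((-q)*s - (-p)*(-(2*p*q)/(2*s)))/s^2 = -q * (s^2 + p^2) / s^3 := by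
    field_simp
    ring
  rw [h1, hs2, show 1 - p^2 + p^2 = 1 by ring, mul_one, hq, ← hs2]
  field_simp
  ring


set_option maxHeartbeats 1600000 in
/-- At a finite-time collapse `f(t) → 0` as `t ↗ T` of a solution of the spherically
symmetric CMC ODE, `|f'(t)| → 1`; moreover `√(1 − f'(t)²) ≤ C·(T − t)` in a
neighbourhood of the collapse time. -/
theorem stmt11 (d : ℕ) (hd : 1 ≤ d) (a T : ℝ) (haT : a < T) (f : ℝ → ℝ)
    (hf : ContDiffOn ℝ 2 f (Set.Ioo a T))
    (hpos : ∀ t ∈ Set.Ioo a T, 0 < f t)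
    (hder : ∀ t ∈ Set.Ioo a T, |deriv f t| ≤ 1)
    (hode : ∀ t ∈ Set.Ioo a T,
      f t * deriv (deriv f) t + (d : ℝ) * (1 - (deriv f t) ^ 2)
        = ((d : ℝ) + 1) * f t * (1 - (deriv f t) ^ 2) ^ ((3 : ℝ) / 2))
    (hcollapse : Filter.Tendsto f (nhdsWithin T (Set.Iio T)) (nhds 0)) :
    Filter.Tendsto (fun t => |deriv f t|) (nhdsWithin T (Set.Iio T)) (nhds 1) ∧
    ∃ ε > (0 : ℝ), ∃ C > (0 : ℝ), ∀ t ∈ Set.Ioo (T - ε) T,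
      Real.sqrt (1 - (deriv f t) ^ 2) ≤ C * (T - t) := by
  have hopen : IsOpen (Set.Ioo a T) := isOpen_Ioo
  have hfdiff : DifferentiableOn ℝ f (Set.Ioo a T) := hf.differentiableOn (by norm_num)
  have hf1 : ContDiffOn ℝ 1 (deriv f) (Set.Ioo a T) := hf.deriv_of_isOpen isOpen_Ioo (by norm_num)
  have hfd : ∀ t ∈ Set.Ioo a T, HasDerivAt f (deriv f t) t := fun t ht =>
    (hfdiff.differentiableAt (hopen.mem_nhds ht)).hasDerivAt
  have hf'd : ∀ t ∈ Set.Ioo a T, HasDerivAt (deriv f) (deriv (deriv f) t) t := fun t ht =>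
    (((hf1.differentiableOn one_ne_zero).differentiableAt (hopen.mem_nhds ht)).hasDerivAt)
  have hf'cont : ContinuousOn (deriv f) (Set.Ioo a T) := hf1.continuousOn
  -- w ∈ [0,1]
  have hw0 : ∀ t ∈ Set.Ioo a T, 0 ≤ 1 - (deriv f t)^2 := by
    intro t ht
    have := hder t ht
    nlinarith [abs_nonneg (deriv f t), sq_abs (deriv f t)]
  have hw1 : ∀ t ∈ Set.Ioo a T, 1 - (deriv f t)^2 ≤ 1 := by
    intro t ht; nlinarith [sq_nonneg (deriv f t)]
  have hp1 : ∀ t ∈ Set.Ioo a T, -(deriv f t) ≤ 1 := by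
    intro t ht; have := hder t ht; cases abs_le.1 this; linarith
  -- f t ≤ T - t
  have hfle : ∀ t ∈ Set.Ioo a T, f t ≤ T - t := by
    intro t ht
    have hev : ∀ᶠ u in nhdsWithin T (Set.Iio T), f t ≤ f u + (u - t) := by
      filter_upwards [Ioo_mem_nhdsLT_of_mem (show T ∈ Set.Ioc t T from ⟨ht.2, le_rfl⟩)] with u hu
      have huI : u ∈ Set.Ioo a T := ⟨lt_trans ht.1 hu.1, hu.2⟩
      have := Convex.norm_image_sub_le_of_norm_deriv_le
        (fun x hx => hfdiff.differentiableAt (hopen.mem_nhds hx))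
        (fun x hx => by simpa [Real.norm_eq_abs] using hder x hx)
        (convex_Ioo a T) huI ht
      rw [Real.norm_eq_abs, Real.norm_eq_abs, one_mul] at this
      have h1 := abs_le.1 this
      have h2 : |t - u| = u - t := by rw [abs_sub_comm]; exact abs_of_nonneg (by linarith [hu.1])
      rw [h2] at h1
      linarith [h1.1]
    have hlim : Tendsto (fun u => f u + (u - t)) (nhdsWithin T (Set.Iio T)) (nhds (0 + (T - t))) := by
      exact hcollapse.add (((continuous_id.sub continuous_const).tendsto T).mono_left nhdsWithin_le_nhds)
    have := ge_of_tendsto hlim hev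
    linarith
  -- ODE rearranged
  have hode' : ∀ t ∈ Set.Ioo a T, deriv (deriv f) t =
      ((d:ℝ)+1) * ((1 - (deriv f t)^2) * Real.sqrt (1 - (deriv f t)^2))
        - (d:ℝ) * (1 - (deriv f t)^2) / f t := by
    intro t ht
    have h := hode t ht
    rw [rpow32 _ (hw0 t ht)] at h
    have hft := hpos t ht
    field_simp
    linarith
  -- MAIN quantitative claim
  have hfc : ContinuousOn f (Set.Ioo a T) := hf.continuousOn
  have main : ∃ ε > (0:ℝ), ∃ C > (0:ℝ), ∀ t ∈ Set.Ioo (T - ε) T,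
      t ∈ Set.Ioo a T ∧ Real.sqrt (1 - (deriv f t) ^ 2) ≤ C * (T - t) := by
    by_cases hz : ∃ tz ∈ Set.Ioo a T, 1 - (deriv f tz)^2 = 0
    · obtain ⟨tz, htz, hz⟩ := hz
      have hvanish : ∀ t ∈ Set.Ioo tz T, 1 - (deriv f t)^2 = 0 := by
        intro t ht
        set T' : ℝ := (t + T) / 2 with hT'
        have htT' : t < T' := by simp only [hT']; linarith [ht.2]
        have hT'T : T' < T := by simp only [hT']; linarith [ht.2]
        have hsub : Set.Icc tz T' ⊆ Set.Ioo a T := fun x hx =>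
          ⟨lt_of_lt_of_le htz.1 hx.1, lt_of_le_of_lt hx.2 hT'T⟩
        -- min of f on the compact interval
        obtain ⟨x₀, hx₀mem, hx₀⟩ := (isCompact_Icc (a := tz) (b := T')).exists_isMinOn
          (Set.nonempty_Icc.2 (by linarith [ht.1])) (hfc.mono hsub)
        set εf : ℝ := f x₀ with hεf
        have hεfpos : 0 < εf := hpos x₀ (hsub hx₀mem)
        set K : ℝ := 2*((d:ℝ)+1) + 2*(d:ℝ)/εf with hK
        have hKpos : 0 < K := by positivity
        -- F is antitone
        set F : ℝ → ℝ := fun u => (1 - (deriv f u)^2) * Real.exp (-K * u) with hF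
        have hanti : AntitoneOn F (Set.Icc tz T') := by
          apply antitoneOn_of_deriv_nonpos (convex_Icc _ _)
          · apply ContinuousOn.mul
            · exact (continuousOn_const.sub ((hf'cont.mono hsub).pow 2))
            · exact (Real.continuous_exp.comp (continuous_const.mul continuous_id)).continuousOn
          · intro x hx
            rw [interior_Icc] at hx
            have hxI : x ∈ Set.Ioo a T := hsub (Set.Ioo_subset_Icc_self hx)
            have hD : HasDerivAt F ((-(2 * deriv f x * deriv (deriv f) x)) * Real.exp (-K*x)
                + (1 - (deriv f x)^2) * (Real.exp (-K*x) * (-K))) x := by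
              have h1 : HasDerivAt (fun u => 1 - (deriv f u)^2) (-(2 * deriv f x * deriv (deriv f) x)) x := by
                have := ((hf'd x hxI).pow 2).const_sub 1
                simpa [mul_comm, mul_assoc, mul_left_comm] using this
              have h2 : HasDerivAt (fun u => Real.exp (-K*u)) (Real.exp (-K*x) * (-K)) x := by
                have := ((hasDerivAt_id x).const_mul (-K)).exp
                simpa using this
              exact h1.mul h2
            exact hD.differentiableAt.differentiableWithinAt
          · intro x hx
            rw [interior_Icc] at hx
            have hxI : x ∈ Set.Ioo a T := hsub (Set.Ioo_subset_Icc_self hx)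
            have hD : HasDerivAt F ((-(2 * deriv f x * deriv (deriv f) x)) * Real.exp (-K*x)
                + (1 - (deriv f x)^2) * (Real.exp (-K*x) * (-K))) x := by
              have h1 : HasDerivAt (fun u => 1 - (deriv f u)^2) (-(2 * deriv f x * deriv (deriv f) x)) x := by
                have := ((hf'd x hxI).pow 2).const_sub 1
                simpa [mul_comm, mul_assoc, mul_left_comm] using this
              have h2 : HasDerivAt (fun u => Real.exp (-K*u)) (Real.exp (-K*x) * (-K)) x := by
                have := ((hasDerivAt_id x).const_mul (-K)).exp
                simpa using this
              exact h1.mul h2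
            rw [hD.deriv, hode' x hxI]
            have hwnn : 0 ≤ 1 - deriv f x ^ 2 := hw0 x hxI
            have hwle : 1 - deriv f x ^ 2 ≤ 1 := hw1 x hxI
            have hfx : εf ≤ f x := hx₀ ⟨le_of_lt hx.1, le_of_lt hx.2⟩
            have hfxpos : 0 < f x := hpos x hxI
            have hpabs := abs_le.1 (hder x hxI)
            have hsq : Real.sqrt (1 - deriv f x ^ 2) ≤ 1 := Real.sqrt_le_one.mpr hwle
            have hsqnn : 0 ≤ Real.sqrt (1 - deriv f x ^ 2) := Real.sqrt_nonneg _
            set w := 1 - deriv f x ^ 2 with hwdef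
            set s := Real.sqrt w with hs
            set p := deriv f x with hp
            set e := Real.exp (-K * x) with he'
            have he : (0:ℝ) < e := Real.exp_pos _
            set A := ((d:ℝ)+1) * (w * s) with hA'
            set B := (d:ℝ) * w / f x with hB'
            have hA : (0:ℝ) ≤ A := by rw [hA']; positivity
            have hB : (0:ℝ) ≤ B := by rw [hB']; positivity
            have hA2 : A ≤ ((d:ℝ)+1) * w := by
              rw [hA']
              nlinarith [mul_nonneg (mul_nonneg (show (0:ℝ) ≤ (d:ℝ)+1 by positivity) hwnn)
                (sub_nonneg.2 hsq)]
            have hB2 : B ≤ (d:ℝ)/εf * w := by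
              rw [hB']
              have h1 : (d:ℝ) * w / f x ≤ (d:ℝ) * w / εf :=
                div_le_div_of_nonneg_left (by positivity) hεfpos hfx
              calc (d:ℝ) * w / f x ≤ (d:ℝ) * w / εf := h1
                _ = (d:ℝ)/εf * w := by ring
            clear_value w s p e A B εf K F T'
            have key : -(2*p*(A - B)) ≤ 2*(A+B) := by
              nlinarith [mul_nonneg hA (by linarith [hpabs.1] : (0:ℝ) ≤ 1 + p),
                mul_nonneg hB (by linarith [hpabs.2] : (0:ℝ) ≤ 1 - p)]
            have hKw : 2*(A+B) ≤ K * w := by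
              have : K * w = 2*(((d:ℝ)+1) * w) + 2*((d:ℝ)/εf * w) := by rw [hK]; ring
              linarith
            calc -(2 * p * (A - B)) * e + w * (e * -K)
                = (-(2*p*(A - B)) - K * w) * e := by ring
              _ ≤ 0 := mul_nonpos_of_nonpos_of_nonneg (by linarith) he.le
        have h1 : F t ≤ F tz := hanti (Set.left_mem_Icc.2 (by linarith [ht.1]))
          ⟨le_of_lt ht.1, le_of_lt htT'⟩ (le_of_lt ht.1)
        have h2 : F tz = 0 := by simp [hF, hz]
        have h3 : 0 ≤ F t := mul_nonneg (hw0 t ⟨lt_trans htz.1 ht.1, ht.2⟩) (Real.exp_pos _).le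
        have h4 : F t = 0 := le_antisymm (h2 ▸ h1) h3
        have := mul_eq_zero.1 h4
        rcases this with h | h
        · exact h
        · exact absurd h (Real.exp_ne_zero _)
      refine ⟨T - tz, by linarith [htz.2], 1, one_pos, ?_⟩
      intro t ht
      have ht' : t ∈ Set.Ioo tz T := by
        constructor
        · have h9 : T - (T - tz) = tz := by ring
          rw [h9] at ht
          exact ht.1
        · exact ht.2
      have htI : t ∈ Set.Ioo a T := ⟨lt_trans htz.1 ht'.1, ht'.2⟩
      refine ⟨htI, ?_⟩
      rw [hvanish t ht', Real.sqrt_zero]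
      have := ht.2
      nlinarith
    · push_neg at hz
      have hwpos : ∀ t ∈ Set.Ioo a T, 0 < 1 - (deriv f t)^2 := fun t ht =>
        lt_of_le_of_ne (hw0 t ht) (Ne.symm (hz t ht))
      set m : ℝ → ℝ := fun t => -(deriv f t) / Real.sqrt (1 - (deriv f t)^2) with hm'
      -- derivative of m
      have hmd : ∀ t ∈ Set.Ioo a T,
          HasDerivAt m ((d:ℝ)/(f t * Real.sqrt (1 - (deriv f t)^2)) - ((d:ℝ)+1)) t := by
        intro t ht
        have hft : 0 < f t := hpos t ht
        have hw : 0 < 1 - (deriv f t)^2 := hwpos t ht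
        have hsqpos : 0 < Real.sqrt (1 - (deriv f t)^2) := Real.sqrt_pos.2 hw
        have h1 : HasDerivAt (fun u => 1 - (deriv f u)^2)
            (-(2 * deriv f t * deriv (deriv f) t)) t := by
          have := ((hf'd t ht).pow 2).const_sub 1
          simpa [mul_comm, mul_assoc, mul_left_comm] using this
        have h2 : HasDerivAt (fun u => Real.sqrt (1 - (deriv f u)^2))
            ((-(2 * deriv f t * deriv (deriv f) t)) / (2 * Real.sqrt (1 - (deriv f t)^2))) t :=
          h1.sqrt (ne_of_gt hw)
        have h3 := ((hf'd t ht).neg).div h2 (ne_of_gt hsqpos)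
        have := aux_div (deriv f t) (deriv (deriv f) t) (Real.sqrt (1 - (deriv f t)^2))
          (f t) (d:ℝ) (ne_of_gt hsqpos) (ne_of_gt hft) (Real.sq_sqrt hw.le) (hode' t ht)
        rw [this]
        convert h3 using 2 <;> rfl
      -- basic bounds
      have hsle1 : ∀ t ∈ Set.Ioo a T, Real.sqrt (1 - (deriv f t)^2) ≤ 1 := fun t ht =>
        Real.sqrt_le_one.mpr (by nlinarith [sq_nonneg (deriv f t)])
      have hfs : ∀ t ∈ Set.Ioo a T, 0 < f t * Real.sqrt (1 - (deriv f t)^2) := fun t ht =>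
        mul_pos (hpos t ht) (Real.sqrt_pos.2 (hwpos t ht))
      have hfsle : ∀ t ∈ Set.Ioo a T, f t * Real.sqrt (1 - (deriv f t)^2) ≤ T - t := by
        intro t ht
        calc f t * Real.sqrt (1 - (deriv f t)^2) ≤ f t * 1 :=
            mul_le_mul_of_nonneg_left (hsle1 t ht) (hpos t ht).le
          _ = f t := mul_one _
          _ ≤ T - t := hfle t ht
      -- continuity of m on Ioo a T
      have hmc : ContinuousOn m (Set.Ioo a T) := by
        apply ContinuousOn.div hf'cont.neg
          ((continuousOn_const.sub (hf'cont.pow 2)).sqrt)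
          (fun t ht => ne_of_gt (Real.sqrt_pos.2 (hwpos t ht)))
      -- step 1: ψ monotone, to find t0 with m t0 large
      set t1 : ℝ := (a + T)/2 with ht1'
      have ht1 : t1 ∈ Set.Ioo a T := ⟨by simp only [ht1']; linarith, by simp only [ht1']; linarith⟩
      set ψ : ℝ → ℝ := fun t => m t + (d:ℝ) * Real.log (T - t) + ((d:ℝ)+1) * t with hψ'
      have hψd : ∀ t ∈ Set.Ioo a T,
          HasDerivAt ψ ((d:ℝ)/(f t * Real.sqrt (1 - (deriv f t)^2)) - ((d:ℝ)+1)
            + (d:ℝ) * (-1 / (T - t)) + ((d:ℝ)+1)) t := by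
        intro t ht
        have hTt : T - t ≠ 0 := by have := ht.2; intro h; linarith [this]
        have hlog : HasDerivAt (fun u => Real.log (T - u)) (-1 / (T - t)) t := by
          have h0 : HasDerivAt (fun u : ℝ => T - u) (-1) t := by
            simpa using (hasDerivAt_id t).const_sub T
          simpa using h0.log hTt
        have hlin : HasDerivAt (fun u : ℝ => ((d:ℝ)+1) * u) ((d:ℝ)+1) t := by
          simpa using (hasDerivAt_id t).const_mul ((d:ℝ)+1)
        exact ((hmd t ht).add (hlog.const_mul (d:ℝ))).add hlin
      have hψmono : MonotoneOn ψ (Set.Ico t1 T) := by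
        have hsub : Set.Ico t1 T ⊆ Set.Ioo a T := fun x hx => ⟨lt_of_lt_of_le ht1.1 hx.1, hx.2⟩
        apply monotoneOn_of_deriv_nonneg (convex_Ico _ _)
        · apply ContinuousOn.add
          apply ContinuousOn.add (hmc.mono hsub)
          · apply ContinuousOn.mul continuousOn_const
            apply ContinuousOn.log ((continuous_const.sub continuous_id).continuousOn)
            exact fun x hx => sub_ne_zero.2 (hsub hx).2.ne' 
          · exact (continuousOn_const.mul continuousOn_id)
        · intro x hx
          rw [interior_Ico] at hx
          exact (hψd x (hsub (Set.Ioo_subset_Ico_self hx))).differentiableAt.differentiableWithinAt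
        · intro x hx
          rw [interior_Ico] at hx
          have hxI := hsub (Set.Ioo_subset_Ico_self hx)
          rw [(hψd x hxI).deriv]
          have h1 : (d:ℝ)/(T - x) ≤ (d:ℝ)/(f x * Real.sqrt (1 - (deriv f x)^2)) :=
            div_le_div_of_nonneg_left (Nat.cast_nonneg d) (hfs x hxI) (hfsle x hxI)
          have h2 : (d:ℝ) * (-1 / (T - x)) = -((d:ℝ)/(T-x)) := by ring
          rw [h2]
          linarith
      -- choose t0
      set B : ℝ := ψ t1 with hB'
      set R : ℝ := (2 + |B| + ((d:ℝ)+1)*(|T|+1)) / (d:ℝ) with hR'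
      have hdpos : (0:ℝ) < (d:ℝ) := by exact_mod_cast hd
      have hRpos : 0 < R := by
        apply div_pos _ hdpos
        positivity
      set δ : ℝ := min (Real.exp (-R)) (min 1 ((T - t1)/2)) with hδ'
      have hδpos : 0 < δ := by
        apply lt_min (Real.exp_pos _)
        apply lt_min one_pos
        linarith [ht1.2]
      have hδ1 : δ ≤ 1 := le_trans (min_le_right _ _) (min_le_left _ _)
      have hδe : δ ≤ Real.exp (-R) := min_le_left _ _
      have hδhalf : δ ≤ (T - t1)/2 := le_trans (min_le_right _ _) (min_le_right _ _)
      set t0 : ℝ := T - δ with ht0'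
      have ht0Ico : t0 ∈ Set.Ico t1 T := by
        constructor
        · have := ht1.2; simp only [ht0']; linarith [hδhalf]
        · simp only [ht0']; linarith
      have ht0I : t0 ∈ Set.Ioo a T := ⟨lt_of_lt_of_le ht1.1 ht0Ico.1, ht0Ico.2⟩
      -- lower bound on m t0
      have hmt0 : 2 ≤ m t0 := by
        have h1 : B ≤ ψ t0 := hψmono (Set.left_mem_Ico.2 ht1.2) ht0Ico ht0Ico.1
        have h2 : Real.log (T - t0) ≤ -R := by
          have : T - t0 = δ := by simp only [ht0']; ring
          rw [this]
          calc Real.log δ ≤ Real.log (Real.exp (-R)) :=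
              Real.log_le_log hδpos hδe
            _ = -R := Real.log_exp _
        have h3 : ψ t0 = m t0 + (d:ℝ) * Real.log (T - t0) + ((d:ℝ)+1) * t0 := rfl
        have h4 : (d:ℝ) * Real.log (T - t0) ≤ (d:ℝ) * (-R) :=
          mul_le_mul_of_nonneg_left h2 (Nat.cast_nonneg d)
        have h5 : (d:ℝ) * R = 2 + |B| + ((d:ℝ)+1)*(|T|+1) := by
          rw [hR']; field_simp
        have h6 : ((d:ℝ)+1) * t0 ≤ ((d:ℝ)+1) * (|T|+1) := by
          apply mul_le_mul_of_nonneg_left _ (by positivity)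
          have : t0 ≤ T := ht0Ico.2.le
          have := abs_nonneg T
          calc t0 ≤ T := ht0Ico.2.le
            _ ≤ |T| := le_abs_self T
            _ ≤ |T| + 1 := by linarith
        have h7 : -B ≤ |B| := neg_le_abs B
        nlinarith
      -- step 2: G monotone
      set G : ℝ → ℝ := fun t => (T - t)^d * m t - (T - t)^(d+1) with hG'
      have hGd : ∀ t ∈ Set.Ioo a T, HasDerivAt G
          (((d:ℝ) * (T - t)^(d-1) * (-1)) * m t
            + (T - t)^d * ((d:ℝ)/(f t * Real.sqrt (1 - (deriv f t)^2)) - ((d:ℝ)+1))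
            - ((d:ℝ)+1) * (T - t)^(d+1-1) * (-1)) t := by
        intro t ht
        have h0 : HasDerivAt (fun u : ℝ => T - u) (-1) t := by
          simpa using (hasDerivAt_id t).const_sub T
        have h1 : HasDerivAt (fun u : ℝ => (T - u)^d) ((d:ℝ) * (T - t)^(d-1) * (-1)) t := h0.pow d
        have h2 : HasDerivAt (fun u : ℝ => (T - u)^(d+1)) (((d:ℝ)+1) * (T - t)^(d+1-1) * (-1)) t := by
          have : HasDerivAt (fun u : ℝ => (T - u)^(d+1)) _ t := h0.pow (d+1)
          simpa [Nat.cast_add] using this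
        exact (h1.mul (hmd t ht)).sub h2
      have hGmono : MonotoneOn G (Set.Ico t0 T) := by
        have hsub : Set.Ico t0 T ⊆ Set.Ioo a T := fun x hx => ⟨lt_of_lt_of_le ht0I.1 hx.1, hx.2⟩
        apply monotoneOn_of_deriv_nonneg (convex_Ico _ _)
        · apply ContinuousOn.sub
          · exact ContinuousOn.mul ((continuous_const.sub continuous_id).pow d).continuousOn
              (hmc.mono hsub)
          · exact ((continuous_const.sub continuous_id).pow (d+1)).continuousOn
        · intro x hx
          rw [interior_Ico] at hx
          have hxI := hsub (Set.Ioo_subset_Ico_self hx)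
          exact (hGd x hxI).differentiableAt.differentiableWithinAt
        · intro x hx
          rw [interior_Ico] at hx
          have hxI := hsub (Set.Ioo_subset_Ico_self hx)
          rw [(hGd x hxI).deriv]
          have hτ : 0 < T - x := sub_pos.2 hxI.2
          have hτd : (0:ℝ) < (T - x)^d := pow_pos hτ d
          have hs : 0 < Real.sqrt (1 - (deriv f x)^2) := Real.sqrt_pos.2 (hwpos x hxI)
          have hpow : (T - x)^d = (T - x)^(d-1) * (T - x) := by
            conv_lhs => rw [show d = (d-1) + 1 from (Nat.succ_pred_eq_of_pos hd).symm]
            rw [pow_succ]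
          have hpow2 : (T - x)^(d+1-1) = (T - x)^d := by norm_num
          have hmx : m x = -(deriv f x) / Real.sqrt (1 - (deriv f x)^2) := rfl
          have hkey : (d:ℝ) * m x / (T - x) ≤ (d:ℝ)/(f x * Real.sqrt (1 - (deriv f x)^2)) := by
            have h1 : (d:ℝ)/((T-x) * Real.sqrt (1 - (deriv f x)^2))
                ≤ (d:ℝ)/(f x * Real.sqrt (1 - (deriv f x)^2)) := by
              apply div_le_div_of_nonneg_left (Nat.cast_nonneg d) (hfs x hxI)
              exact mul_le_mul_of_nonneg_right (hfle x hxI) hs.le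
            have h2 : (d:ℝ) * m x / (T - x)
                = ((d:ℝ) * (-(deriv f x))) / ((T-x) * Real.sqrt (1 - (deriv f x)^2)) := by
              rw [hmx]
              field_simp [hs.ne', hτ.ne']
              try ring
              try tauto
            have h3 : (d:ℝ) * (-(deriv f x)) ≤ (d:ℝ) := by
              have := mul_le_mul_of_nonneg_left (hp1 x hxI) (Nat.cast_nonneg d)
              simpa using this
            have h4 : ((d:ℝ) * (-(deriv f x))) / ((T-x) * Real.sqrt (1 - (deriv f x)^2))
                ≤ (d:ℝ) / ((T-x) * Real.sqrt (1 - (deriv f x)^2)) := by gcongr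
            rw [h2]; exact h4.trans h1
          rw [hpow2]
          have h6 : (T-x)^d * ((d:ℝ) * m x / (T - x))
              ≤ (T-x)^d * ((d:ℝ)/(f x * Real.sqrt (1 - (deriv f x)^2))) :=
            mul_le_mul_of_nonneg_left hkey hτd.le
          have h5 : (T-x)^d * ((d:ℝ) * m x / (T-x)) = (d:ℝ) * (T-x)^(d-1) * m x := by
            rw [hpow]; field_simp
          rw [h5] at h6
          nlinarith [h6]
      -- conclusion
      have hTt0 : T - t0 = δ := by rw [ht0']; ring
      have hcG : G t0 = δ^d * m t0 - δ^(d+1) := by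
        show (T - t0)^d * m t0 - (T - t0)^(d+1) = _
        rw [hTt0]
      obtain ⟨c, hcval⟩ : ∃ c : ℝ, c = δ^d * m t0 - δ^(d+1) := ⟨_, rfl⟩
      have hδd : (0:ℝ) < δ^d := pow_pos hδpos d
      have hc : 0 < c := by
        have h1 : δ^(d+1) ≤ δ^d * 1 := by
          rw [pow_succ]
          exact mul_le_mul_of_nonneg_left hδ1 hδd.le
        nlinarith [hmt0]
      refine ⟨δ, hδpos, δ^(d-1)/c, by positivity, ?_⟩
      intro t ht
      have ht' : t ∈ Set.Ioo t0 T := ht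
      have htI : t ∈ Set.Ioo a T := ⟨lt_trans ht0I.1 ht'.1, ht'.2⟩
      refine ⟨htI, ?_⟩
      have hτ : 0 < T - t := sub_pos.2 ht'.2
      have hτd : (0:ℝ) < (T - t)^d := pow_pos hτ d
      have hGle : c ≤ G t := by
        rw [hcval, ← hcG]
        exact hGmono (Set.left_mem_Ico.2 ht0Ico.2) ⟨ht'.1.le, ht'.2⟩ ht'.1.le
      have hGt : G t = (T-t)^d * m t - (T-t)^(d+1) := rfl
      rw [hGt] at hGle
      have hτd1 : (0:ℝ) < (T-t)^(d+1) := pow_pos hτ _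
      have hmlow : c / (T-t)^d ≤ m t := by
        rw [div_le_iff₀ hτd]
        have h9 : (T-t)^d * m t = m t * (T-t)^d := by ring
        linarith [hGle, hτd1, h9.le, h9.ge]
      have hmpos : 0 < m t := lt_of_lt_of_le (div_pos hc hτd) hmlow
      have hs : 0 < Real.sqrt (1 - (deriv f t)^2) := Real.sqrt_pos.2 (hwpos t htI)
      have hsm : Real.sqrt (1 - (deriv f t)^2) * m t = -(deriv f t) := by
        have hmx : m t = -(deriv f t) / Real.sqrt (1 - (deriv f t)^2) := rfl
        rw [hmx]
        field_simp
        try ring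
      have hstep1 : Real.sqrt (1 - (deriv f t)^2) ≤ 1 / m t := by
        rw [le_div_iff₀ hmpos, hsm]
        exact hp1 t htI
      have hstep2 : 1 / m t ≤ (T-t)^d / c := by
        rw [div_le_div_iff₀ hmpos hc]
        linarith [hGle, hτd1]
      have hstep3 : (T-t)^d / c ≤ δ^(d-1) * (T-t) / c := by
        gcongr
        have hpw : (T-t)^d = (T-t)^(d-1) * (T-t) := by
          conv_lhs => rw [show d = (d-1) + 1 from (Nat.succ_pred_eq_of_pos hd).symm]
          rw [pow_succ]
        rw [hpw]
        have hτδ : T - t ≤ δ := by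
          have : T - δ = t0 := ht0'.symm
          linarith [ht'.1]
        exact mul_le_mul_of_nonneg_right (pow_le_pow_left₀ hτ.le hτδ (d-1)) hτ.le
      calc Real.sqrt (1 - (deriv f t)^2) ≤ 1 / m t := hstep1
        _ ≤ (T-t)^d / c := hstep2
        _ ≤ δ^(d-1) * (T-t) / c := hstep3
        _ = δ^(d-1)/c * (T-t) := by ring
  obtain ⟨ε, hε, C, hC, hmain⟩ := main
  constructor
  · -- |f'| → 1 from main
    have hwt : Tendsto (fun t => 1 - (deriv f t)^2) (nhdsWithin T (Set.Iio T)) (nhds 0) := by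
      apply squeeze_zero'
      · filter_upwards [Ioo_mem_nhdsLT_of_mem (show T ∈ Set.Ioc (T - ε) T from ⟨by linarith, le_rfl⟩)]
          with t ht
        exact hw0 t (hmain t ht).1
      · filter_upwards [Ioo_mem_nhdsLT_of_mem (show T ∈ Set.Ioc (T - ε) T from ⟨by linarith, le_rfl⟩)]
          with t ht
        have h1 := (hmain t ht).2
        have h0 := hw0 t (hmain t ht).1
        calc 1 - (deriv f t)^2 = (Real.sqrt (1 - (deriv f t)^2))^2 := (Real.sq_sqrt h0).symm
          _ ≤ (C * (T - t))^2 := by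
              apply pow_le_pow_left₀ (Real.sqrt_nonneg _) h1
      · have : Tendsto (fun t : ℝ => (C*(T-t))^2) (nhds T) (nhds ((C*(T-T))^2)) := by
          apply Continuous.tendsto; continuity
        simpa using this.mono_left nhdsWithin_le_nhds
    have h2 : Tendsto (fun t => Real.sqrt ((deriv f t)^2)) (nhdsWithin T (Set.Iio T)) (nhds 1) := by
      have : Tendsto (fun t => (deriv f t)^2) (nhdsWithin T (Set.Iio T)) (nhds 1) := by
        have := (tendsto_const_nhds (x := (1:ℝ)) (f := nhdsWithin T (Set.Iio T))).sub hwt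
        simpa using this
      simpa using this.sqrt
    refine h2.congr (fun t => Real.sqrt_sq_eq_abs _)
  · exact ⟨ε, hε, C, hC, fun t ht => (hmain t ht).2⟩
end
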